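/- arXiv:2011.08439 — 10 statements merged into one kernel-verified Lean document; each statement's English description precedes it below -/
import Mathlib

section
/- Fix integers d ≥ 1 and t ≥ 1. Let φ : EuclideanSpace ℝ (Fin d × Fin 4) → (Fin d → ℍ) be the real-linear isometry sending x to the tuple j ↦ x(j,0) + x(j,1)·i + x(j,2)·j + x(j,3)·k of quaternions, and let σ be the normalized surface measure (a probability measure) on the unit sphere S of EuclideanSpace ℝ (Fin d × Fin 4). Then for every v : Fin d → ℍ with ∑_j normSq(v j) = 1, one has ∫_S ( normSq( ∑_j star((φ x) j) * (v j) ) )^t dσ(x) = (t+1) / Nat.choose (2d+t-1) t. -/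
open MeasureTheory Quaternion Set Metric Module
open scoped ENNReal

noncomputable section

lemma R_odd (k : ℕ) : ∫ x in Set.Ioi (0:ℝ), x ^ (2*k+1) * Real.exp (-x^2) = (k.factorial : ℝ)/2 := by
  have h := integral_rpow_mul_exp_neg_rpow (p := 2) (q := ((2*k+1 : ℕ) : ℝ)) two_pos
    (by have := k.cast_nonneg (α := ℝ); linarith)
  have h2 : ∀ x : ℝ, x ^ (((2*k+1 : ℕ) : ℝ)) * Real.exp (-x ^ (2:ℝ))
      = x ^ (2*k+1) * Real.exp (-x^2) := by
    intro x
    rw [Real.rpow_natCast, show (2:ℝ) = ((2:ℕ):ℝ) by norm_num, Real.rpow_natCast]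
  have h3 : (((2*k+1 : ℕ) : ℝ) + 1)/2 = (k : ℝ) + 1 := by push_cast; ring
  rw [h3, Real.Gamma_nat_eq_factorial] at h
  calc ∫ x in Set.Ioi (0:ℝ), x ^ (2*k+1) * Real.exp (-x^2)
      = ∫ x in Set.Ioi (0:ℝ), x ^ (((2*k+1 : ℕ) : ℝ)) * Real.exp (-x ^ (2:ℝ)) :=
        (setIntegral_congr_fun measurableSet_Ioi fun x _ => (h2 x)).symm
    _ = (k.factorial : ℝ)/2 := by rw [h]; ring

lemma polar_eq {E : Type*} [NormedAddCommGroup E] [NormedSpace ℝ E] [MeasurableSpace E]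
    [BorelSpace E] [FiniteDimensional ℝ E] [Nontrivial E]
    (μ : Measure E) [μ.IsAddHaarMeasure] (G : E → ℝ) (k : ℕ)
    (hG : ∀ (r : ℝ), 0 < r → ∀ θ : E, G (r • θ) = r ^ k * G θ) :
    ∫ x, G x * Real.exp (-‖x‖^2) ∂μ
      = (∫ θ : sphere (0:E) 1, G θ ∂μ.toSphere)
        * ∫ r in Set.Ioi (0:ℝ), r ^ (finrank ℝ E - 1 + k) * Real.exp (-r^2) := by
  set g : sphere (0:E) 1 × Ioi (0:ℝ) → ℝ := fun p => G p.1 * (p.2.1 ^ k * Real.exp (-p.2.1^2))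
    with hg
  calc
    ∫ x, G x * Real.exp (-‖x‖^2) ∂μ
      = ∫ x : ({0}ᶜ : Set E), G x.1 * Real.exp (-‖x.1‖^2) ∂(μ.comap (↑)) := by
        rw [integral_subtype_comap (measurableSet_singleton 0).compl
          (fun x => G x * Real.exp (-‖x‖^2)), MeasureTheory.restrict_compl_singleton]
    _ = ∫ p : sphere (0:E) 1 × Ioi (0:ℝ), g p
          ∂(μ.toSphere.prod (.volumeIoiPow (finrank ℝ E - 1))) := by
        rw [← μ.measurePreserving_homeomorphUnitSphereProd.integral_comp
          (Homeomorph.measurableEmbedding _) g]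
        refine integral_congr_ae (Filter.Eventually.of_forall fun x => ?_)
        have hx : (0:ℝ) < ‖x.1‖ := norm_pos_iff.2 x.2
        simp only [hg, homeomorphUnitSphereProd_apply_fst_coe,
          homeomorphUnitSphereProd_apply_snd_coe]
        have : G x.1 = ‖x.1‖ ^ k * G (‖x.1‖⁻¹ • x.1) := by
          rw [← hG _ hx, smul_inv_smul₀ hx.ne']
        rw [this]; ring
    _ = (∫ θ : sphere (0:E) 1, G θ ∂μ.toSphere)
          * ∫ r : Ioi (0:ℝ), (r:ℝ) ^ k * Real.exp (-(r:ℝ)^2)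
              ∂(Measure.volumeIoiPow (finrank ℝ E - 1)) :=
        integral_prod_mul (L := ℝ) (fun θ : sphere (0:E) 1 => G θ)
          (fun r : Ioi (0:ℝ) => (r:ℝ) ^ k * Real.exp (-(r:ℝ)^2))
    _ = _ := by
        congr 1
        simp only [Measure.volumeIoiPow, ENNReal.ofReal]
        rw [integral_withDensity_eq_integral_smul
          ((measurable_subtype_coe.pow_const _).real_toNNReal)
          (fun r : Ioi (0:ℝ) => (r:ℝ) ^ k * Real.exp (-(r:ℝ)^2)),
          integral_subtype_comap measurableSet_Ioi
            (fun a : ℝ => Real.toNNReal (a ^ (finrank ℝ E - 1)) • (a ^ k * Real.exp (-a^2)))]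
        refine setIntegral_congr_fun measurableSet_Ioi fun x hx => ?_
        rw [NNReal.smul_def, Real.coe_toNNReal _ (pow_nonneg hx.out.le _), smul_eq_mul,
          pow_add]
        ring

lemma euclid_sum_sq {ι : Type*} [Fintype ι] (u : EuclideanSpace ℝ ι) :
    ∑ i, u i ^ 2 = ‖u‖ ^ 2 := by
  rw [EuclideanSpace.norm_eq, Real.sq_sqrt (by positivity)]
  simp [Real.norm_eq_abs, sq_abs]

lemma sphere_const (ι : Type*) [Fintype ι] [Nonempty ι] :
    ((volume : Measure (EuclideanSpace ℝ ι)).toSphere Set.univ).toReal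
      * (∫ r in Set.Ioi (0:ℝ), r ^ (Fintype.card ι - 1) * Real.exp (-r^2))
    = (Real.sqrt Real.pi) ^ (Fintype.card ι) := by
  haveI : Nontrivial (EuclideanSpace ℝ ι) := Module.nontrivial_of_finrank_pos
    (R := ℝ) (by rw [finrank_euclideanSpace]; exact Fintype.card_pos)
  have h1 := polar_eq (volume : Measure (EuclideanSpace ℝ ι)) (fun _ => (1:ℝ)) 0
    (by intro r hr θ; simp)
  have h2 : ∫ x : EuclideanSpace ℝ ι, (fun _ => (1:ℝ)) x * Real.exp (-‖x‖^2)
      = Real.sqrt Real.pi ^ (Fintype.card ι) := by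
    have := GaussianFourier.integral_rexp_neg_mul_sq_norm (V := EuclideanSpace ℝ ι) (b := 1) one_pos
    simp only [one_mul, neg_mul, div_one] at this ⊢
    rw [this, finrank_euclideanSpace, ← Real.rpow_natCast (Real.sqrt Real.pi),
      Real.sqrt_eq_rpow, ← Real.rpow_mul Real.pi_pos.le]
    ring_nf
  rw [h2] at h1
  rw [h1, integral_const, finrank_euclideanSpace, add_zero]
  simp [mul_comm, measureReal_def]

lemma A4_val (t : ℕ) :
    ∫ u : EuclideanSpace ℝ (Fin 4), (∑ q, u q ^ 2) ^ t * Real.exp (-‖u‖^2)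
      = Real.sqrt Real.pi ^ 4 * ((t+1).factorial : ℝ) := by
  haveI : Nontrivial (EuclideanSpace ℝ (Fin 4)) := Module.nontrivial_of_finrank_pos
    (R := ℝ) (by rw [finrank_euclideanSpace]; norm_num)
  have h1 := polar_eq (volume : Measure (EuclideanSpace ℝ (Fin 4)))
    (fun u => (∑ q, u q ^ 2) ^ t) (2*t) ?_
  · have hsph : (∫ θ : sphere (0 : EuclideanSpace ℝ (Fin 4)) 1,
        (∑ q, (θ : EuclideanSpace ℝ (Fin 4)) q ^ 2) ^ t ∂(volume.toSphere))
        = ((volume : Measure (EuclideanSpace ℝ (Fin 4))).toSphere Set.univ).toReal := by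
      rw [show (fun θ : sphere (0 : EuclideanSpace ℝ (Fin 4)) 1 =>
          (∑ q, (θ : EuclideanSpace ℝ (Fin 4)) q ^ 2) ^ t) = fun _ => (1:ℝ) from ?_]
      · simp [integral_const, measureReal_def]
      · funext θ
        rw [euclid_sum_sq, mem_sphere_zero_iff_norm.mp θ.2]
        simp
    rw [hsph, finrank_euclideanSpace] at h1
    have hc := sphere_const (Fin 4)
    rw [show Fintype.card (Fin 4) = 4 from rfl] at h1 hc
    have e1 : (4:ℕ) - 1 + 2*t = 2*(t+1)+1 := by omega
    have e2 : (4:ℕ) - 1 = 2*1+1 := by omega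
    rw [e1, R_odd] at h1
    rw [e2, R_odd] at hc
    rw [h1]
    have : ((volume : Measure (EuclideanSpace ℝ (Fin 4))).toSphere Set.univ).toReal
        = Real.sqrt Real.pi ^ 4 * 2 := by
      have h2 : ((1:ℕ).factorial : ℝ)/2 = 1/2 := by norm_num [Nat.factorial]
      rw [h2] at hc
      nlinarith [hc]
    rw [this]
    ring
  · intro r hr θ
    simp only [PiLp.smul_apply, smul_eq_mul, mul_pow]
    rw [← Finset.mul_sum, mul_pow, ← pow_mul, mul_comm 2 t, pow_mul]

def wvec {d : ℕ} (v : Fin d → Quaternion ℝ) (q : Fin 4) : EuclideanSpace ℝ (Fin d × Fin 4) :=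
  (WithLp.equiv 2 _).symm fun p =>
    ![![(v p.1).re, (v p.1).imI, (v p.1).imJ, (v p.1).imK],
      ![(v p.1).imI, -(v p.1).re, -(v p.1).imK, (v p.1).imJ],
      ![(v p.1).imJ, (v p.1).imK, -(v p.1).re, -(v p.1).imI],
      ![(v p.1).imK, -(v p.1).imJ, (v p.1).imI, -(v p.1).re]] q p.2

lemma wvec_apply {d : ℕ} (v : Fin d → Quaternion ℝ) (q : Fin 4) (p : Fin d × Fin 4) :
    wvec v q p =
    ![![(v p.1).re, (v p.1).imI, (v p.1).imJ, (v p.1).imK],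
      ![(v p.1).imI, -(v p.1).re, -(v p.1).imK, (v p.1).imJ],
      ![(v p.1).imJ, (v p.1).imK, -(v p.1).re, -(v p.1).imI],
      ![(v p.1).imK, -(v p.1).imJ, (v p.1).imI, -(v p.1).re]] q p.2 := rfl

lemma inner_wvec {d : ℕ} (v : Fin d → Quaternion ℝ) (q : Fin 4)
    (x : EuclideanSpace ℝ (Fin d × Fin 4)) :
    (inner ℝ (wvec v q) x : ℝ) = ∑ p : Fin d × Fin 4, wvec v q p * x p := by
  simp [PiLp.inner_apply, RCLike.inner_apply', mul_comm]

lemma quat_re_sum {d : ℕ} (f : Fin d → Quaternion ℝ) : (∑ j, f j).re = ∑ j, (f j).re :=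
  map_sum (⟨⟨QuaternionAlgebra.re, rfl⟩, fun _ _ => rfl⟩ : Quaternion ℝ →+ ℝ) f Finset.univ

lemma quat_imI_sum {d : ℕ} (f : Fin d → Quaternion ℝ) : (∑ j, f j).imI = ∑ j, (f j).imI :=
  map_sum (⟨⟨QuaternionAlgebra.imI, rfl⟩, fun _ _ => rfl⟩ : Quaternion ℝ →+ ℝ) f Finset.univ

lemma quat_imJ_sum {d : ℕ} (f : Fin d → Quaternion ℝ) : (∑ j, f j).imJ = ∑ j, (f j).imJ :=
  map_sum (⟨⟨QuaternionAlgebra.imJ, rfl⟩, fun _ _ => rfl⟩ : Quaternion ℝ →+ ℝ) f Finset.univ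

lemma quat_imK_sum {d : ℕ} (f : Fin d → Quaternion ℝ) : (∑ j, f j).imK = ∑ j, (f j).imK :=
  map_sum (⟨⟨QuaternionAlgebra.imK, rfl⟩, fun _ _ => rfl⟩ : Quaternion ℝ →+ ℝ) f Finset.univ

def Qv {d : ℕ} (x : EuclideanSpace ℝ (Fin d × Fin 4)) (j : Fin d) : Quaternion ℝ :=
  ⟨x (j,0), x (j,1), x (j,2), x (j,3)⟩

lemma Qv_re {d : ℕ} (x : EuclideanSpace ℝ (Fin d × Fin 4)) (j : Fin d) :
    (Qv x j).re = x (j,0) := rfl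

lemma Qv_imI {d : ℕ} (x : EuclideanSpace ℝ (Fin d × Fin 4)) (j : Fin d) :
    (Qv x j).imI = x (j,1) := rfl

lemma Qv_imJ {d : ℕ} (x : EuclideanSpace ℝ (Fin d × Fin 4)) (j : Fin d) :
    (Qv x j).imJ = x (j,2) := rfl

lemma Qv_imK {d : ℕ} (x : EuclideanSpace ℝ (Fin d × Fin 4)) (j : Fin d) :
    (Qv x j).imK = x (j,3) := rfl

lemma claimA {d : ℕ} (v : Fin d → Quaternion ℝ) (x : EuclideanSpace ℝ (Fin d × Fin 4)) :
    normSq (∑ j, star (Qv x j) * v j)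
      = ∑ q : Fin 4, (inner ℝ (wvec v q) x : ℝ)^2 := by
  rw [normSq_def', Fin.sum_univ_four]
  have h0 : (∑ j, star (Qv x j) * v j).re
      = (inner ℝ (wvec v 0) x : ℝ) := by
    rw [quat_re_sum, inner_wvec, Fintype.sum_prod_type]
    refine Finset.sum_congr rfl fun j _ => ?_
    rw [Fin.sum_univ_four]
    simp only [Qv_re, Qv_imI, Qv_imJ, Qv_imK, wvec_apply, Quaternion.re_mul, Quaternion.re_star, Quaternion.imI_star,
      Quaternion.imJ_star, Quaternion.imK_star, Matrix.cons_val_zero, Matrix.cons_val_one,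
      Matrix.head_cons, Matrix.cons_val_two, Matrix.tail_cons, Matrix.cons_val_three]
    ring
  have h1 : (∑ j, star (Qv x j) * v j).imI
      = (inner ℝ (wvec v 1) x : ℝ) := by
    rw [quat_imI_sum, inner_wvec, Fintype.sum_prod_type]
    refine Finset.sum_congr rfl fun j _ => ?_
    rw [Fin.sum_univ_four]
    simp only [Qv_re, Qv_imI, Qv_imJ, Qv_imK, wvec_apply, Quaternion.imI_mul, Quaternion.re_star, Quaternion.imI_star,
      Quaternion.imJ_star, Quaternion.imK_star, Matrix.cons_val_zero, Matrix.cons_val_one,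
      Matrix.head_cons, Matrix.cons_val_two, Matrix.tail_cons, Matrix.cons_val_three]
    ring
  have h2 : (∑ j, star (Qv x j) * v j).imJ
      = (inner ℝ (wvec v 2) x : ℝ) := by
    rw [quat_imJ_sum, inner_wvec, Fintype.sum_prod_type]
    refine Finset.sum_congr rfl fun j _ => ?_
    rw [Fin.sum_univ_four]
    simp only [Qv_re, Qv_imI, Qv_imJ, Qv_imK, wvec_apply, Quaternion.imJ_mul, Quaternion.re_star, Quaternion.imI_star,
      Quaternion.imJ_star, Quaternion.imK_star, Matrix.cons_val_zero, Matrix.cons_val_one,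
      Matrix.head_cons, Matrix.cons_val_two, Matrix.tail_cons, Matrix.cons_val_three]
    ring
  have h3 : (∑ j, star (Qv x j) * v j).imK
      = (inner ℝ (wvec v 3) x : ℝ) := by
    rw [quat_imK_sum, inner_wvec, Fintype.sum_prod_type]
    refine Finset.sum_congr rfl fun j _ => ?_
    rw [Fin.sum_univ_four]
    simp only [Qv_re, Qv_imI, Qv_imJ, Qv_imK, wvec_apply, Quaternion.imK_mul, Quaternion.re_star, Quaternion.imI_star,
      Quaternion.imJ_star, Quaternion.imK_star, Matrix.cons_val_zero, Matrix.cons_val_one,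
      Matrix.head_cons, Matrix.cons_val_two, Matrix.tail_cons, Matrix.cons_val_three]
    ring
  rw [h0, h1, h2, h3]

lemma claimB {d : ℕ} (v : Fin d → Quaternion ℝ) (hv : ∑ j, normSq (v j) = 1) (q q' : Fin 4) :
    (inner ℝ (wvec v q) (wvec v q') : ℝ) = if q = q' then 1 else 0 := by
  have key : ∀ j : Fin d, ∑ l : Fin 4, wvec v q (j,l) * wvec v q' (j,l)
      = (if q = q' then 1 else 0) * normSq (v j) := by
    intro j
    fin_cases q <;> fin_cases q' <;>
      simp only [wvec_apply, Fin.sum_univ_four, Matrix.cons_val_zero, Matrix.cons_val_one,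
        Matrix.head_cons, Matrix.cons_val_two, Matrix.tail_cons, Matrix.cons_val_three,
        Fin.isValue, Matrix.cons_val, Fin.zero_eta, Fin.mk_one, Fin.reduceFinMk] <;>
      norm_num [normSq_def', Fin.ext_iff] <;> ring
  rw [inner_wvec, Fintype.sum_prod_type]
  calc ∑ j, ∑ l : Fin 4, wvec v q (j,l) * wvec v q' (j,l)
      = ∑ j, (if q = q' then 1 else 0) * normSq (v j) :=
        Finset.sum_congr rfl fun j _ => key j
    _ = if q = q' then 1 else 0 := by rw [← Finset.mul_sum, hv, mul_one]

/-- The integral of `|⟨φ x, v⟩|^{2t}` over the unit sphere of `ℝ^{4d} ≅ ℍ^d` with respect to the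
normalized surface measure equals `(t+1) / C(2d+t-1, t)`, for any unit vector `v ∈ ℍ^d`. -/
theorem statement2 (d t : ℕ) (hd : 1 ≤ d) (ht : 1 ≤ t)
    (φ : EuclideanSpace ℝ (Fin d × Fin 4) → (Fin d → Quaternion ℝ))
    (hφ : ∀ (x : EuclideanSpace ℝ (Fin d × Fin 4)) (a : Fin d),
      φ x a = (⟨x (a, 0), x (a, 1), x (a, 2), x (a, 3)⟩ : Quaternion ℝ))
    (σ : Measure (Metric.sphere (0 : EuclideanSpace ℝ (Fin d × Fin 4)) 1))
    (hσ : σ = ((volume : Measure (EuclideanSpace ℝ (Fin d × Fin 4))).toSphere Set.univ)⁻¹ •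
      (volume : Measure (EuclideanSpace ℝ (Fin d × Fin 4))).toSphere)
    (v : Fin d → Quaternion ℝ) (hv : ∑ j, normSq (v j) = 1) :
    ∫ x : Metric.sphere (0 : EuclideanSpace ℝ (Fin d × Fin 4)) 1,
        (normSq (∑ j, star (φ (x : EuclideanSpace ℝ (Fin d × Fin 4)) j) * v j)) ^ t ∂σ
      = (t + 1 : ℝ) / (Nat.choose (2 * d + t - 1) t : ℝ) := by
  classical
  haveI : Nonempty (Fin d) := ⟨⟨0, hd⟩⟩
  haveI : Nontrivial (EuclideanSpace ℝ (Fin d × Fin 4)) :=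
    Module.nontrivial_of_finrank_pos (R := ℝ)
      (by rw [finrank_euclideanSpace]; simp [Fintype.card_prod]; omega)
  set G : EuclideanSpace ℝ (Fin d × Fin 4) → ℝ :=
    fun x => (∑ q : Fin 4, (inner ℝ (wvec v q) x : ℝ)^2)^t with hG
  -- rewrite the integrand
  have hint : (fun x : Metric.sphere (0 : EuclideanSpace ℝ (Fin d × Fin 4)) 1 =>
      (normSq (∑ j, star (φ (x : EuclideanSpace ℝ (Fin d × Fin 4)) j) * v j)) ^ t)
      = fun x : Metric.sphere (0 : EuclideanSpace ℝ (Fin d × Fin 4)) 1 =>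
        G (x : EuclideanSpace ℝ (Fin d × Fin 4)) := by
    funext x
    have : ∀ j, φ (x : EuclideanSpace ℝ (Fin d × Fin 4)) j
        = Qv (x : EuclideanSpace ℝ (Fin d × Fin 4)) j := fun j => hφ _ j
    simp only [this, hG, claimA]
  rw [hint, hσ, integral_smul_measure]
  -- the unnormalized sphere integral
  set S : ℝ := ∫ x : Metric.sphere (0 : EuclideanSpace ℝ (Fin d × Fin 4)) 1,
    G (x : EuclideanSpace ℝ (Fin d × Fin 4))
    ∂(volume : Measure (EuclideanSpace ℝ (Fin d × Fin 4))).toSphere with hS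
  set c : ℝ≥0∞ := (volume : Measure (EuclideanSpace ℝ (Fin d × Fin 4))).toSphere Set.univ with hc
  -- polar decomposition
  have hGhom : ∀ (r : ℝ), 0 < r → ∀ θ : EuclideanSpace ℝ (Fin d × Fin 4),
      G (r • θ) = r ^ (2*t) * G θ := by
    intro r hr θ
    simp only [hG, real_inner_smul_right, mul_pow]
    rw [← Finset.mul_sum, mul_pow, ← pow_mul, mul_comm 2 t, mul_comm t 2]
  have hpolar := polar_eq (volume : Measure (EuclideanSpace ℝ (Fin d × Fin 4))) G (2*t) hGhom
  rw [show finrank ℝ (EuclideanSpace ℝ (Fin d × Fin 4)) = d*4 by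
    rw [finrank_euclideanSpace]; simp [Fintype.card_prod]] at hpolar
  have hc4 := sphere_const (Fin d × Fin 4)
  rw [show Fintype.card (Fin d × Fin 4) = d*4 by simp [Fintype.card_prod]] at hc4
  -- the Gaussian integral J
  have hJ : ∫ x : EuclideanSpace ℝ (Fin d × Fin 4), G x * Real.exp (-‖x‖^2)
      = (Real.sqrt Real.pi ^ 4 * ((t+1).factorial : ℝ)) * Real.sqrt Real.pi ^ (d*4-4) := by
    set i0 : Fin d := ⟨0, hd⟩ with hi0
    have horth : Orthonormal ℝ (Set.restrict {p : Fin d × Fin 4 | p.1 = i0}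
        (fun p : Fin d × Fin 4 => if p.1 = i0 then wvec v p.2 else 0)) := by
      rw [orthonormal_iff_ite]
      rintro ⟨⟨j1,q1⟩, h1⟩ ⟨⟨j2,q2⟩, h2⟩
      have h1' : j1 = i0 := h1
      have h2' : j2 = i0 := h2
      simp only [Set.restrict, Set.domRestrict_apply]
      rw [if_pos h1', if_pos h2', claimB v hv]
      by_cases h : q1 = q2
      · rw [if_pos h, if_pos]
        exact Subtype.ext (Prod.ext (h1'.trans h2'.symm) h)
      · rw [if_neg h, if_neg]
        intro hcon
        exact h (congrArg (fun z => z.1.2) hcon)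
    obtain ⟨b, hb⟩ := horth.exists_orthonormalBasis_extension_of_card_eq
      (by rw [finrank_euclideanSpace])
    have hbw : ∀ q : Fin 4, b (i0, q) = wvec v q := by
      intro q
      rw [hb (i0,q) rfl]
      exact if_pos rfl
    have e1 : ∫ x : EuclideanSpace ℝ (Fin d × Fin 4), G x * Real.exp (-‖x‖^2)
        = ∫ y : EuclideanSpace ℝ (Fin d × Fin 4),
            (∑ q : Fin 4, (y (i0,q))^2)^t * Real.exp (-‖y‖^2) := by
      rw [← (b.measurePreserving_repr_symm).integral_comp
          (b.repr.symm.toHomeomorph.measurableEmbedding) (fun x => G x * Real.exp (-‖x‖^2))]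
      refine integral_congr_ae (Filter.Eventually.of_forall fun y => ?_)
      have hnorm : ‖b.repr.symm y‖ = ‖y‖ := LinearIsometryEquiv.norm_map _ y
      have hcomp : ∀ q : Fin 4, (inner ℝ (wvec v q) (b.repr.symm y) : ℝ) = y (i0, q) := by
        intro q
        rw [← hbw q, ← OrthonormalBasis.repr_apply_apply, LinearIsometryEquiv.apply_symm_apply]
      simp only [hG, hcomp, hnorm]
    have e2 : ∫ y : EuclideanSpace ℝ (Fin d × Fin 4),
        (∑ q : Fin 4, (y (i0,q))^2)^t * Real.exp (-‖y‖^2)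
        = ∫ z : (Fin d × Fin 4) → ℝ,
            (∑ q : Fin 4, (z (i0,q))^2)^t * Real.exp (-∑ p, (z p)^2) := by
      have hmp : MeasurePreserving
          (MeasurableEquiv.toLp 2 ((Fin d × Fin 4) → ℝ)) volume volume :=
        (EuclideanSpace.volume_preserving_symm_measurableEquiv_toLp (Fin d × Fin 4)).symm _
      rw [← hmp.integral_comp (MeasurableEquiv.measurableEmbedding _)
          (fun y : EuclideanSpace ℝ (Fin d × Fin 4) =>
            (∑ q : Fin 4, (y (i0,q))^2)^t * Real.exp (-‖y‖^2))]
      refine integral_congr_ae (Filter.Eventually.of_forall fun z => ?_)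
      have hn : ‖(MeasurableEquiv.toLp 2 ((Fin d × Fin 4) → ℝ)) z‖^2
          = ∑ p, (z p)^2 := by
        rw [← euclid_sum_sq]
        rfl
      show (∑ q : Fin 4, ((MeasurableEquiv.toLp 2 ((Fin d × Fin 4) → ℝ)) z (i0,q))^2)^t
          * Real.exp (-‖(MeasurableEquiv.toLp 2 ((Fin d × Fin 4) → ℝ)) z‖^2)
        = (∑ q : Fin 4, (z (i0,q))^2)^t * Real.exp (-∑ p, (z p)^2)
      rw [hn]
      rfl
    let e4' : Fin 4 ≃ {p : Fin d × Fin 4 // p.1 = i0} :=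
      ⟨fun q => ⟨(i0,q), rfl⟩, fun s => s.1.2,
       fun q => rfl, fun s => Subtype.ext (Prod.ext s.2.symm rfl)⟩
    have e3 : ∫ z : (Fin d × Fin 4) → ℝ,
        (∑ q : Fin 4, (z (i0,q))^2)^t * Real.exp (-∑ p, (z p)^2)
        = (∫ u : {p : Fin d × Fin 4 // p.1 = i0} → ℝ,
             (∑ q : Fin 4, (u (e4' q))^2)^t * Real.exp (-∑ s, (u s)^2))
          * ∫ w : {p : Fin d × Fin 4 // ¬ p.1 = i0} → ℝ, Real.exp (-∑ s, (w s)^2) := by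
      rw [← integral_prod_mul (L := ℝ)
        (fun u : {p : Fin d × Fin 4 // p.1 = i0} → ℝ =>
          (∑ q : Fin 4, (u (e4' q))^2)^t * Real.exp (-∑ s, (u s)^2))
        (fun w : {p : Fin d × Fin 4 // ¬ p.1 = i0} → ℝ => Real.exp (-∑ s, (w s)^2)),
        ← Measure.volume_eq_prod]
      rw [← (volume_preserving_piEquivPiSubtypeProd (fun _ : Fin d × Fin 4 => ℝ)
        (fun p => p.1 = i0)).integral_comp (MeasurableEquiv.measurableEmbedding _)
        (fun z2 => (∑ q : Fin 4, (z2.1 (e4' q))^2)^t * Real.exp (-∑ s, (z2.1 s)^2)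
          * Real.exp (-∑ s, (z2.2 s)^2))]
      refine integral_congr_ae (Filter.Eventually.of_forall fun z => ?_)
      have hsum : (∑ s : {p : Fin d × Fin 4 // p.1 = i0}, (z s.1)^2)
          + (∑ s : {p : Fin d × Fin 4 // ¬ p.1 = i0}, (z s.1)^2) = ∑ p, (z p)^2 :=
        Fintype.sum_subtype_add_sum_subtype _ (fun p => (z p)^2)
      show (∑ q : Fin 4, (z (i0,q))^2)^t * Real.exp (-∑ p, (z p)^2)
          = (∑ q : Fin 4, (z (i0,q))^2)^t
            * Real.exp (-∑ s : {p : Fin d × Fin 4 // p.1 = i0}, (z s.1)^2)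
            * Real.exp (-∑ s : {p : Fin d × Fin 4 // ¬ p.1 = i0}, (z s.1)^2)
      rw [← hsum, neg_add, Real.exp_add, mul_assoc]
    have e4 : ∫ w : {p : Fin d × Fin 4 // ¬ p.1 = i0} → ℝ, Real.exp (-∑ s, (w s)^2)
        = Real.sqrt Real.pi ^ (d*4-4) := by
      have card1 : Fintype.card {p : Fin d × Fin 4 // p.1 = i0} = 4 :=
        (Fintype.card_congr e4'.symm).trans (by simp)
      have card2 : Fintype.card {p : Fin d × Fin 4 // ¬ p.1 = i0} = d*4-4 := by
        rw [Fintype.card_subtype_compl, card1]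
        simp [Fintype.card_prod]
      calc ∫ w : {p : Fin d × Fin 4 // ¬ p.1 = i0} → ℝ, Real.exp (-∑ s, (w s)^2)
          = ∫ w : {p : Fin d × Fin 4 // ¬ p.1 = i0} → ℝ, ∏ s, Real.exp (-(w s)^2) := by
            refine integral_congr_ae (Filter.Eventually.of_forall fun w => ?_)
            beta_reduce
            rw [← Real.exp_sum]
            congr 1
            rw [← Finset.sum_neg_distrib]
        _ = (∫ x : ℝ, Real.exp (-x^2))^(Fintype.card {p : Fin d × Fin 4 // ¬ p.1 = i0}) :=
            integral_fintype_prod_volume_eq_pow (fun x => Real.exp (-x^2))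
        _ = Real.sqrt Real.pi ^ (d*4-4) := by
            rw [card2]
            congr 1
            simpa using integral_gaussian 1
    have e5 : ∫ u : {p : Fin d × Fin 4 // p.1 = i0} → ℝ,
        (∑ q : Fin 4, (u (e4' q))^2)^t * Real.exp (-∑ s, (u s)^2)
        = Real.sqrt Real.pi ^ 4 * ((t+1).factorial : ℝ) := by
      rw [← (volume_measurePreserving_piCongrLeft (fun _ => ℝ) e4').integral_comp
        (MeasurableEquiv.measurableEmbedding _)
        (fun u : {p : Fin d × Fin 4 // p.1 = i0} → ℝ =>
          (∑ q : Fin 4, (u (e4' q))^2)^t * Real.exp (-∑ s, (u s)^2))]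
      have hpt : ∀ u : Fin 4 → ℝ,
          (fun u : {p : Fin d × Fin 4 // p.1 = i0} → ℝ =>
            (∑ q : Fin 4, (u (e4' q))^2)^t * Real.exp (-∑ s, (u s)^2))
            ((MeasurableEquiv.piCongrLeft (fun _ => ℝ) e4') u)
          = (∑ q : Fin 4, (u q)^2)^t * Real.exp (-∑ q, (u q)^2) := by
        intro u
        have h1 : ∀ q : Fin 4,
            (MeasurableEquiv.piCongrLeft (fun _ => ℝ) e4') u (e4' q) = u q := by
          intro q
          rw [MeasurableEquiv.coe_piCongrLeft]
          exact Equiv.piCongrLeft_apply_apply _ _ _ _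
        have h2 : ∑ s, ((MeasurableEquiv.piCongrLeft (fun _ => ℝ) e4') u s)^2
            = ∑ q, (u q)^2 := by
          rw [← Fintype.sum_equiv e4'
            (fun q => ((MeasurableEquiv.piCongrLeft (fun _ => ℝ) e4') u (e4' q))^2)
            (fun s => ((MeasurableEquiv.piCongrLeft (fun _ => ℝ) e4') u s)^2) (fun q => rfl)]
          exact Finset.sum_congr rfl fun q _ => by rw [h1]
        simp only [h1, h2]
      rw [integral_congr_ae (Filter.Eventually.of_forall hpt)]
      have := (EuclideanSpace.volume_preserving_symm_measurableEquiv_toLp (Fin 4)).integral_comp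
        (MeasurableEquiv.measurableEmbedding _)
        (fun z : Fin 4 → ℝ => (∑ q : Fin 4, (z q)^2)^t * Real.exp (-∑ q, (z q)^2))
      rw [← this]
      have hpt2 : ∀ u : EuclideanSpace ℝ (Fin 4),
          (fun z : Fin 4 → ℝ => (∑ q : Fin 4, (z q)^2)^t * Real.exp (-∑ q, (z q)^2))
            ((MeasurableEquiv.toLp 2 (Fin 4 → ℝ)).symm u)
          = (∑ q : Fin 4, (u q)^2)^t * Real.exp (-‖u‖^2) := by
        intro u
        show (∑ q : Fin 4, (u q)^2)^t * Real.exp (-∑ q, (u q)^2)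
          = (∑ q : Fin 4, (u q)^2)^t * Real.exp (-‖u‖^2)
        rw [euclid_sum_sq]
      rw [integral_congr_ae (Filter.Eventually.of_forall hpt2), A4_val]
    rw [e1, e2, e3, e4, e5]

  -- assemble
  have hR1 : ∫ r in Set.Ioi (0:ℝ), r ^ (d*4-1+2*t) * Real.exp (-r^2)
      = ((2*d-1+t).factorial : ℝ)/2 := by
    rw [show d*4-1+2*t = 2*(2*d-1+t)+1 by omega, R_odd]
  have hR2 : ∫ r in Set.Ioi (0:ℝ), r ^ (d*4-1) * Real.exp (-r^2)
      = ((2*d-1).factorial : ℝ)/2 := by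
    rw [show d*4-1 = 2*(2*d-1)+1 by omega, R_odd]
  rw [hR1, ← hS, hJ] at hpolar
  rw [hR2, ← hc] at hc4
  set P : ℝ := Real.sqrt Real.pi ^ (d*4) with hP
  have hsqrt : Real.sqrt Real.pi ^ 4 * Real.sqrt Real.pi ^ (d*4-4) = P := by
    rw [hP, ← pow_add]
    congr 1
    omega
  have hS2 : S * (((2*d-1+t).factorial : ℝ)/2) = P * ((t+1).factorial : ℝ) := by
    rw [← hpolar, ← hsqrt]
    ring
  have hPpos : (0:ℝ) < P := pow_pos (Real.sqrt_pos.mpr Real.pi_pos) _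
  have hF1pos : (0:ℝ) < ((2*d-1+t).factorial : ℝ) := by exact_mod_cast (2*d-1+t).factorial_pos
  have hF2pos : (0:ℝ) < ((2*d-1).factorial : ℝ) := by exact_mod_cast (2*d-1).factorial_pos
  have hChpos : (0:ℝ) < ((2*d+t-1).choose t : ℝ) := by
    exact_mod_cast Nat.choose_pos (show t ≤ 2*d+t-1 by omega)
  have hnat : ((2*d+t-1).choose t : ℝ) * (t.factorial : ℝ) * ((2*d-1).factorial : ℝ)
      = ((2*d-1+t).factorial : ℝ) := by
    have h := Nat.choose_mul_factorial_mul_factorial (show t ≤ 2*d+t-1 by omega)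
    rw [show 2*d+t-1-t = 2*d-1 by omega] at h
    rw [show 2*d-1+t = 2*d+t-1 by omega]
    exact_mod_cast h
  have hF3 : ((t+1).factorial : ℝ) = ((t:ℝ)+1) * (t.factorial : ℝ) := by
    rw [Nat.factorial_succ]
    push_cast
    ring
  have hcval : c.toReal = 2 * P / ((2*d-1).factorial : ℝ) := by
    field_simp at hc4 ⊢
    linarith
  have hSval : S = 2 * P * ((t+1).factorial : ℝ) / ((2*d-1+t).factorial : ℝ) := by
    field_simp at hS2 ⊢
    linarith
  rw [ENNReal.toReal_inv, smul_eq_mul, hcval, hSval, inv_div, div_mul_div_comm]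
  rw [div_eq_div_iff (by positivity) hChpos.ne']
  linear_combination (2*P*((t:ℝ)+1)) * hnat
    + (2*P*(((2*d+t-1).choose t : ℕ) : ℝ) * (((2*d-1).factorial : ℕ) : ℝ)) * hF3

end
end

section
/- Let d ≥ 1 and t ≥ 1 be integers and let μ be a Borel measure on EuclideanSpace ℂ (Fin d) such that ∫ ‖x‖^{2t} dμ(x) < ∞. Then ∫∫ ‖⟪x, y⟫‖^{2t} dμ(x) dμ(y) ≥ (1 / Nat.choose (d+t-1) t) · ( ∫ ‖z‖^{2t} dμ(z) )². -/
open MeasureTheory Finset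
open scoped ComplexConjugate

namespace WelchAux
variable {d : ℕ}

noncomputable def g (α : Fin d → ℕ) (x : EuclideanSpace ℂ (Fin d)) : ℂ :=
  ∏ i, (x i) ^ (α i)

lemma coord_le (x : EuclideanSpace ℂ (Fin d)) (i : Fin d) : ‖x i‖ ≤ ‖x‖ := by
  have h := Finset.single_le_sum (f := fun j => ‖x j‖ ^ 2) (fun j _ => by positivity) (mem_univ i)
  rw [EuclideanSpace.norm_eq]
  calc ‖x i‖ = Real.sqrt (‖x i‖ ^ 2) := (Real.sqrt_sq (norm_nonneg _)).symm
    _ ≤ _ := Real.sqrt_le_sqrt h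

lemma prod_coord_le (x : EuclideanSpace ℂ (Fin d)) (k : Fin d → ℕ) :
    ∏ i, ‖x i‖ ^ k i ≤ ‖x‖ ^ (∑ i, k i) := by
  rw [← Finset.prod_pow_eq_pow_sum]
  exact Finset.prod_le_prod (fun i _ => by positivity)
    (fun i _ => pow_le_pow_left₀ (norm_nonneg _) (coord_le x i) _)

lemma continuous_g (α : Fin d → ℕ) : Continuous (g α) := by
  unfold g
  exact continuous_finset_prod _ fun i _ => ((EuclideanSpace.proj i).continuous).pow _

lemma norm_g (α : Fin d → ℕ) (x : EuclideanSpace ℂ (Fin d)) :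
    ‖g α x‖ = ∏ i, ‖x i‖ ^ α i := by
  simp [g, norm_prod]

lemma expand (t : ℕ) (x y : EuclideanSpace ℂ (Fin d)) :
    ((‖(inner ℂ x y : ℂ)‖ ^ (2 * t) : ℝ) : ℂ)
      = ∑ α ∈ piAntidiag (univ : Finset (Fin d)) t, ∑ β ∈ piAntidiag (univ : Finset (Fin d)) t,
          ((Nat.multinomial univ α * Nat.multinomial univ β : ℕ) : ℂ)
            * (g α y * conj (g β y)) * (conj (g α x) * g β x) := by
  set z : ℂ := inner ℂ x y with hz
  have h1 : ((‖z‖ ^ (2 * t) : ℝ) : ℂ) = z ^ t * conj (z ^ t) := by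
    rw [map_pow, ← mul_pow, Complex.mul_conj']
    push_cast
    ring
  have hzsum : z = ∑ i, conj (x i) * y i := by
    simp [hz, PiLp.inner_apply, RCLike.inner_apply]
    exact Finset.sum_congr rfl fun i _ => mul_comm _ _
  have h2 : z ^ t = ∑ α ∈ piAntidiag (univ : Finset (Fin d)) t,
      (Nat.multinomial univ α : ℂ) * (conj (g α x) * g α y) := by
    rw [hzsum, Finset.sum_pow_eq_sum_piAntidiag]
    refine Finset.sum_congr rfl fun α hα => ?_
    congr 1
    rw [g, g]
    simp_rw [mul_pow]
    rw [Finset.prod_mul_distrib, map_prod]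
    simp_rw [map_pow]
  have h3 : conj (z ^ t) = ∑ β ∈ piAntidiag (univ : Finset (Fin d)) t,
      (Nat.multinomial univ β : ℂ) * (g β x * conj (g β y)) := by
    rw [h2, map_sum]
    refine Finset.sum_congr rfl fun β hβ => ?_
    simp [mul_comm]
  rw [h1, h3, h2, Finset.sum_mul_sum]
  refine Finset.sum_congr rfl fun α hα => Finset.sum_congr rfl fun β hβ => ?_
  push_cast
  ring

lemma card_repl_sum (α : Fin d → ℕ) (s : Finset (Fin d)) :
    (∑ i ∈ s, Multiset.replicate (α i) i).card = ∑ i ∈ s, α i := by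
  induction s using Finset.cons_induction with
  | empty => simp
  | cons a s ha ih => simp [Finset.sum_cons, ih]

variable [MeasurableSpace (EuclideanSpace ℂ (Fin d))] [BorelSpace (EuclideanSpace ℂ (Fin d))]
  {μ : Measure (EuclideanSpace ℂ (Fin d))} {t : ℕ}

lemma integrable_cross (hμ : Integrable (fun x => ‖x‖ ^ (2 * t)) μ) (α β : Fin d → ℕ)
    (hαβ : (∑ i, α i) + (∑ i, β i) = 2 * t) :
    Integrable (fun x => conj (g α x) * g β x) μ := by
  refine hμ.mono' (Continuous.aestronglyMeasurable ?_) (ae_of_all _ fun x => ?_)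
  · exact (Complex.continuous_conj.comp (continuous_g α)).mul (continuous_g β)
  · rw [norm_mul, RCLike.norm_conj, norm_g, norm_g, ← hαβ, ← Finset.sum_add_distrib,
      ← Finset.prod_mul_distrib]
    simp_rw [← pow_add]
    exact prod_coord_le x _

lemma integrable_cross' (hμ : Integrable (fun x => ‖x‖ ^ (2 * t)) μ) (α β : Fin d → ℕ)
    (hαβ : (∑ i, α i) + (∑ i, β i) = 2 * t) :
    Integrable (fun x => g α x * conj (g β x)) μ := by
  refine hμ.mono' (Continuous.aestronglyMeasurable ?_) (ae_of_all _ fun x => ?_)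
  · exact (continuous_g α).mul (Complex.continuous_conj.comp (continuous_g β))
  · rw [norm_mul, RCLike.norm_conj, norm_g, norm_g, ← hαβ, ← Finset.sum_add_distrib,
      ← Finset.prod_mul_distrib]
    simp_rw [← pow_add]
    exact prod_coord_le x _

lemma integrable_mono (hμ : Integrable (fun x => ‖x‖ ^ (2 * t)) μ) (α : Fin d → ℕ)
    (hα : ∑ i, α i = t) :
    Integrable (fun x => ∏ i, ‖x i‖ ^ (2 * α i)) μ := by
  refine hμ.mono' (Continuous.aestronglyMeasurable ?_) (ae_of_all _ fun x => ?_)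
  · exact continuous_finset_prod _ fun i _ =>
      (((EuclideanSpace.proj i).continuous).norm).pow _
  · rw [Real.norm_of_nonneg (by positivity)]
    calc ∏ i, ‖x i‖ ^ (2 * α i) ≤ ‖x‖ ^ (∑ i, 2 * α i) := prod_coord_le x _
      _ = ‖x‖ ^ (2 * t) := by rw [← Finset.mul_sum, hα]

end WelchAux

open WelchAux

/-- The Welch inequality for a Borel measure `μ` on `ℂ^d` with finite `2t`-th moment:
`∫∫ ‖⟪x,y⟫‖^{2t} dμ dμ ≥ (1/C(d+t-1,t)) (∫ ‖z‖^{2t} dμ)²`. -/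
theorem statement4 (d t : ℕ) (hd : 1 ≤ d) (ht : 1 ≤ t)
    [MeasurableSpace (EuclideanSpace ℂ (Fin d))] [BorelSpace (EuclideanSpace ℂ (Fin d))]
    (μ : Measure (EuclideanSpace ℂ (Fin d)))
    (hμ : Integrable (fun x => ‖x‖ ^ (2 * t)) μ) :
    ∫ y, ∫ x, ‖(inner ℂ x y : ℂ)‖ ^ (2 * t) ∂μ ∂μ
      ≥ (1 / (Nat.choose (d + t - 1) t : ℝ)) * (∫ z, ‖z‖ ^ (2 * t) ∂μ) ^ 2 := by
  classical
  set S : Finset (Fin d → ℕ) := piAntidiag (univ : Finset (Fin d)) t with hSdef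
  set M : (Fin d → ℕ) → ℝ := fun α => (Nat.multinomial univ α : ℝ) with hMdef
  set c : (Fin d → ℕ) → (Fin d → ℕ) → ℂ :=
    fun α β => ∫ x, conj (g α x) * g β x ∂μ with hcdef
  set ρ : (Fin d → ℕ) → ℝ := fun α => ∫ x, ∏ i, ‖x i‖ ^ (2 * α i) ∂μ with hρdef
  have hmem : ∀ α ∈ S, ∑ i, α i = t := fun α hα => (Finset.mem_piAntidiag.1 hα).1
  have hint : ∀ α ∈ S, ∀ β ∈ S, Integrable (fun x => conj (g α x) * g β x) μ :=
    fun α hα β hβ => integrable_cross hμ α β (by rw [hmem α hα, hmem β hβ]; ring)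
  have hint' : ∀ α ∈ S, ∀ β ∈ S, Integrable (fun x => g α x * conj (g β x)) μ :=
    fun α hα β hβ => integrable_cross' hμ α β (by rw [hmem α hα, hmem β hβ]; ring)
  -- inner integral
  have hinnerC : ∀ y, (∫ x, ((‖(inner ℂ x y : ℂ)‖ ^ (2 * t) : ℝ) : ℂ) ∂μ)
      = ∑ α ∈ S, ∑ β ∈ S,
          ((Nat.multinomial univ α * Nat.multinomial univ β : ℕ) : ℂ)
            * (g α y * conj (g β y)) * c α β := by
    intro y
    simp_rw [expand t _ y]
    rw [integral_finset_sum _ (fun α hα => integrable_finset_sum _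
      (fun β hβ => ((hint α hα β hβ).const_mul _)))]
    refine Finset.sum_congr rfl fun α hα => ?_
    rw [integral_finset_sum _ (fun β hβ => ((hint α hα β hβ).const_mul _))]
    refine Finset.sum_congr rfl fun β hβ => ?_
    rw [integral_const_mul]
  have hinner : ∀ y, ((∫ x, ‖(inner ℂ x y : ℂ)‖ ^ (2 * t) ∂μ : ℝ) : ℂ)
      = ∑ α ∈ S, ∑ β ∈ S,
          ((Nat.multinomial univ α * Nat.multinomial univ β : ℕ) : ℂ)
            * (g α y * conj (g β y)) * c α β :=
    fun y => integral_ofReal.symm.trans (hinnerC y)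
  -- outer integral
  have houterC : (∫ y, ((∫ x, ‖(inner ℂ x y : ℂ)‖ ^ (2 * t) ∂μ : ℝ) : ℂ) ∂μ)
      = ∑ α ∈ S, ∑ β ∈ S,
          ((Nat.multinomial univ α * Nat.multinomial univ β : ℕ) : ℂ)
            * ((‖c α β‖ ^ 2 : ℝ) : ℂ) := by
    simp_rw [hinner]
    rw [integral_finset_sum _ (fun α hα => integrable_finset_sum _
      (fun β hβ => (((hint' α hα β hβ).const_mul _).mul_const _)))]
    refine Finset.sum_congr rfl fun α hα => ?_
    rw [integral_finset_sum _ (fun β hβ => (((hint' α hα β hβ).const_mul _).mul_const _))]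
    refine Finset.sum_congr rfl fun β hβ => ?_
    rw [integral_mul_const, integral_const_mul]
    have hconj : ∫ y, g α y * conj (g β y) ∂μ = conj (c α β) := by
      rw [hcdef]
      rw [← integral_conj]
      refine integral_congr_ae (ae_of_all _ fun y => ?_)
      simp [map_mul, mul_comm]
    rw [hconj, mul_assoc, mul_comm (conj (c α β)), Complex.mul_conj']
    norm_cast
  have hcomplex : ((∫ y, ∫ x, ‖(inner ℂ x y : ℂ)‖ ^ (2 * t) ∂μ ∂μ : ℝ) : ℂ)
      = ∑ α ∈ S, ∑ β ∈ S,
          ((Nat.multinomial univ α * Nat.multinomial univ β : ℕ) : ℂ)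
            * ((‖c α β‖ ^ 2 : ℝ) : ℂ) :=
    integral_ofReal.symm.trans houterC
  have hreal : ∫ y, ∫ x, ‖(inner ℂ x y : ℂ)‖ ^ (2 * t) ∂μ ∂μ
      = ∑ α ∈ S, ∑ β ∈ S, (M α * M β) * ‖c α β‖ ^ 2 := by
    apply Complex.ofReal_injective
    rw [hcomplex, hMdef]
    push_cast
    ring
  -- moment expansion
  have hnormexp : ∀ x : EuclideanSpace ℂ (Fin d),
      ‖x‖ ^ (2 * t) = ∑ α ∈ S, M α * ∏ i, ‖x i‖ ^ (2 * α i) := by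
    intro x
    have h0 : ‖x‖ ^ (2 * t) = (∑ i, ‖x i‖ ^ 2) ^ t := by
      rw [pow_mul, PiLp.norm_sq_eq_of_L2]
    rw [h0, Finset.sum_pow_eq_sum_piAntidiag]
    refine Finset.sum_congr rfl fun α hα => ?_
    rw [hMdef]
    congr 1
    refine Finset.prod_congr rfl fun i _ => ?_
    rw [← pow_mul]
  have hmoment : ∫ z, ‖z‖ ^ (2 * t) ∂μ = ∑ α ∈ S, M α * ρ α := by
    simp_rw [hnormexp]
    rw [integral_finset_sum _ (fun α hα => (integrable_mono hμ α (hmem α hα)).const_mul _)]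
    exact Finset.sum_congr rfl fun α hα => integral_const_mul _ _
  have hρnonneg : ∀ α, 0 ≤ ρ α := fun α => integral_nonneg fun x => by positivity
  have hdiagc : ∀ α, c α α = ((ρ α : ℝ) : ℂ) := by
    intro α
    have hptwise : (fun x : EuclideanSpace ℂ (Fin d) => conj (g α x) * g α x)
        = fun x => ((∏ i, ‖x i‖ ^ (2 * α i) : ℝ) : ℂ) := by
      funext x
      rw [mul_comm, Complex.mul_conj', norm_g]
      push_cast
      rw [← Finset.prod_pow]
      refine Finset.prod_congr rfl fun i _ => ?_
      rw [← pow_mul, mul_comm (α i) 2]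
    rw [hcdef]
    simp only []
    rw [hptwise]
    exact integral_ofReal
  have hnormdiag : ∀ α, ‖c α α‖ ^ 2 = ρ α ^ 2 := by
    intro α
    rw [hdiagc α, Complex.norm_real, Real.norm_eq_abs, abs_of_nonneg (hρnonneg α)]
  -- inequality chain
  have hMnonneg : ∀ α, 0 ≤ M α := fun α => Nat.cast_nonneg _
  have key2 : ∑ α ∈ S, (M α * ρ α) ^ 2
      ≤ ∫ y, ∫ x, ‖(inner ℂ x y : ℂ)‖ ^ (2 * t) ∂μ ∂μ := by
    rw [hreal, ← Finset.sum_product']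
    have himg : ∑ α ∈ S, (M α * ρ α) ^ 2
        = ∑ p ∈ S.image (fun α => (α, α)),
            (M p.1 * M p.2) * ‖c p.1 p.2‖ ^ 2 := by
      rw [Finset.sum_image (by intro a _ b _ h; exact (Prod.ext_iff.1 h).1)]
      refine Finset.sum_congr rfl fun α hα => ?_
      rw [hnormdiag α]
      ring
    rw [himg]
    refine Finset.sum_le_sum_of_subset_of_nonneg ?_ fun p _ _ => ?_
    · intro p hp
      rcases Finset.mem_image.1 hp with ⟨α, hα, rfl⟩
      exact Finset.mem_product.2 ⟨hα, hα⟩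
    · have h1 := hMnonneg p.1
      have h2 := hMnonneg p.2
      positivity
  have key3 : (∫ z, ‖z‖ ^ (2 * t) ∂μ) ^ 2 ≤ (S.card : ℝ) * ∑ α ∈ S, (M α * ρ α) ^ 2 := by
    rw [hmoment]
    exact sq_sum_le_card_mul_sum_sq
  have hcardle : S.card ≤ (d + t - 1).choose t := by
    have hT : ((univ : Finset (Sym (Fin d) t)).image Sym.toMultiset).card
        = (d + t - 1).choose t := by
      rw [Finset.card_image_of_injective _ (fun a b h => Sym.coe_injective h),
        Finset.card_univ, Sym.card_sym_eq_choose, Fintype.card_fin]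
    rw [← hT]
    refine Finset.card_le_card_of_injOn (fun α => ∑ i, Multiset.replicate (α i) i) ?_ ?_
    · intro α hα
      simp only [Finset.mem_coe, Finset.mem_image]
      exact ⟨⟨∑ i, Multiset.replicate (α i) i, (card_repl_sum α univ).trans (hmem α hα)⟩,
        Finset.mem_univ _, rfl⟩
    · intro a _ b _ hab
      funext i
      have h := congrArg (Multiset.count i) hab
      simpa [Multiset.count_sum', Multiset.count_replicate] using h
  have hNpos : (0 : ℝ) < ((d + t - 1).choose t : ℕ) := by
    exact_mod_cast Nat.choose_pos (show t ≤ d + t - 1 by omega)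
  have hsumnonneg : 0 ≤ ∑ α ∈ S, (M α * ρ α) ^ 2 :=
    Finset.sum_nonneg fun α _ => sq_nonneg _
  have hcardR : (S.card : ℝ) / ((d + t - 1).choose t : ℝ) ≤ 1 := by
    rw [div_le_one hNpos]
    exact_mod_cast hcardle
  rw [ge_iff_le]
  calc (1 / ((d + t - 1).choose t : ℝ)) * (∫ z, ‖z‖ ^ (2 * t) ∂μ) ^ 2
      ≤ (1 / ((d + t - 1).choose t : ℝ)) * ((S.card : ℝ) * ∑ α ∈ S, (M α * ρ α) ^ 2) :=
        mul_le_mul_of_nonneg_left key3 (by positivity)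
    _ = ((S.card : ℝ) / ((d + t - 1).choose t : ℝ)) * ∑ α ∈ S, (M α * ρ α) ^ 2 := by ring
    _ ≤ 1 * ∑ α ∈ S, (M α * ρ α) ^ 2 := mul_le_mul_of_nonneg_right hcardR hsumnonneg
    _ = ∑ α ∈ S, (M α * ρ α) ^ 2 := one_mul _
    _ ≤ _ := key2
end

section
/- Let d ≥ 1, t ≥ 1, n ≥ 1 be integers and let v : Fin n → EuclideanSpace ℝ (Fin d). Then ∑_{j} ∑_{k} ⟪v j, v k⟫^{2t} ≥ ( ∏_{i=0}^{t-1} (1+2i)/(d+2i) ) · ( ∑_{ℓ} ‖v ℓ‖^{2t} )². -/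
open MvPolynomial Finset

def sidM : ℕ → ℕ
  | 0 => 1
  | 1 => 0
  | (k+2) => (k+1) * sidM k

lemma sidM_succ (k : ℕ) : sidM (k + 1) = k * sidM (k - 1) := by
  cases k with
  | zero => rfl
  | succ k => rfl

lemma sidM_two_mul (t : ℕ) : sidM (2 * t) = ∏ i ∈ Finset.range t, (1 + 2 * i) := by
  induction t with
  | zero => simp [sidM]
  | succ t ih =>
      rw [Finset.prod_range_succ, ← ih]
      have h : 2 * (t + 1) = (2 * t) + 2 := by ring
      rw [h]
      show (2 * t + 1) * sidM (2 * t) = _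
      ring

lemma sidM_two_mul_pos (t : ℕ) : 0 < sidM (2 * t) := by
  rw [sidM_two_mul]
  exact Finset.prod_pos fun i _ => by omega

section E

variable {σ : Type*} [Fintype σ] [DecidableEq σ] {R : Type*} [CommRing R]

/-- The Gaussian-expectation additive functional on multivariate polynomials. -/
noncomputable def sidE : MvPolynomial σ R →+ R :=
  AddMonoidHom.mk' (fun p => Finsupp.sum (AddMonoidAlgebra.coeff p) fun m c => c * ∏ a, (sidM (m a) : R))
    (fun p q => Finsupp.sum_add_index' (fun m => zero_mul _) (fun m c₁ c₂ => add_mul _ _ _))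

lemma sidE_apply (p : MvPolynomial σ R) :
    sidE p = Finsupp.sum (AddMonoidAlgebra.coeff p) fun m c => c * ∏ a, (sidM (m a) : R) := rfl

lemma sidE_monomial (m : σ →₀ ℕ) (c : R) :
    sidE (monomial m c) = c * ∏ a, (sidM (m a) : R) := by
  rw [sidE_apply]
  exact Finsupp.sum_single_index (zero_mul _)

lemma sidE_one : sidE (1 : MvPolynomial σ R) = 1 := by
  have h : (1 : MvPolynomial σ R) = monomial 0 1 := by simp
  rw [h, sidE_monomial]
  simp [sidM]

lemma sidE_C_mul (r : R) (p : MvPolynomial σ R) : sidE (C r * p) = r * sidE p := by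
  induction p using MvPolynomial.induction_on' with
  | add p q hp hq => rw [mul_add, map_add, map_add, hp, hq, mul_add]
  | monomial m c => rw [C_mul_monomial, sidE_monomial, sidE_monomial]; ring

/-- Stein's identity. -/
lemma sidE_X_mul (a : σ) (p : MvPolynomial σ R) :
    sidE (X a * p) = sidE (pderiv a p) := by
  induction p using MvPolynomial.induction_on' with
  | add p q hp hq => rw [mul_add, map_add, map_add, map_add, hp, hq]
  | monomial m c =>
      rw [X, monomial_mul, one_mul, pderiv_monomial, sidE_monomial, sidE_monomial]
      have key : ∀ b : σ, ((sidM ((Finsupp.single a 1 + m : σ →₀ ℕ) b) : R))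
          = (if b = a then (m a : R) else 1) * (sidM ((m - Finsupp.single a 1 : σ →₀ ℕ) b) : R) := by
        intro b
        by_cases hb : b = a
        · subst hb
          rw [if_pos rfl, Finsupp.add_apply, Finsupp.tsub_apply]
          simp only [Finsupp.single_eq_same]
          have h1 : 1 + m b = (m b) + 1 := by ring
          rw [h1, sidM_succ]
          push_cast
          ring
        · rw [if_neg hb, Finsupp.add_apply, Finsupp.tsub_apply]
          simp [Finsupp.single_eq_of_ne hb]
      calc c * ∏ b, ((sidM ((Finsupp.single a 1 + m : σ →₀ ℕ) b) : R))
          = c * ∏ b, ((if b = a then (m a : R) else 1)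
              * (sidM ((m - Finsupp.single a 1 : σ →₀ ℕ) b) : R)) := by
            rw [Finset.prod_congr rfl fun b _ => key b]
        _ = c * ((∏ b, if b = a then (m a : R) else 1)
              * ∏ b, (sidM ((m - Finsupp.single a 1 : σ →₀ ℕ) b) : R)) := by
            rw [Finset.prod_mul_distrib]
        _ = c * ↑(m a) * ∏ b, (sidM ((m - Finsupp.single a 1 : σ →₀ ℕ) b) : R) := by
            rw [Finset.prod_ite_eq' Finset.univ a (fun _ => (m a : R))]
            simp [mul_assoc]

lemma sid_pderiv_linear (a : σ) (c : σ → R) :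
    pderiv a (∑ b, C (c b) * X b) = C (c a) := by
  rw [map_sum]
  rw [Finset.sum_eq_single a]
  · rw [pderiv_C_mul, pderiv_X_self, mul_one]
  · intro b _ hb
    rw [pderiv_C_mul, pderiv_X_of_ne hb, mul_zero]
  · intro h
    exact absurd (Finset.mem_univ a) h

lemma sidE_linpow_rec (c : σ → R) (n : ℕ) :
    sidE ((∑ b, C (c b) * X b) ^ (n + 2))
      = ((n : R) + 1) * (∑ b, c b ^ 2) * sidE ((∑ b, C (c b) * X b) ^ n) := by
  set L : MvPolynomial σ R := ∑ b, C (c b) * X b with hL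
  have h1 : L ^ (n + 2) = ∑ b, C (c b) * (X b * L ^ (n + 1)) := by
    have : L ^ (n + 2) = L * L ^ (n + 1) := by ring
    rw [this]
    nth_rewrite 1 [hL]
    rw [Finset.sum_mul]
    exact Finset.sum_congr rfl fun b _ => by ring
  rw [h1, map_sum]
  have h2 : ∀ b : σ, sidE (C (c b) * (X b * L ^ (n + 1)))
      = (n + 1 : R) * (c b ^ 2 * sidE (L ^ n)) := by
    intro b
    rw [sidE_C_mul, sidE_X_mul]
    have h3 : pderiv b (L ^ (n + 1)) = (n + 1) • (L ^ n • pderiv b L) := by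
      have := Derivation.leibniz_pow (pderiv b) (a := L) (n + 1)
      simpa using this
    rw [h3, sid_pderiv_linear, map_nsmul]
    rw [smul_eq_mul, mul_comm (L ^ n), sidE_C_mul]
    push_cast
    ring
  rw [Finset.sum_congr rfl fun b _ => h2 b, ← Finset.mul_sum, ← Finset.sum_mul]
  ring

lemma sidE_linpow (c : σ → R) (t : ℕ) :
    sidE ((∑ b, C (c b) * X b) ^ (2 * t))
      = (sidM (2 * t) : R) * (∑ b, c b ^ 2) ^ t := by
  induction t with
  | zero => simp [sidE_one, sidM]
  | succ t ih =>
      have h : 2 * (t + 1) = (2 * t) + 2 := by ring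
      rw [h, sidE_linpow_rec, ih]
      have h2 : sidM (2 * t + 2) = (2 * t + 1) * sidM (2 * t) := rfl
      rw [h2]
      push_cast
      ring

lemma sid_pderiv_sumsq (a : σ) :
    pderiv a (∑ b : σ, (X b : MvPolynomial σ R) ^ 2) = 2 * X a := by
  rw [map_sum, Finset.sum_eq_single a]
  · rw [sq]
    rw [Derivation.leibniz, pderiv_X_self]
    simp [two_mul]
  · intro b _ hb
    rw [sq, Derivation.leibniz, pderiv_X_of_ne hb]
    simp
  · intro h
    exact absurd (Finset.mem_univ a) h

lemma sidE_sumsq_rec (s : ℕ) :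
    sidE ((∑ b : σ, (X b : MvPolynomial σ R) ^ 2) ^ (s + 1))
      = ((Fintype.card σ : R) + 2 * s) * sidE ((∑ b : σ, (X b : MvPolynomial σ R) ^ 2) ^ s) := by
  set Q : MvPolynomial σ R := ∑ b : σ, (X b : MvPolynomial σ R) ^ 2 with hQ
  have h1 : Q ^ (s + 1) = ∑ b, X b * (X b * Q ^ s) := by
    have h : Q ^ (s + 1) = Q * Q ^ s := by ring
    rw [h]
    nth_rewrite 1 [hQ]
    rw [Finset.sum_mul]
    exact Finset.sum_congr rfl fun b _ => by ring
  have h2 : ∀ b : σ, sidE (X b * (X b * Q ^ s))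
      = sidE (Q ^ s) + 2 * (s : R) * sidE ((X b) ^ 2 * Q ^ (s - 1)) := by
    intro b
    have h3 : pderiv b (Q ^ s) = s • (Q ^ (s - 1) • pderiv b Q) := by
      have := Derivation.leibniz_pow (pderiv b) (a := Q) s
      simpa using this
    have hder : pderiv b (X b * Q ^ s) = (2 * s : ℕ) • ((X b) ^ 2 * Q ^ (s - 1)) + Q ^ s := by
      rw [Derivation.leibniz, h3, sid_pderiv_sumsq, pderiv_X_self]
      simp only [smul_eq_mul, nsmul_eq_mul]
      push_cast
      ring
    rw [sidE_X_mul, hder, map_add, map_nsmul, nsmul_eq_mul]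
    push_cast
    ring
  rw [h1, map_sum, Finset.sum_congr rfl fun b _ => h2 b, Finset.sum_add_distrib,
    Finset.sum_const, Finset.card_univ, nsmul_eq_mul, ← Finset.mul_sum, ← map_sum,
    ← Finset.sum_mul]
  have h4 : 2 * (s : R) * sidE (Q * Q ^ (s - 1)) = 2 * (s : R) * sidE (Q ^ s) := by
    cases s with
    | zero => simp
    | succ k =>
        have : Q * Q ^ (k + 1 - 1) = Q ^ (k + 1) := by
          rw [Nat.add_sub_cancel, pow_succ']
        rw [this]
  rw [h4]
  ring

lemma sidE_sumsq (t : ℕ) :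
    sidE ((∑ b : σ, (X b : MvPolynomial σ R) ^ 2) ^ t)
      = ∏ i ∈ Finset.range t, ((Fintype.card σ : R) + 2 * i) := by
  induction t with
  | zero => simp [sidE_one]
  | succ t ih => rw [sidE_sumsq_rec, ih, Finset.prod_range_succ]; ring

/-- The exponent multiset of the monomial `∏ i, X (w i)`. -/
noncomputable def sidCnt {N : ℕ} (w : Fin N → σ) : σ →₀ ℕ := ∑ i, Finsupp.single (w i) 1

/-- The (integer) Gaussian moment of the monomial `∏ i, X (w i)`. -/
noncomputable def sidSn {N : ℕ} (w : Fin N → σ) : ℕ := ∏ a, sidM (sidCnt w a)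

lemma sid_prod_X {N : ℕ} (w : Fin N → σ) :
    (∏ i, X (w i) : MvPolynomial σ R) = monomial (sidCnt w) 1 := by
  rw [sidCnt, monomial_sum_one]
  refine Finset.prod_congr rfl fun i _ => ?_
  rw [← X_pow_eq_monomial, pow_one]

lemma sidE_prod_X {N : ℕ} (w : Fin N → σ) :
    sidE (∏ i, X (w i) : MvPolynomial σ R) = (sidSn w : R) := by
  rw [sid_prod_X, sidE_monomial, one_mul, sidSn]
  push_cast
  rfl

lemma sidE_linpow_expand (c : σ → R) (N : ℕ) :
    sidE ((∑ b, C (c b) * X b) ^ N)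
      = ∑ w : Fin N → σ, (∏ i, c (w i)) * (sidSn w : R) := by
  rw [Fintype.sum_pow, map_sum]
  refine Finset.sum_congr rfl fun w _ => ?_
  have h : (∏ i, (C (c (w i)) * X (w i)) : MvPolynomial σ R)
      = C (∏ i, c (w i)) * ∏ i, X (w i) := by
    rw [Finset.prod_mul_distrib, map_prod]
  rw [h, sidE_C_mul, sidE_prod_X]

lemma sid_sum_S_sq (t : ℕ) :
    ∑ w : Fin (2 * t) → σ, ((sidSn w : ℝ)) ^ 2
      = (sidM (2 * t) : ℝ) * ∏ i ∈ Finset.range t, ((Fintype.card σ : ℝ) + 2 * i) := by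
  have e1 := sidE_linpow_expand (R := MvPolynomial σ ℝ) (fun a : σ => X a) (2 * t)
  have e2 := sidE_linpow (R := MvPolynomial σ ℝ) (fun a : σ => X a) t
  have e3 : sidE (σ := σ) (R := ℝ)
        (∑ w : Fin (2 * t) → σ, (∏ i, X (w i)) * ((sidSn w : ℕ) : MvPolynomial σ ℝ))
      = ∑ w : Fin (2 * t) → σ, ((sidSn w : ℝ)) ^ 2 := by
    rw [map_sum]
    refine Finset.sum_congr rfl fun w _ => ?_
    have h : ((sidSn w : ℕ) : MvPolynomial σ ℝ) = C ((sidSn w : ℝ)) := by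
      rw [C_eq_coe_nat]
    rw [mul_comm, h, sidE_C_mul, sidE_prod_X]
    ring
  have e4 : sidE ((sidM (2 * t) : MvPolynomial σ ℝ) * (∑ b : σ, (X b : MvPolynomial σ ℝ) ^ 2) ^ t)
      = (sidM (2 * t) : ℝ) * ∏ i ∈ Finset.range t, ((Fintype.card σ : ℝ) + 2 * i) := by
    rw [← C_eq_coe_nat, sidE_C_mul, sidE_sumsq]
  calc ∑ w : Fin (2 * t) → σ, ((sidSn w : ℝ)) ^ 2
      = sidE (σ := σ) (R := ℝ)
          (∑ w : Fin (2 * t) → σ, (∏ i, X (w i)) * ((sidSn w : ℕ) : MvPolynomial σ ℝ)) :=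
        e3.symm
    _ = sidE (sidE ((∑ b : σ, C (X b) * X b) ^ (2 * t))) := by rw [e1]
    _ = sidE ((sidM (2 * t) : MvPolynomial σ ℝ)
          * (∑ b : σ, (X b : MvPolynomial σ ℝ) ^ 2) ^ t) := by rw [e2]
    _ = _ := e4

end E

/-- Sidelnikov's inequality for vectors in `ℝ^d`. -/
theorem statement5 (d t n : ℕ) (hd : 1 ≤ d) (ht : 1 ≤ t) (hn : 1 ≤ n)
    (v : Fin n → EuclideanSpace ℝ (Fin d)) :
    ∑ j, ∑ k, (inner ℝ (v j) (v k) : ℝ) ^ (2 * t)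
      ≥ (∏ i ∈ Finset.range t, (1 + 2 * (i : ℝ)) / (d + 2 * (i : ℝ)))
        * (∑ ℓ, ‖v ℓ‖ ^ (2 * t)) ^ 2 := by
  classical
  set m : ℝ := (sidM (2 * t) : ℝ) with hm_def
  set P : ℝ := ∏ i ∈ Finset.range t, ((d : ℝ) + 2 * i) with hP_def
  set S : (Fin (2 * t) → Fin d) → ℝ := fun w => (sidSn w : ℝ) with hS_def
  set T : (Fin (2 * t) → Fin d) → ℝ := fun w => ∑ j, ∏ i, v j (w i) with hT_def
  set Sv : ℝ := ∑ ℓ, ‖v ℓ‖ ^ (2 * t) with hSv_def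
  -- norms and inner products coordinatewise
  have hnorm : ∀ x : EuclideanSpace ℝ (Fin d), ∑ a, x a ^ 2 = ‖x‖ ^ 2 := by
    intro x
    rw [EuclideanSpace.norm_eq, Real.sq_sqrt (by positivity)]
    exact Finset.sum_congr rfl fun a _ => by rw [Real.norm_eq_abs, sq_abs]
  have h_inner : ∀ j k, (inner ℝ (v j) (v k) : ℝ) ^ (2 * t)
      = ∑ w : Fin (2 * t) → Fin d, (∏ i, v j (w i)) * (∏ i, v k (w i)) := by
    intro j k
    have h1 : (inner ℝ (v j) (v k) : ℝ) = ∑ a, v j a * v k a := by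
      simp [PiLp.inner_apply, RCLike.inner_apply, conj_trivial]
      exact Finset.sum_congr rfl fun a _ => mul_comm _ _
    rw [h1, Fintype.sum_pow]
    exact Finset.sum_congr rfl fun w _ => by rw [Finset.prod_mul_distrib]
  -- LHS as a sum of squares
  have hLHS : ∑ j, ∑ k, (inner ℝ (v j) (v k) : ℝ) ^ (2 * t) = ∑ w, T w ^ 2 := by
    simp_rw [h_inner]
    calc ∑ j, ∑ k, ∑ w : Fin (2 * t) → Fin d, (∏ i, v j (w i)) * (∏ i, v k (w i))
        = ∑ j, ∑ w : Fin (2 * t) → Fin d, (∏ i, v j (w i)) * (∑ k, ∏ i, v k (w i)) := by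
          refine Finset.sum_congr rfl fun j _ => ?_
          rw [Finset.sum_comm]
          exact Finset.sum_congr rfl fun w _ => (Finset.mul_sum _ _ _).symm
      _ = ∑ w : Fin (2 * t) → Fin d, (∑ j, ∏ i, v j (w i)) * (∑ k, ∏ i, v k (w i)) := by
          rw [Finset.sum_comm]
          exact Finset.sum_congr rfl fun w _ => (Finset.sum_mul _ _ _).symm
      _ = ∑ w, T w ^ 2 := Finset.sum_congr rfl fun w _ => (sq (T w)).symm
  -- cross term
  have hTS : ∑ w, T w * S w = m * Sv := by
    calc ∑ w, T w * S w
        = ∑ j, ∑ w : Fin (2 * t) → Fin d, (∏ i, v j (w i)) * S w := by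
          rw [Finset.sum_comm]
          exact Finset.sum_congr rfl fun w _ => Finset.sum_mul _ _ _
      _ = ∑ j, m * ‖v j‖ ^ (2 * t) := by
          refine Finset.sum_congr rfl fun j _ => ?_
          have h1 := (sidE_linpow_expand (R := ℝ) (fun a : Fin d => v j a) (2 * t)).symm
          have h2 := sidE_linpow (R := ℝ) (fun a : Fin d => v j a) t
          rw [hS_def]
          rw [h1, h2, hnorm, ← pow_mul, ← hm_def]
      _ = m * Sv := by rw [← Finset.mul_sum]
  -- square of Gaussian moment tensor
  have hSS : ∑ w, S w ^ 2 = m * P := by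
    have := sid_sum_S_sq (σ := Fin d) t
    rwa [Fintype.card_fin] at this
  -- Cauchy–Schwarz
  have hCS : (∑ w, T w * S w) ^ 2 ≤ (∑ w, T w ^ 2) * (∑ w, S w ^ 2) :=
    Finset.sum_mul_sq_le_sq_mul_sq _ _ _
  rw [hTS, hSS] at hCS
  -- positivity
  have hm : 0 < m := by
    rw [hm_def]
    exact_mod_cast sidM_two_mul_pos t
  have hP : 0 < P := by
    rw [hP_def]
    refine Finset.prod_pos fun i _ => ?_
    have : (1 : ℝ) ≤ (d : ℝ) := by exact_mod_cast hd
    positivity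
  -- the constant equals m / P
  have hconst : ∏ i ∈ Finset.range t, (1 + 2 * (i : ℝ)) / (d + 2 * (i : ℝ)) = m / P := by
    rw [Finset.prod_div_distrib, hP_def, hm_def]
    congr 1
    rw [sidM_two_mul]
    push_cast
    rfl
  rw [hLHS, ge_iff_le, hconst, div_mul_eq_mul_div, div_le_iff₀ hP]
  have h5 : m * (m * Sv ^ 2) ≤ m * ((∑ w, T w ^ 2) * P) := by
    calc m * (m * Sv ^ 2) = (m * Sv) ^ 2 := by ring
      _ ≤ (∑ w, T w ^ 2) * (m * P) := hCS
      _ = m * ((∑ w, T w ^ 2) * P) := by ring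
  exact le_of_mul_le_mul_left h5 hm
end

section
/- Let d ≥ 1, t ≥ 1, n ≥ 1 be integers and let v : Fin n → EuclideanSpace ℂ (Fin d). Then ∑_{j} ∑_{k} ‖⟪v j, v k⟫‖^{2t} ≥ (1 / Nat.choose (d+t-1) t) · ( ∑_{ℓ} ‖v ℓ‖^{2t} )². -/
open Finset Complex

private lemma welch_inner_pow {d n : ℕ} (t : ℕ) (v : Fin n → EuclideanSpace ℂ (Fin d))
    (j k : Fin n) :
    (inner ℂ (v j) (v k) : ℂ) ^ t
      = ∑ m : Sym (Fin d) t,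
          (starRingEnd ℂ) ((Real.sqrt m.1.countPerms : ℂ) * (m.1.map (v j)).prod)
            * ((Real.sqrt m.1.countPerms : ℂ) * (m.1.map (v k)).prod) := by
  have h1 : (inner ℂ (v j) (v k) : ℂ) = ∑ i, (starRingEnd ℂ) (v j i) * v k i := by
    simp [PiLp.inner_apply, RCLike.inner_apply, mul_comm]
  rw [h1, Finset.sum_pow (fun i => (starRingEnd ℂ) (v j i) * v k i) t, Finset.sym_univ]
  refine Finset.sum_congr rfl fun m _ => ?_
  have hM : ((Real.sqrt m.1.countPerms : ℂ)) * (Real.sqrt m.1.countPerms : ℂ)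
      = (m.1.countPerms : ℂ) := by
    rw [← Complex.ofReal_mul, Real.mul_self_sqrt (by positivity)]
    norm_cast
  have hconj : (starRingEnd ℂ) ((m.1.map (v j)).prod)
      = (m.1.map (fun i => (starRingEnd ℂ) (v j i))).prod := by
    rw [map_multiset_prod, Multiset.map_map]; rfl
  have hsplit : (m.1.map (fun i => (starRingEnd ℂ) (v j i) * v k i)).prod
      = (m.1.map (fun i => (starRingEnd ℂ) (v j i))).prod * (m.1.map (v k)).prod :=
    Multiset.prod_map_mul
  rw [hsplit, map_mul, Complex.conj_ofReal, hconj, ← hM]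
  ring

/-- The Welch inequality for vectors in `ℂ^d`. -/
theorem statement6 (d t n : ℕ) (hd : 1 ≤ d) (ht : 1 ≤ t) (hn : 1 ≤ n)
    (v : Fin n → EuclideanSpace ℂ (Fin d)) :
    ∑ j, ∑ k, ‖(inner ℂ (v j) (v k) : ℂ)‖ ^ (2 * t)
      ≥ (1 / (Nat.choose (d + t - 1) t : ℝ)) * (∑ ℓ, ‖v ℓ‖ ^ (2 * t)) ^ 2 := by
  classical
  set S := Sym (Fin d) t
  set w : Fin n → S → ℂ :=
    fun j m => (Real.sqrt m.1.countPerms : ℂ) * (m.1.map (v j)).prod with hw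
  have hkey : ∀ j k, (inner ℂ (v j) (v k) : ℂ) ^ t
      = ∑ m : S, (starRingEnd ℂ) (w j m) * w k m := fun j k => welch_inner_pow t v j k
  set G : S → S → ℂ := fun α β => ∑ j, (starRingEnd ℂ) (w j α) * w j β with hG
  -- the 4-fold sum exchange
  have hswap : ∑ j, ∑ k, ((∑ m : S, (starRingEnd ℂ) (w j m) * w k m)
        * (starRingEnd ℂ) (∑ m : S, (starRingEnd ℂ) (w j m) * w k m))
      = ∑ α : S, ∑ β : S, (G α β * (starRingEnd ℂ) (G α β)) := by
    have lhs_eq : ∀ j k, (∑ m : S, (starRingEnd ℂ) (w j m) * w k m)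
        * (starRingEnd ℂ) (∑ m : S, (starRingEnd ℂ) (w j m) * w k m)
        = ∑ α : S, ∑ β : S,
            (starRingEnd ℂ) (w j α) * w k α * (w j β * (starRingEnd ℂ) (w k β)) := by
      intro j k
      rw [map_sum, Finset.sum_mul_sum]
      refine Finset.sum_congr rfl fun α _ => Finset.sum_congr rfl fun β _ => ?_
      simp only [map_mul, RingHomCompTriple.comp_apply, RingHom.id_apply,
        Complex.conj_conj]
      try ring
    have rhs_eq : ∀ (α β : S), G α β * (starRingEnd ℂ) (G α β)
        = ∑ j, ∑ k,
            (starRingEnd ℂ) (w j α) * w k α * (w j β * (starRingEnd ℂ) (w k β)) := by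
      intro α β
      rw [hG, map_sum, Finset.sum_mul_sum]
      refine Finset.sum_congr rfl fun j _ => Finset.sum_congr rfl fun k _ => ?_
      simp only [map_mul, Complex.conj_conj]
      ring
    simp only [lhs_eq, rhs_eq]
    set T : Fin n → Fin n → S → S → ℂ := fun j k α β =>
      (starRingEnd ℂ) (w j α) * w k α * (w j β * (starRingEnd ℂ) (w k β)) with hT
    calc ∑ j, ∑ k, ∑ α : S, ∑ β : S, T j k α β
        = ∑ j, ∑ α : S, ∑ k, ∑ β : S, T j k α β :=
          Finset.sum_congr rfl fun j _ => Finset.sum_comm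
      _ = ∑ α : S, ∑ j, ∑ k, ∑ β : S, T j k α β := Finset.sum_comm
      _ = ∑ α : S, ∑ j, ∑ β : S, ∑ k, T j k α β :=
          Finset.sum_congr rfl fun α _ => Finset.sum_congr rfl fun j _ => Finset.sum_comm
      _ = ∑ α : S, ∑ β : S, ∑ j, ∑ k, T j k α β :=
          Finset.sum_congr rfl fun α _ => Finset.sum_comm
  -- LHS as sum of ‖G‖²
  have hLHS : ∑ j, ∑ k, ‖(inner ℂ (v j) (v k) : ℂ)‖ ^ (2 * t)
      = ∑ α : S, ∑ β : S, ‖G α β‖ ^ 2 := by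
    have h1 : ∀ j k, ‖(inner ℂ (v j) (v k) : ℂ)‖ ^ (2 * t)
        = ((∑ m : S, (starRingEnd ℂ) (w j m) * w k m)
            * (starRingEnd ℂ) (∑ m : S, (starRingEnd ℂ) (w j m) * w k m)).re := by
      intro j k
      rw [← hkey, Complex.mul_conj', ← Complex.ofReal_pow, Complex.ofReal_re,
        norm_pow, ← pow_mul, mul_comm t 2]
    have h2 : ∀ (α β : S), ‖G α β‖ ^ 2 = (G α β * (starRingEnd ℂ) (G α β)).re := by
      intro α β
      rw [Complex.mul_conj', ← Complex.ofReal_pow, Complex.ofReal_re]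
    simp only [h1, h2, ← Complex.re_sum]
    rw [hswap]
  -- trace identity
  have htrace : ∑ ℓ, ‖v ℓ‖ ^ (2 * t) = ∑ α : S, (G α α).re := by
    have : ∀ j : Fin n, (‖v j‖ : ℂ) ^ (2 * t) = ∑ m : S, (starRingEnd ℂ) (w j m) * w j m := by
      intro j
      rw [← hkey j j, inner_self_eq_norm_sq_to_K, ← pow_mul]
      norm_cast
    have hC : ((∑ ℓ, ‖v ℓ‖ ^ (2 * t) : ℝ) : ℂ) = ∑ α : S, G α α := by
      push_cast
      simp only [this]
      rw [Finset.sum_comm]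
    calc ∑ ℓ, ‖v ℓ‖ ^ (2 * t) = ((∑ ℓ, ‖v ℓ‖ ^ (2 * t) : ℝ) : ℂ).re :=
        (Complex.ofReal_re _).symm
      _ = (∑ α : S, G α α).re := by rw [hC]
      _ = ∑ α : S, (G α α).re := Complex.re_sum _ _
  -- Cauchy-Schwarz chain
  have hcardS : (Fintype.card S : ℝ) = (Nat.choose (d + t - 1) t : ℝ) := by
    rw [Sym.card_sym_eq_choose, Fintype.card_fin]
  have hN0 : (0 : ℝ) < (Nat.choose (d + t - 1) t : ℝ) := by
    have : t ≤ d + t - 1 := by omega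
    exact_mod_cast Nat.choose_pos this
  have hcs : (∑ α : S, (G α α).re) ^ 2
      ≤ (Fintype.card S : ℝ) * ∑ α : S, ((G α α).re) ^ 2 := by
    simpa [Finset.card_univ] using
      (sq_sum_le_card_mul_sum_sq (s := (Finset.univ : Finset S)) (f := fun α => (G α α).re))
  have hre : ∀ α : S, ((G α α).re) ^ 2 ≤ ‖G α α‖ ^ 2 := by
    intro α
    have := Complex.abs_re_le_norm (G α α)
    calc ((G α α).re) ^ 2 = |(G α α).re| ^ 2 := (_root_.sq_abs _).symm
      _ ≤ ‖G α α‖ ^ 2 := by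
          apply pow_le_pow_left₀ (abs_nonneg _)
          simpa using this
  have hdiag : ∑ α : S, ‖G α α‖ ^ 2 ≤ ∑ α : S, ∑ β : S, ‖G α β‖ ^ 2 := by
    refine Finset.sum_le_sum fun α _ => ?_
    exact Finset.single_le_sum (f := fun β => ‖G α β‖ ^ 2)
      (fun β _ => by positivity) (Finset.mem_univ α)
  have hfinal : (∑ ℓ, ‖v ℓ‖ ^ (2 * t)) ^ 2
      ≤ (Nat.choose (d + t - 1) t : ℝ) * ∑ j, ∑ k, ‖(inner ℂ (v j) (v k) : ℂ)‖ ^ (2 * t) := by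
    rw [htrace, hLHS, ← hcardS]
    calc (∑ α : S, (G α α).re) ^ 2
        ≤ (Fintype.card S : ℝ) * ∑ α : S, ((G α α).re) ^ 2 := hcs
      _ ≤ (Fintype.card S : ℝ) * ∑ α : S, ‖G α α‖ ^ 2 := by
          apply mul_le_mul_of_nonneg_left (Finset.sum_le_sum fun α _ => hre α)
          positivity
      _ ≤ (Fintype.card S : ℝ) * ∑ α : S, ∑ β : S, ‖G α β‖ ^ 2 :=
          mul_le_mul_of_nonneg_left hdiag (by positivity)
  rw [ge_iff_le, div_mul_eq_mul_div, one_mul, div_le_iff₀ hN0]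
  exact hfinal.trans_eq (mul_comm _ _)
end

section
/- Let d ≥ 1, t ≥ 1, n ≥ 1 be integers and let v : Fin n → (Fin d → ℍ) be d-tuples of quaternions, not all zero. Write c_t := (t+1)/Nat.choose(2d+t-1, t) and S := ∑_{ℓ} (∑_i normSq((v ℓ) i))^t. Then equality ∑_{j} ∑_{k} (normSq ⟨v j, v k⟩)^t = c_t · S² holds if and only if the generalized Bessel identity holds: for every x : Fin d → ℍ, ∑_{j} (normSq ⟨v j, x⟩)^t = c_t · S · ( ∑_i normSq(x i) )^t. -/
open Quaternion MvPolynomial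
set_option linter.unusedSectionVars false

open Quaternion

noncomputable section Aux

/-- The standard real basis of the quaternions. -/
def eQ : Fin 4 → Quaternion ℝ
  | 0 => ⟨1,0,0,0⟩
  | 1 => ⟨0,1,0,0⟩
  | 2 => ⟨0,0,1,0⟩
  | 3 => ⟨0,0,0,1⟩

lemma eQ_re (a : Fin 4) : (eQ a).re = if a = 0 then 1 else 0 := by fin_cases a <;> rfl
lemma eQ_imI (a : Fin 4) : (eQ a).imI = if a = 1 then 1 else 0 := by fin_cases a <;> rfl
lemma eQ_imJ (a : Fin 4) : (eQ a).imJ = if a = 2 then 1 else 0 := by fin_cases a <;> rfl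
lemma eQ_imK (a : Fin 4) : (eQ a).imK = if a = 3 then 1 else 0 := by fin_cases a <;> rfl

/-- component matrix of a quaternion `R`. -/
def gQ (R : Quaternion ℝ) (α β : Fin 4) : ℝ := (star (eQ α) * (R * eQ β)).re

lemma factC (α β : Fin 4) (p q : Quaternion ℝ) :
    ∑ γ : Fin 4, (star (eQ α) * (p * eQ γ)).re * (star (eQ β) * (q * eQ γ)).re
      = gQ (p * star q) α β := by
  fin_cases α <;> fin_cases β <;>
  · rw [Fin.sum_univ_four]
    simp only [gQ, eQ_re, eQ_imI, eQ_imJ, eQ_imK, Fin.isValue, Fin.reduceEq, if_true, if_false, Quaternion.re_mul, Quaternion.imI_mul, Quaternion.imJ_mul,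
      Quaternion.imK_mul, Quaternion.re_star, Quaternion.imI_star,
      Quaternion.imJ_star, Quaternion.imK_star]
    ring

lemma factA (R : Quaternion ℝ) (β β' : Fin 4) :
    ∑ α : Fin 4, gQ R α β * gQ R α β' = normSq R * (if β = β' then 1 else 0) := by
  fin_cases β <;> fin_cases β' <;>
  · rw [Fin.sum_univ_four]
    simp only [gQ, eQ_re, eQ_imI, eQ_imJ, eQ_imK, Fin.isValue, Fin.reduceEq, if_true, if_false, Quaternion.re_mul, Quaternion.imI_mul, Quaternion.imJ_mul,
      Quaternion.imK_mul, Quaternion.re_star, Quaternion.imI_star,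
      Quaternion.imJ_star, Quaternion.imK_star, Quaternion.normSq_def',
      if_true, if_false]
    norm_num [Fin.ext_iff]
    try ring

lemma gQ_real (r : ℝ) (α β : Fin 4) :
    gQ ((r : Quaternion ℝ)) α β = r * (if α = β then 1 else 0) := by
  fin_cases α <;> fin_cases β <;>
  · simp only [gQ, eQ_re, eQ_imI, eQ_imJ, eQ_imK, Fin.isValue, Fin.reduceEq, if_true, if_false, Quaternion.re_coe, Quaternion.re_mul, Quaternion.imI_mul,
      Quaternion.imJ_mul, Quaternion.imK_mul, Quaternion.re_star, Quaternion.imI_star,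
      Quaternion.imJ_star, Quaternion.imK_star, Quaternion.imI_coe, Quaternion.imJ_coe,
      Quaternion.imK_coe]
    norm_num [Fin.ext_iff]

lemma gQ_add (R S : Quaternion ℝ) (α β : Fin 4) :
    gQ (R + S) α β = gQ R α β + gQ S α β := by
  simp [gQ, add_mul, mul_add]

lemma factB (R : Quaternion ℝ) :
    ∑ β : Fin 4, ∑ α : Fin 4, gQ R α β * gQ R α β = 4 * normSq R := by
  have : ∀ β : Fin 4, ∑ α : Fin 4, gQ R α β * gQ R α β = normSq R := by
    intro β; rw [factA R β β]; simp
  rw [Fin.sum_univ_four, this, this, this, this]; ring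

end Aux
set_option linter.unusedSectionVars false

noncomputable section BpSec

variable {σ : Type} [Fintype σ] [DecidableEq σ]

/-- factorial weight of a monomial -/
def W (m : σ →₀ ℕ) : ℝ := ∏ s : σ, ((m s).factorial : ℝ)

lemma W_nonneg (m : σ →₀ ℕ) : 0 ≤ W m :=
  Finset.prod_nonneg fun s _ => by positivity

lemma W_zero : W (0 : σ →₀ ℕ) = 1 := by simp [W]

lemma W_add_single (m : σ →₀ ℕ) (s : σ) :
    W (m + Finsupp.single s 1) = W m * (m s + 1) := by
  classical
  have key : ∀ x : σ, ((m + Finsupp.single s 1 : σ →₀ ℕ) x).factorial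
      = if x = s then (m s + 1) * (m s).factorial else (m x).factorial := by
    intro x
    rw [Finsupp.add_apply, Finsupp.single_apply]
    split
    · rename_i h; rw [if_pos h.symm, h, Nat.factorial_succ]
    · rename_i h; rw [if_neg (fun hh => h hh.symm), add_zero]
  rw [W, W, ← Finset.mul_prod_erase Finset.univ _ (Finset.mem_univ s),
    ← Finset.mul_prod_erase Finset.univ (fun s => ((m s).factorial : ℝ)) (Finset.mem_univ s)]
  have h1 : ∀ x ∈ Finset.univ.erase s,
      (((m + Finsupp.single s 1 : σ →₀ ℕ) x).factorial : ℝ) = ((m x).factorial : ℝ) := by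
    intro x hx
    rw [key x, if_neg (Finset.ne_of_mem_erase hx)]
  rw [Finset.prod_congr rfl h1, key s, if_pos rfl]
  push_cast
  ring

/-- The Fischer-type pairing on polynomials. -/
def Bp (p q : MvPolynomial σ ℝ) : ℝ :=
  ∑ m ∈ p.support ∪ q.support, W m * coeff m p * coeff m q

lemma Bp_eq_sum {T : Finset (σ →₀ ℕ)} {p q : MvPolynomial σ ℝ}
    (hp : p.support ⊆ T) (hq : q.support ⊆ T) :
    Bp p q = ∑ m ∈ T, W m * coeff m p * coeff m q := by
  rw [Bp]
  apply Finset.sum_subset (Finset.union_subset hp hq)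
  intro m _ hm
  rcases Finset.notMem_union.mp hm with ⟨h1, h2⟩
  rw [notMem_support_iff.mp h1]
  ring

lemma Bp_symm (p q : MvPolynomial σ ℝ) : Bp p q = Bp q p := by
  rw [Bp, Bp, Finset.union_comm]
  exact Finset.sum_congr rfl fun m _ => by ring

lemma Bp_add_left (p p' q : MvPolynomial σ ℝ) :
    Bp (p + p') q = Bp p q + Bp p' q := by
  classical
  have h1 : (p + p').support ⊆ p.support ∪ p'.support ∪ q.support :=
    (support_add).trans Finset.subset_union_left
  have h2 : p.support ⊆ p.support ∪ p'.support ∪ q.support := by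
    intro x hx; exact Finset.mem_union_left _ (Finset.mem_union_left _ hx)
  have h3 : p'.support ⊆ p.support ∪ p'.support ∪ q.support := by
    intro x hx; exact Finset.mem_union_left _ (Finset.mem_union_right _ hx)
  have h4 : q.support ⊆ p.support ∪ p'.support ∪ q.support :=
    Finset.subset_union_right
  rw [Bp_eq_sum h1 h4, Bp_eq_sum h2 h4, Bp_eq_sum h3 h4, ← Finset.sum_add_distrib]
  exact Finset.sum_congr rfl fun m _ => by rw [coeff_add]; ring

lemma Bp_add_right (p q q' : MvPolynomial σ ℝ) :
    Bp p (q + q') = Bp p q + Bp p q' := by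
  rw [Bp_symm, Bp_add_left, Bp_symm q p, Bp_symm q' p]

lemma Bp_zero_left (q : MvPolynomial σ ℝ) : Bp 0 q = 0 := by
  rw [Bp]
  apply Finset.sum_eq_zero
  intro m _
  rw [coeff_zero]
  ring

lemma Bp_zero_right (p : MvPolynomial σ ℝ) : Bp p 0 = 0 := by
  rw [Bp_symm, Bp_zero_left]

lemma Bp_smul_left (a : ℝ) (p q : MvPolynomial σ ℝ) :
    Bp (a • p) q = a * Bp p q := by
  classical
  have h1 : (a • p).support ⊆ p.support ∪ q.support :=
    (Finsupp.support_smul).trans Finset.subset_union_left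
  rw [Bp_eq_sum h1 Finset.subset_union_right, Bp, Finset.mul_sum]
  exact Finset.sum_congr rfl fun m _ => by rw [coeff_smul]; simp; ring

lemma Bp_smul_right (a : ℝ) (p q : MvPolynomial σ ℝ) :
    Bp p (a • q) = a * Bp p q := by
  rw [Bp_symm, Bp_smul_left, Bp_symm]

lemma Bp_C_mul_left (a : ℝ) (p q : MvPolynomial σ ℝ) :
    Bp (C a * p) q = a * Bp p q := by
  rw [← smul_eq_C_mul, Bp_smul_left]

lemma Bp_C_mul_right (a : ℝ) (p q : MvPolynomial σ ℝ) :
    Bp p (C a * q) = a * Bp p q := by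
  rw [← smul_eq_C_mul, Bp_smul_right]

lemma Bp_sum_left {ι : Type*} (f : ι → MvPolynomial σ ℝ) (T : Finset ι)
    (q : MvPolynomial σ ℝ) : Bp (∑ i ∈ T, f i) q = ∑ i ∈ T, Bp (f i) q := by
  classical
  induction T using Finset.induction_on with
  | empty => simp [Bp_zero_left]
  | insert _ _ h ih => rename_i a T'; rw [Finset.sum_insert h, Finset.sum_insert h,
      Bp_add_left, ih]

lemma Bp_sum_right {ι : Type*} (f : ι → MvPolynomial σ ℝ) (T : Finset ι)
    (p : MvPolynomial σ ℝ) : Bp p (∑ i ∈ T, f i) = ∑ i ∈ T, Bp p (f i) := by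
  rw [Bp_symm, Bp_sum_left]
  exact Finset.sum_congr rfl fun i _ => Bp_symm _ _

lemma Bp_monomial (m m' : σ →₀ ℕ) (a b : ℝ) :
    Bp (monomial m a) (monomial m' b)
      = if m = m' then W m * a * b else 0 := by
  classical
  have h1 : (monomial m a).support ⊆ {m} := support_monomial_subset
  have h2 : (monomial m' b).support ⊆ {m, m'} := by
    intro x hx; simp [Finset.mem_insert]; right
    exact Finset.mem_singleton.mp (support_monomial_subset hx)
  have h1' : (monomial m a).support ⊆ ({m, m'} : Finset _) :=
    h1.trans (by intro x hx; simp_all)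
  rw [Bp_eq_sum h1' h2]
  by_cases h : m = m'
  · subst h
    rw [if_pos rfl, Finset.pair_eq_singleton, Finset.sum_singleton]
    simp [coeff_monomial]
  · rw [Finset.sum_pair h, if_neg h]
    simp [coeff_monomial, h, Ne.symm h]

lemma Bp_nonneg (p : MvPolynomial σ ℝ) : 0 ≤ Bp p p := by
  rw [Bp]
  apply Finset.sum_nonneg
  intro m _
  rw [mul_assoc]
  exact mul_nonneg (W_nonneg m) (mul_self_nonneg _)

lemma Bp_one_C (a : ℝ) : Bp (1 : MvPolynomial σ ℝ) (C a) = a := by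
  have h1 : (1 : MvPolynomial σ ℝ) = monomial 0 1 := by simp
  have h2 : (C a : MvPolynomial σ ℝ) = monomial 0 a := by simp
  rw [h1, h2, Bp_monomial, if_pos rfl, W_zero]
  ring

end BpSec

section Adj

variable {σ : Type} [Fintype σ] [DecidableEq σ]

lemma Bp_adj (s : σ) (p q : MvPolynomial σ ℝ) :
    Bp (X s * p) q = Bp p (pderiv s q) := by
  classical
  induction p using MvPolynomial.induction_on' with
  | add p1 p2 ih1 ih2 =>
    rw [mul_add, Bp_add_left, Bp_add_left, ih1, ih2]
  | monomial m a =>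
    induction q using MvPolynomial.induction_on' with
    | add q1 q2 ih1 ih2 =>
      rw [map_add, Bp_add_right, Bp_add_right, ih1, ih2]
    | monomial m' b =>
      rw [show ((X s : MvPolynomial σ ℝ) * monomial m a) = monomial (m + Finsupp.single s 1) a by
        rw [X, monomial_mul, one_mul, add_comm], pderiv_monomial, Bp_monomial, Bp_monomial]
      by_cases hs : m' s = 0
      · rw [if_neg, hs]
        · simp
        · intro h
          have := DFunLike.congr_fun h s
          simp [hs] at this
      · have hle : Finsupp.single s 1 ≤ m' := by
          rw [Finsupp.single_le_iff]
          omega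
        have hiff : m + Finsupp.single s 1 = m' ↔ m = m' - Finsupp.single s 1 := by
          constructor
          · intro h; rw [← h, add_tsub_cancel_right]
          · intro h; rw [h]; exact tsub_add_cancel_of_le hle
        by_cases h : m + Finsupp.single s 1 = m'
        · rw [if_pos h, if_pos (hiff.mp h), hiff.mp h, W_add_single]
          have hms : ((m' - Finsupp.single s 1 : σ →₀ ℕ) s : ℝ) + 1 = (m' s : ℝ) := by
            rw [Finsupp.tsub_apply, Finsupp.single_apply, if_pos rfl]
            have h1 : 1 ≤ m' s := by omega
            have h2 : m' s - 1 + 1 = m' s := Nat.sub_add_cancel h1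
            conv_rhs => rw [← h2]
            push_cast
            ring
          rw [hms]
          ring
        · rw [if_neg h, if_neg (fun hh => h (hiff.mpr hh))]

end Adj

section Ops

variable {σ : Type} [Fintype σ] [DecidableEq σ]

/-- inner product of coefficient vectors -/
def ipc (c c' : σ → ℝ) : ℝ := ∑ s, c s * c' s

/-- linear form -/
noncomputable def lf (c : σ → ℝ) : MvPolynomial σ ℝ := ∑ s, C (c s) * X s

/-- directional derivative -/
noncomputable def Lc (c : σ → ℝ) (p : MvPolynomial σ ℝ) : MvPolynomial σ ℝ :=
  ∑ s, c s • pderiv s p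

lemma Lc_add (c : σ → ℝ) (p q : MvPolynomial σ ℝ) :
    Lc c (p + q) = Lc c p + Lc c q := by
  simp [Lc, map_add, smul_add, Finset.sum_add_distrib]

lemma Lc_sum {ι : Type*} (c : σ → ℝ) (f : ι → MvPolynomial σ ℝ) (T : Finset ι) :
    Lc c (∑ i ∈ T, f i) = ∑ i ∈ T, Lc c (f i) := by
  classical
  induction T using Finset.induction_on with
  | empty => simp [Lc]
  | insert _ _ h ih => rename_i a T'; rw [Finset.sum_insert h, Finset.sum_insert h, Lc_add, ih]

lemma Lc_mul (c : σ → ℝ) (p q : MvPolynomial σ ℝ) :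
    Lc c (p * q) = p * Lc c q + q * Lc c p := by
  rw [Lc]
  have h : ∀ s : σ, pderiv s (p * q) = p * pderiv s q + q * pderiv s p := by
    intro s
    rw [Derivation.leibniz]
    simp [smul_eq_mul]
  calc ∑ s, c s • pderiv s (p * q)
      = ∑ s, (p * (c s • pderiv s q) + q * (c s • pderiv s p)) := by
        apply Finset.sum_congr rfl; intro s _; rw [h s, smul_add]; rw [mul_smul_comm, mul_smul_comm]
    _ = p * Lc c q + q * Lc c p := by
        rw [Finset.sum_add_distrib, Lc, Lc, Finset.mul_sum, Finset.mul_sum]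

lemma Lc_C (c : σ → ℝ) (x : ℝ) : Lc c (C x) = 0 := by
  simp [Lc]

lemma Lc_C_mul (c : σ → ℝ) (x : ℝ) (p : MvPolynomial σ ℝ) :
    Lc c (C x * p) = C x * Lc c p := by
  rw [Lc_mul, Lc_C]
  ring

lemma Lc_X (c : σ → ℝ) (s : σ) : Lc c (X s) = C (c s) := by
  classical
  rw [Lc]
  have key : ∀ s' : σ, c s' • pderiv s' (X s : MvPolynomial σ ℝ)
      = if s' = s then C (c s') else 0 := by
    intro s'
    rw [pderiv_X]
    by_cases h : s' = s
    · subst h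
      rw [if_pos rfl, Pi.single_eq_same, smul_eq_C_mul, mul_one]
    · rw [if_neg h, Pi.single_eq_of_ne (fun hh => h hh.symm), smul_zero]
  rw [Finset.sum_congr rfl (fun s' _ => key s')]
  simp

end Ops

section Ops2

variable {σ : Type} [Fintype σ] [DecidableEq σ]

lemma Lc_lf (c b : σ → ℝ) : Lc c (lf b) = C (ipc c b) := by
  rw [lf, Lc_sum, ipc]
  have key : ∀ s : σ, Lc c (C (b s) * X s) = C (c s * b s) := by
    intro s; rw [Lc_C_mul, Lc_X, ← C_mul, mul_comm]
  rw [Finset.sum_congr rfl (fun s _ => key s), map_sum]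

lemma Lc_pow (c : σ → ℝ) (p : MvPolynomial σ ℝ) (n : ℕ) :
    Lc c (p ^ (n + 1)) = (n + 1 : ℝ) • (p ^ n * Lc c p) := by
  induction n with
  | zero => simp [Lc]
  | succ m ih =>
    rw [pow_succ, Lc_mul, ih]
    rw [smul_eq_C_mul, smul_eq_C_mul, C_add, C_add, Nat.cast_add, C_add, Nat.cast_one, C_1]
    ring

end Ops2

section Ops3

variable {σ : Type} [Fintype σ] [DecidableEq σ]
variable {ι : Type} [Fintype ι] {ι' : Type} [Fintype ι'] [DecidableEq ι']

lemma C2_eq : (C (2:ℝ) : MvPolynomial σ ℝ) = 2 :=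
  map_ofNat C 2

lemma C4_eq : (C (4:ℝ) : MvPolynomial σ ℝ) = 4 :=
  map_ofNat C 4

/-- second order operator attached to a family of directions -/
noncomputable def TT (c : ι → σ → ℝ) (p : MvPolynomial σ ℝ) : MvPolynomial σ ℝ :=
  ∑ a, Lc (c a) (Lc (c a) p)

/-- quadratic form polynomial attached to a family of coefficient vectors -/
noncomputable def Qf (b : ι' → σ → ℝ) : MvPolynomial σ ℝ := ∑ β, (lf (b β)) ^ 2

lemma TT_C_mul (c : ι → σ → ℝ) (x : ℝ) (p : MvPolynomial σ ℝ) :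
    TT c (C x * p) = C x * TT c p := by
  rw [TT, TT, Finset.mul_sum]
  exact Finset.sum_congr rfl fun a _ => by rw [Lc_C_mul, Lc_C_mul]

-- peel a linear factor through the pairing
lemma Bp_lf_peel (b : σ → ℝ) (p q : MvPolynomial σ ℝ) :
    Bp (lf b * p) q = Bp p (Lc b q) := by
  rw [lf, Finset.sum_mul, Bp_sum_left, Lc, Bp_sum_right]
  apply Finset.sum_congr rfl
  intro s _
  rw [mul_assoc, Bp_C_mul_left, Bp_adj, Bp_smul_right]

lemma Bp_Qf_peel (b : ι' → σ → ℝ) (p q : MvPolynomial σ ℝ) :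
    Bp (Qf b * p) q = Bp p (TT b q) := by
  rw [Qf, Finset.sum_mul, Bp_sum_left, TT, Bp_sum_right]
  apply Finset.sum_congr rfl
  intro β _
  rw [show lf (b β) ^ 2 * p = lf (b β) * (lf (b β) * p) by ring,
    Bp_lf_peel, Bp_lf_peel]

lemma Bp_Qf_pow_peel (b : ι' → σ → ℝ) (k : ℕ) (p q : MvPolynomial σ ℝ) :
    Bp (Qf b ^ k * p) q = Bp p ((TT b)^[k] q) := by
  induction k generalizing p q with
  | zero => simp
  | succ m ih =>
    rw [show Qf b ^ (m+1) * p = Qf b ^ m * (Qf b * p) by ring, ih,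
      Bp_Qf_peel, Function.iterate_succ_apply']

lemma Lc_Qf (c : σ → ℝ) (b : ι' → σ → ℝ) :
    Lc c (Qf b) = ∑ β, C (2 * ipc c (b β)) * lf (b β) := by
  rw [Qf, Lc_sum]
  apply Finset.sum_congr rfl
  intro β _
  rw [pow_two, Lc_mul, Lc_lf, C_mul, C2_eq]
  ring

-- the structural second order computation
lemma TT_Qf (c : ι → σ → ℝ) (b : ι' → σ → ℝ) (ρ : ℝ)
    (h : ∀ β β', ∑ a, ipc (c a) (b β) * ipc (c a) (b β') = ρ * (if β = β' then 1 else 0)) :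
    TT c (Qf b) = C (2 * (Fintype.card ι') * ρ) := by
  rw [TT]
  calc ∑ a, Lc (c a) (Lc (c a) (Qf b))
      = ∑ a, ∑ β, C (2 * (ipc (c a) (b β) * ipc (c a) (b β))) := by
        apply Finset.sum_congr rfl
        intro a _
        rw [Lc_Qf, Lc_sum]
        apply Finset.sum_congr rfl
        intro β _
        rw [Lc_C_mul, Lc_lf, ← C_mul, mul_assoc]
    _ = C (2 * (Fintype.card ι') * ρ) := by
        rw [Finset.sum_comm]
        have hb : ∀ β : ι', ∑ a, C (2 * (ipc (c a) (b β) * ipc (c a) (b β)))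
            = (C (2 * ρ) : MvPolynomial σ ℝ) := by
          intro β
          have hh := h β β
          rw [if_pos rfl, mul_one] at hh
          rw [← map_sum, ← Finset.mul_sum, hh]
        rw [Finset.sum_congr rfl (fun β _ => hb β), Finset.sum_const, Finset.card_univ,
          nsmul_eq_mul, ← C_eq_coe_nat, ← C_mul]
        congr 1
        ring

lemma sq_Lc_Qf (c : ι → σ → ℝ) (b : ι' → σ → ℝ) (ρ : ℝ)
    (h : ∀ β β', ∑ a, ipc (c a) (b β) * ipc (c a) (b β') = ρ * (if β = β' then 1 else 0)) :
    ∑ a, (Lc (c a) (Qf b)) ^ 2 = C (4 * ρ) * Qf b := by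
  have expand : ∀ a, (Lc (c a) (Qf b)) ^ 2
      = ∑ β, ∑ β', C (4 * (ipc (c a) (b β) * ipc (c a) (b β'))) * (lf (b β) * lf (b β')) := by
    intro a
    rw [Lc_Qf, pow_two, Finset.sum_mul_sum]
    apply Finset.sum_congr rfl
    intro β _
    apply Finset.sum_congr rfl
    intro β' _
    simp only [C_mul, C2_eq, C4_eq]
    ring
  rw [Finset.sum_congr rfl (fun a _ => expand a), Finset.sum_comm]
  have swap : ∀ β, ∑ a, ∑ β', C (4 * (ipc (c a) (b β) * ipc (c a) (b β'))) * (lf (b β) * lf (b β'))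
      = ∑ β', C (4 * ρ * (if β = β' then 1 else 0)) * (lf (b β) * lf (b β')) := by
    intro β
    rw [Finset.sum_comm]
    apply Finset.sum_congr rfl
    intro β' _
    rw [← Finset.sum_mul, ← map_sum]
    congr 2
    rw [← Finset.mul_sum, h β β']
    ring
  rw [Finset.sum_congr rfl (fun β _ => swap β)]
  rw [Qf, Finset.mul_sum]
  apply Finset.sum_congr rfl
  intro β _
  rw [Finset.sum_eq_single β]
  · rw [if_pos rfl, pow_two]; rw [show (4:ℝ) * ρ * 1 = 4 * ρ by ring]
  · intro β' _ hne
    rw [if_neg (fun hh => hne hh.symm)]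
    rw [show (4:ℝ) * ρ * 0 = 0 by ring, map_zero, zero_mul]
  · intro hmem
    exact absurd (Finset.mem_univ β) hmem

end Ops3


section Ops4

variable {σ : Type} [Fintype σ] [DecidableEq σ]
variable {ι : Type} [Fintype ι]

lemma Lc_smul (c : σ → ℝ) (x : ℝ) (p : MvPolynomial σ ℝ) :
    Lc c (x • p) = x • Lc c p := by
  rw [smul_eq_C_mul, smul_eq_C_mul, Lc_C_mul]

lemma TT_pow (c : ι → σ → ℝ) (P : MvPolynomial σ ℝ) (e r : ℝ)
    (he : TT c P = C e) (hr : ∑ a, (Lc (c a) P) ^ 2 = C r * P) (n : ℕ) :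
    TT c (P ^ (n+1)) = C (((n:ℝ)+1) * ((n:ℝ)*r + e)) * P ^ n := by
  cases n with
  | zero =>
    rw [pow_one, he, pow_zero, mul_one]
    congr 1
    push_cast
    ring
  | succ m =>
    have step : ∀ a : ι, Lc (c a) (Lc (c a) (P ^ (m+2)))
        = C (((m:ℝ)+2)) * (P^(m+1) * Lc (c a) (Lc (c a) P))
          + C (((m:ℝ)+2) * ((m:ℝ)+1)) * (P^m * (Lc (c a) P)^2) := by
      intro a
      rw [show m + 2 = (m+1) + 1 from rfl, Lc_pow, Lc_smul, Lc_mul, Lc_pow]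
      rw [smul_eq_C_mul, smul_eq_C_mul]
      push_cast
      simp only [C_mul, C_add, C_1, C2_eq]
      ring
    rw [TT, Finset.sum_congr rfl (fun a _ => step a), Finset.sum_add_distrib,
      ← Finset.mul_sum, ← Finset.mul_sum, ← Finset.mul_sum, ← Finset.mul_sum,
      show ∑ a, Lc (c a) (Lc (c a) P) = TT c P from rfl, he, hr]
    push_cast
    simp only [C_mul, C_add, C_1, C2_eq]
    rw [pow_succ]
    ring

end Ops4



section Ops5

variable {σ : Type} [Fintype σ] [DecidableEq σ]
variable {ι : Type} [Fintype ι]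

lemma TT_iter_C_mul (c : ι → σ → ℝ) (x : ℝ) (p : MvPolynomial σ ℝ) (k : ℕ) :
    (TT c)^[k] (C x * p) = C x * (TT c)^[k] p := by
  induction k generalizing p with
  | zero => simp
  | succ m ih =>
    rw [Function.iterate_succ_apply, Function.iterate_succ_apply, TT_C_mul, ih]

lemma TT_iter (c : ι → σ → ℝ) (P : MvPolynomial σ ℝ) (e r : ℝ)
    (he : TT c P = C e) (hr : ∑ a, (Lc (c a) P) ^ 2 = C r * P) (t : ℕ) :
    (TT c)^[t] (P ^ t) = C (∏ j ∈ Finset.range t, (((j:ℝ)+1) * ((j:ℝ)*r + e))) := by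
  induction t with
  | zero => simp
  | succ m ih =>
    rw [Function.iterate_succ_apply, TT_pow c P e r he hr, TT_iter_C_mul, ih,
      ← C_mul, Finset.prod_range_succ, mul_comm]

end Ops5

section ValGeneric

variable {σ : Type} [Fintype σ] [DecidableEq σ]
variable {ι : Type} [Fintype ι] [DecidableEq ι] {ι' : Type} [Fintype ι'] [DecidableEq ι']

lemma Bp_val (c : ι → σ → ℝ) (b : ι' → σ → ℝ) (ρ : ℝ)
    (h : ∀ β β', ∑ a, ipc (c a) (b β) * ipc (c a) (b β') = ρ * (if β = β' then 1 else 0))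
    (t : ℕ) :
    Bp (Qf c ^ t) (Qf b ^ t)
      = ∏ j ∈ Finset.range t, (((j:ℝ)+1) * ((j:ℝ) * (4*ρ) + 2 * (Fintype.card ι') * ρ)) := by
  have h1 : Bp (Qf c ^ t) (Qf b ^ t) = Bp (Qf c ^ t * 1) (Qf b ^ t) := by rw [mul_one]
  rw [h1, Bp_Qf_pow_peel, TT_iter c (Qf b) _ _ (TT_Qf c b ρ h) (sq_Lc_Qf c b ρ h) t,
    Bp_one_C]

end ValGeneric

noncomputable section Inst

variable {d : ℕ}

abbrev σd (d : ℕ) := Fin d × Fin 4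

/-- coefficient vectors of the component linear forms of ⟨w, x⟩ -/
def ccv (w : Fin d → Quaternion ℝ) : Fin 4 → σd d → ℝ :=
  fun β s => (star (eQ β) * (star (w s.1) * eQ s.2)).re

/-- delta family -/
def dd : σd d → σd d → ℝ := fun s s' => if s = s' then 1 else 0

def qip (u w : Fin d → Quaternion ℝ) : Quaternion ℝ := ∑ i, star (u i) * w i

def nn (w : Fin d → Quaternion ℝ) : ℝ := ∑ i, Quaternion.normSq (w i)

lemma gQ_sum {ι₀ : Type*} (T : Finset ι₀) (f : ι₀ → Quaternion ℝ) (α β : Fin 4) :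
    gQ (∑ i ∈ T, f i) α β = ∑ i ∈ T, gQ (f i) α β := by
  classical
  induction T using Finset.induction_on with
  | empty => simp [gQ]
  | insert _ _ hmem ih =>
    rename_i a T'
    rw [Finset.sum_insert hmem, Finset.sum_insert hmem, ← ih, gQ_add]

lemma key1 (u w : Fin d → Quaternion ℝ) (α β : Fin 4) :
    ipc (ccv u α) (ccv w β) = gQ (qip u w) α β := by
  rw [ipc, qip, gQ_sum, Fintype.sum_prod_type]
  apply Finset.sum_congr rfl
  intro i _
  have hfc : ∑ γ : Fin 4, ccv u α (i, γ) * ccv w β (i, γ)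
      = gQ (star (u i) * star (star (w i))) α β := factC α β (star (u i)) (star (w i))
  rw [star_star] at hfc
  exact hfc

lemma key2 (u w : Fin d → Quaternion ℝ) (β β' : Fin 4) :
    ∑ α, ipc (ccv u α) (ccv w β) * ipc (ccv u α) (ccv w β')
      = Quaternion.normSq (qip u w) * (if β = β' then 1 else 0) := by
  rw [Finset.sum_congr rfl (fun α _ => by rw [key1, key1])]
  exact factA (qip u w) β β'

lemma qip_self (w : Fin d → Quaternion ℝ) : qip w w = ((nn w : ℝ) : Quaternion ℝ) := by
  rw [qip, nn]
  rw [Finset.sum_congr rfl (fun i _ => Quaternion.star_mul_self (w i))]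
  exact (map_sum (algebraMap ℝ (Quaternion ℝ)) _ _).symm

lemma ipc_dd (s : σd d) (c : σd d → ℝ) : ipc (dd s) c = c s := by
  rw [ipc]
  rw [Finset.sum_congr rfl (fun s' _ => by
    rw [show dd s s' * c s' = (if s = s' then c s' else 0) from by
      rw [dd]; split <;> ring])]
  simp

lemma key3 (w : Fin d → Quaternion ℝ) (β β' : Fin 4) :
    ∑ s : σd d, ipc (dd s) (ccv w β) * ipc (dd s) (ccv w β')
      = nn w * (if β = β' then 1 else 0) := by
  rw [Finset.sum_congr rfl (fun s _ => by rw [ipc_dd, ipc_dd])]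
  have : ∑ s : σd d, ccv w β s * ccv w β' s = ipc (ccv w β) (ccv w β') := rfl
  rw [this, key1, qip_self, gQ_real]

lemma key4 (s₁ s₂ : σd d) :
    ∑ s : σd d, ipc (dd s) (dd s₁) * ipc (dd s) (dd s₂)
      = 1 * (if s₁ = s₂ then 1 else 0) := by
  rw [Finset.sum_congr rfl (fun s _ => by rw [ipc_dd, ipc_dd])]
  rw [one_mul]
  have hterm : ∀ s : σd d, dd s₁ s * dd s₂ s
      = (if s = s₁ then (if s₂ = s then (1:ℝ) else 0) else 0) := by
    intro s
    by_cases h1 : s = s₁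
    · rw [if_pos h1, dd, dd, if_pos h1.symm, one_mul]
    · rw [if_neg h1, dd, dd, if_neg (fun hh => h1 hh.symm), zero_mul]
  rw [Finset.sum_congr rfl (fun s _ => hterm s), Finset.sum_ite_eq']
  simp only [Finset.mem_univ, if_true]
  by_cases h : s₁ = s₂
  · rw [if_pos h, if_pos h.symm]
  · rw [if_neg h, if_neg (fun hh => h hh.symm)]

end Inst

noncomputable section Vals

variable {d : ℕ}

def kap (t : ℕ) : ℝ := ∏ j ∈ Finset.range t, (4*((j:ℝ)+1)*((j:ℝ)+2))

def bet (d t : ℕ) : ℝ := ∏ j ∈ Finset.range t, (((j:ℝ)+1)*(4*(j:ℝ) + 8*(d:ℝ)))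

lemma kap_pos (t : ℕ) : 0 < kap t := by
  apply Finset.prod_pos
  intro j _
  positivity

lemma bet_pos (t : ℕ) (hd : 1 ≤ d) : 0 < bet d t := by
  apply Finset.prod_pos
  intro j _
  have : (1:ℝ) ≤ (d:ℝ) := by exact_mod_cast hd
  nlinarith [Nat.cast_nonneg (α := ℝ) j]

/-- the polynomial attached to a tuple -/
def Kp (w : Fin d → Quaternion ℝ) (t : ℕ) : MvPolynomial (σd d) ℝ := Qf (ccv w) ^ t

/-- the norm polynomial -/
def Np (d t : ℕ) : MvPolynomial (σd d) ℝ := Qf (dd (d := d)) ^ t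

lemma prod_massage (x : ℝ) (t c4 : ℕ) (hc : (c4 : ℝ) = 4) :
    (∏ j ∈ Finset.range t, (((j:ℝ)+1) * ((j:ℝ) * (4 * x) + 2 * (c4 : ℝ) * x)))
      = kap t * x ^ t := by
  calc (∏ j ∈ Finset.range t, (((j:ℝ)+1) * ((j:ℝ) * (4 * x) + 2 * (c4 : ℝ) * x)))
      = ∏ j ∈ Finset.range t, ((4*((j:ℝ)+1)*((j:ℝ)+2)) * x) := by
        apply Finset.prod_congr rfl
        intro k _
        rw [hc]
        ring
    _ = (∏ j ∈ Finset.range t, (4*((j:ℝ)+1)*((j:ℝ)+2))) * ∏ _j ∈ Finset.range t, x :=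
        Finset.prod_mul_distrib
    _ = kap t * x ^ t := by rw [Finset.prod_const, Finset.card_range, kap]

lemma val_KK (u w : Fin d → Quaternion ℝ) (t : ℕ) :
    Bp (Kp u t) (Kp w t) = kap t * (Quaternion.normSq (qip u w)) ^ t := by
  rw [Kp, Kp, Bp_val (ccv u) (ccv w) _ (key2 u w) t,
    prod_massage _ t (Fintype.card (Fin 4)) (by simp)]

lemma val_NK (w : Fin d → Quaternion ℝ) (t : ℕ) :
    Bp (Np d t) (Kp w t) = kap t * (nn w) ^ t := by
  rw [Np, Kp, Bp_val (dd (d := d)) (ccv w) _ (key3 w) t,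
    prod_massage _ t (Fintype.card (Fin 4)) (by simp)]

lemma val_NN (t : ℕ) :
    Bp (Np d t) (Np d t) = bet d t := by
  rw [Np, Bp_val (dd (d := d)) (dd (d := d)) _ (key4 (d := d)) t, bet]
  apply Finset.prod_congr rfl
  intro j _
  have : ((Fintype.card (σd d) : ℝ)) = 4 * d := by
    simp [σd, Fintype.card_prod]
    ring
  rw [this]
  ring

end Vals




section Arith

lemma keyarith {d : ℕ} (hd : 1 ≤ d) (t : ℕ) :
    ((t:ℝ)+1) * bet d t = ((2*d+t-1).choose t : ℝ) * kap t := by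
  induction t with
  | zero => simp [bet, kap]
  | succ t ih =>
    have hidx : 2*d+(t+1)-1 = (2*d+t-1)+1 := by omega
    have habs0 := Nat.add_one_mul_choose_eq (2*d+t-1) t
    have hsucc : (2*d+t-1) + 1 = 2*d+t := by omega
    rw [hsucc] at habs0
    have habs : ((2*d+t : ℕ) : ℝ) * ((2*d+t-1).choose t : ℝ)
        = ((2*d+t).choose (t+1) : ℝ) * ((t:ℝ)+1) := by
      exact_mod_cast congrArg (Nat.cast (R := ℝ)) habs0
    have hidx2 : 2 * d + t - 1 + 1 = 2*d+t := by omega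
    rw [hidx, hidx2, bet, kap, Finset.prod_range_succ, Finset.prod_range_succ,
      ← bet, ← kap]
    push_cast
    push_cast at habs ih
    linear_combination ((↑t+2)*(4*↑t+8*↑d)) * ih + 4*((t:ℝ)+2)*(kap t)*habs

lemma quad_zero {A B : ℝ} (hA : 0 ≤ A) (h : ∀ x : ℝ, 0 ≤ A*x^2 + 2*B*x) : B = 0 := by
  rcases eq_or_lt_of_le hA with hA0 | hA0
  · have h1 := h 1
    have h2 := h (-1)
    rw [← hA0] at h1 h2
    nlinarith
  · have hx := h (-B/A)
    have : A * (-B/A)^2 + 2*B*(-B/A) = -(B^2/A) := by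
      field_simp
      ring
    rw [this] at hx
    have hB2 : B^2/A ≤ 0 := by linarith
    have : B^2 ≤ 0 := by
      by_contra hc
      push_neg at hc
      have := div_pos hc hA0
      linarith
    nlinarith

end Arith

section CS

variable {σ : Type} [Fintype σ] [DecidableEq σ]

lemma Bp_self_zero (E q : MvPolynomial σ ℝ) (hE : Bp E E = 0) : Bp E q = 0 := by
  apply quad_zero (Bp_nonneg q)
  intro x
  have hexp : Bp (E + x • q) (E + x • q) = Bp q q * x^2 + 2 * Bp E q * x := by
    rw [Bp_add_left, Bp_add_right, Bp_add_right, Bp_smul_left, Bp_smul_left,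
      Bp_smul_right, Bp_smul_right, hE, Bp_symm q E]
    ring
  rw [← hexp]
  exact Bp_nonneg _
end CS

/-- Equality in the quaternionic Welch–Sidelnikov inequality holds if and only if the
generalized Bessel identity holds. -/
theorem statement8 (d t n : ℕ) (hd : 1 ≤ d) (ht : 1 ≤ t) (hn : 1 ≤ n)
    (v : Fin n → (Fin d → Quaternion ℝ)) (hv : v ≠ 0) :
    (∑ j, ∑ k, (normSq (∑ i, star (v j i) * v k i)) ^ t
        = ((t + 1 : ℝ) / (Nat.choose (2 * d + t - 1) t : ℝ))
          * (∑ ℓ, (∑ i, normSq (v ℓ i)) ^ t) ^ 2)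
      ↔ (∀ x : Fin d → Quaternion ℝ,
          ∑ j, (normSq (∑ i, star (v j i) * x i)) ^ t
            = ((t + 1 : ℝ) / (Nat.choose (2 * d + t - 1) t : ℝ))
              * (∑ ℓ, (∑ i, normSq (v ℓ i)) ^ t) * (∑ i, normSq (x i)) ^ t) := by
  classical
  have hqip : ∀ u w : Fin d → Quaternion ℝ, (∑ i, star (u i) * w i) = qip u w :=
    fun _ _ => rfl
  have hnn : ∀ w : Fin d → Quaternion ℝ, (∑ i, Quaternion.normSq (w i)) = nn w :=
    fun _ => rfl
  simp only [hqip, hnn]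
  set c : ℝ := ((t + 1 : ℝ) / (Nat.choose (2 * d + t - 1) t : ℝ)) with hcdef
  set S : ℝ := ∑ ℓ, nn (v ℓ) ^ t with hSdef
  have hd2 : t ≤ 2*d + t - 1 := by omega
  have hch : (0:ℝ) < ((2*d+t-1).choose t : ℝ) := by exact_mod_cast Nat.choose_pos hd2
  have hka := keyarith hd t
  have hbp := bet_pos (d := d) t hd
  have hkp := kap_pos t
  have hcb : c * bet d t = kap t := by
    rw [hcdef]
    field_simp
    linarith [hka]
  constructor
  · -- forward direction
    intro h x
    set F : MvPolynomial (σd d) ℝ := ∑ j, Kp (v j) t with hF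
    have hFF : Bp F F = kap t * (c * S ^ 2) := by
      rw [hF, Bp_sum_left]
      have hrow : ∀ j : Fin n, Bp (Kp (v j) t) (∑ k, Kp (v k) t)
          = kap t * ∑ k, Quaternion.normSq (qip (v j) (v k)) ^ t := by
        intro j
        rw [Bp_sum_right, Finset.mul_sum]
        exact Finset.sum_congr rfl fun k _ => val_KK (v j) (v k) t
      rw [Finset.sum_congr rfl (fun j _ => hrow j), ← Finset.mul_sum, h]
    have hFN : Bp F (Np d t) = kap t * S := by
      rw [hF, Bp_sum_left, hSdef, Finset.mul_sum]
      apply Finset.sum_congr rfl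
      intro j _
      rw [Bp_symm, val_NK]
    set E : MvPolynomial (σd d) ℝ :=
      C (bet d t) * F + C (-(kap t * S)) * Np d t with hE
    have hEE : Bp E E = 0 := by
      rw [hE, Bp_add_left, Bp_add_right, Bp_add_right, Bp_C_mul_left, Bp_C_mul_left,
        Bp_C_mul_left, Bp_C_mul_left, Bp_C_mul_right, Bp_C_mul_right, Bp_C_mul_right,
        Bp_C_mul_right, hFF, hFN, val_NN, Bp_symm (Np d t) F, hFN]
      linear_combination (bet d t * kap t * S^2) * hcb
    have h0 : Bp E (Kp x t) = 0 := Bp_self_zero E _ hEE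
    rw [hE, Bp_add_left, Bp_C_mul_left, Bp_C_mul_left, hF, Bp_sum_left] at h0
    have hrow2 : ∑ j, Bp (Kp (v j) t) (Kp x t)
        = kap t * ∑ j, Quaternion.normSq (qip (v j) x) ^ t := by
      rw [Finset.mul_sum]
      exact Finset.sum_congr rfl fun j _ => val_KK (v j) x t
    rw [hrow2, val_NK] at h0
    have hne : (bet d t * kap t) ≠ 0 := by positivity
    apply mul_left_cancel₀ hne
    rw [show (bet d t * kap t) * (∑ j, Quaternion.normSq (qip (v j) x) ^ t)
        = bet d t * (kap t * ∑ j, Quaternion.normSq (qip (v j) x) ^ t) by ring]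
    linear_combination h0 + (-(kap t * S * nn x ^ t)) * hcb
  · -- backward direction
    intro h
    rw [Finset.sum_comm]
    rw [Finset.sum_congr rfl (fun k _ => h (v k)), ← Finset.mul_sum, ← hSdef]
    ring
end

section
/- Let d ≥ 1 and let v, q : Fin d → ℍ be d-tuples of quaternions. With (i_1, i_2, i_3, i_4) = (1, i, j, k) the quaternion units, the following identity holds: normSq( ∑_a star(v a) * (q a) ) = ∑_{a} normSq(q a) · normSq(v a) + ∑_{a < b} ∑_{r=1}^{4} 2 · re( q a * star(q b) * i_r ) · re( v a * star(v b) * i_r ). -/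
open Quaternion

lemma re_sum' {ι : Type*} (s : Finset ι) (x : ι → Quaternion ℝ) :
    (∑ a ∈ s, x a).re = ∑ a ∈ s, (x a).re :=
  map_sum (QuaternionAlgebra.reₗ (-1 : ℝ) 0 (-1)) x s

lemma pair_lem (p p' w w' : Quaternion ℝ) (u : Fin 4 → Quaternion ℝ)
    (hu : u = ![1, ⟨0, 1, 0, 0⟩, ⟨0, 0, 1, 0⟩, ⟨0, 0, 0, 1⟩]) :
    2 * ((star p * w) * star (star p' * w')).re
      = ∑ r : Fin 4, 2 * (w * star w' * u r).re * (p * star p' * u r).re := by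
  subst hu
  simp [Fin.sum_univ_four, Quaternion.re_mul, Quaternion.imI_mul, Quaternion.imJ_mul,
    Quaternion.imK_mul]
  ring

/-- Expansion of `|⟨v,q⟩|²` in terms of the real-valued polynomials
`normSq (q a)` and `re (q a * star (q b) * i_r)`. -/
theorem statement14 (d : ℕ) (hd : 1 ≤ d) (v q : Fin d → Quaternion ℝ)
    (u : Fin 4 → Quaternion ℝ)
    (hu : u = ![1, ⟨0, 1, 0, 0⟩, ⟨0, 0, 1, 0⟩, ⟨0, 0, 0, 1⟩]) :
    normSq (∑ a, star (v a) * q a)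
      = ∑ a, normSq (q a) * normSq (v a)
        + ∑ a, ∑ b ∈ Finset.Ioi a, ∑ r : Fin 4,
            2 * (q a * star (q b) * u r).re * (v a * star (v b) * u r).re := by
  set x : Fin d → Quaternion ℝ := fun a => star (v a) * q a with hx
  set g : Fin d → Fin d → ℝ := fun a b => (x a * star (x b)).re with hg
  have h0 : (normSq (∑ a, x a) : ℝ) = ∑ a, ∑ b, g a b := by
    have h2 := Quaternion.self_mul_star (∑ a, x a)
    have h1 : ((normSq (∑ a, x a) : ℝ) : Quaternion ℝ).re = normSq (∑ a, x a) := by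
      simp
    rw [← h1, ← h2, star_sum, Finset.sum_mul_sum, re_sum']
    exact Finset.sum_congr rfl fun a _ => re_sum' _ _
  -- symmetry of g
  have hsym : ∀ a b, g b a = g a b := by
    intro a b
    have : x b * star (x a) = star (x a * star (x b)) := by simp [mul_comm]
    rw [hg]
    simp only []
    rw [this, Quaternion.re_star]
  -- diagonal
  have hdiag : ∀ a, g a a = normSq (q a) * normSq (v a) := by
    intro a
    have : x a * star (x a) = ((normSq (x a) : ℝ) : Quaternion ℝ) :=
      Quaternion.self_mul_star _
    rw [hg]; simp only []
    rw [this]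
    simp [hx, mul_comm]
  -- off-diagonal split
  have hsplit : ∑ a, ∑ b, g a b
      = ∑ a, g a a + ∑ a, ∑ b ∈ Finset.Ioi a, (g b a + g a b) := by
    rw [Finset.sum_sum_Ioi_add_eq_sum_sum_off_diag (f := fun b a => g b a)]
    rw [← Finset.sum_add_distrib]
    refine Finset.sum_congr rfl fun a _ => ?_
    rw [show (∑ b, g a b) = ∑ b, g b a from
        Finset.sum_congr rfl fun b _ => (hsym a b).symm,
      ← Finset.add_sum_erase _ (fun j => g j a) (Finset.mem_univ a)]
    congr 1
    refine Finset.sum_congr ?_ fun _ _ => rfl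
    ext b; simp
  rw [h0, hsplit]
  congr 1
  · exact Finset.sum_congr rfl fun a _ => hdiag a
  refine Finset.sum_congr rfl fun a _ => Finset.sum_congr rfl fun b _ => ?_
  rw [hsym a b, ← two_mul]
  exact pair_lem (v a) (v b) (q a) (q b) u hu
end

section
/- Let d ≥ 1. The real span of the set of functions { (fun q : Fin d → ℍ => normSq( ∑_a star(v a) * (q a) )) : v ∈ Fin d → ℍ }, as a subspace of the real vector space of functions (Fin d → ℍ) → ℝ, is finite-dimensional of dimension d·(2d − 1). -/
open Quaternion

namespace Statement15Aux

open Finset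

/-- The four quaternion units. -/
def uq : Fin 4 → Quaternion ℝ
  | 0 => ⟨1,0,0,0⟩
  | 1 => ⟨0,1,0,0⟩
  | 2 => ⟨0,0,1,0⟩
  | 3 => ⟨0,0,0,1⟩

/-- The four real components of a quaternion. -/
def qcomp : Fin 4 → Quaternion ℝ → ℝ
  | 0 => fun x => x.re
  | 1 => fun x => x.imI
  | 2 => fun x => x.imJ
  | 3 => fun x => x.imK

lemma uq0 : (uq 0).re = 1 ∧ (uq 0).imI = 0 ∧ (uq 0).imJ = 0 ∧ (uq 0).imK = 0 := ⟨rfl, rfl, rfl, rfl⟩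
lemma uq1 : (uq 1).re = 0 ∧ (uq 1).imI = 1 ∧ (uq 1).imJ = 0 ∧ (uq 1).imK = 0 := ⟨rfl, rfl, rfl, rfl⟩
lemma uq2 : (uq 2).re = 0 ∧ (uq 2).imI = 0 ∧ (uq 2).imJ = 1 ∧ (uq 2).imK = 0 := ⟨rfl, rfl, rfl, rfl⟩
lemma uq3 : (uq 3).re = 0 ∧ (uq 3).imI = 0 ∧ (uq 3).imJ = 0 ∧ (uq 3).imK = 1 := ⟨rfl, rfl, rfl, rfl⟩
lemma uq2' : (uq ⟨2, by omega⟩).re = 0 ∧ (uq ⟨2, by omega⟩).imI = 0 ∧ (uq ⟨2, by omega⟩).imJ = 1 ∧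
    (uq ⟨2, by omega⟩).imK = 0 := ⟨rfl, rfl, rfl, rfl⟩
lemma uq3' : (uq ⟨3, by omega⟩).re = 0 ∧ (uq ⟨3, by omega⟩).imI = 0 ∧ (uq ⟨3, by omega⟩).imJ = 0 ∧
    (uq ⟨3, by omega⟩).imK = 1 := ⟨rfl, rfl, rfl, rfl⟩

lemma normSq_uq (c : Fin 4) : normSq (uq c) = 1 := by
  fin_cases c <;> (rw [Quaternion.normSq_def']; norm_num [uq])

/-- The spanning family: diagonal moduli plus four cross-term functionals per ordered pair. -/
noncomputable def B (d : ℕ) : (Fin d ⊕ ({p : Fin d × Fin d // p.1 < p.2} × Fin 4)) →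
    (Fin d → Quaternion ℝ) → ℝ
  | .inl a => fun q => normSq (q a)
  | .inr pc => fun q => (q pc.1.1.1 * star (q pc.1.1.2) * uq pc.2).re

@[simp] lemma B_inl (d : ℕ) (a : Fin d) : B d (.inl a) = fun q => normSq (q a) := rfl
@[simp] lemma B_inr (d : ℕ) (pc : {p : Fin d × Fin d // p.1 < p.2} × Fin 4) :
    B d (.inr pc) = fun q => (q pc.1.1.1 * star (q pc.1.1.2) * uq pc.2).re := rfl

lemma re_sum {α : Type*} (s : Finset α) (f : α → Quaternion ℝ) :
    (∑ a ∈ s, f a).re = ∑ a ∈ s, (f a).re :=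
  map_sum (show Quaternion ℝ →ₗ[ℝ] ℝ from QuaternionAlgebra.reₗ _ _ _) f s

lemma key1 (x y : Quaternion ℝ) : (star x * y * (star y * x)).re = normSq x * normSq y := by
  simp only [Quaternion.normSq_def', Quaternion.re_mul, Quaternion.imI_mul, Quaternion.imJ_mul,
    Quaternion.imK_mul, Quaternion.re_star, Quaternion.imI_star, Quaternion.imJ_star,
    Quaternion.imK_star]
  ring

lemma key2 (x y p r : Quaternion ℝ) :
    (star x * p * (star r * y)).re + (star y * r * (star p * x)).re =
      ∑ c : Fin 4, 2 * qcomp c (y * star x) * (p * star r * uq c).re := by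
  rw [Fin.sum_univ_four]
  simp only [uq0, uq1, uq2, uq3, qcomp, Quaternion.re_mul, Quaternion.imI_mul, Quaternion.imJ_mul,
    Quaternion.imK_mul, Quaternion.re_star, Quaternion.imI_star, Quaternion.imJ_star,
    Quaternion.imK_star]
  ring

lemma key3 (x y u : Quaternion ℝ) :
    normSq (x + star u * y) = normSq x + normSq u * normSq y + 2 * (x * star y * u).re := by
  simp only [Quaternion.normSq_def', Quaternion.re_mul, Quaternion.imI_mul, Quaternion.imJ_mul,
    Quaternion.imK_mul, Quaternion.re_star, Quaternion.imI_star, Quaternion.imJ_star,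
    Quaternion.imK_star, Quaternion.re_add, Quaternion.imI_add, Quaternion.imJ_add,
    Quaternion.imK_add]
  ring

lemma pair_split {M : Type*} [AddCommMonoid M] {n : ℕ} (F : Fin n × Fin n → M) :
    ∑ p : Fin n × Fin n, F p =
      (∑ a, F (a, a)) +
      ∑ p : {p : Fin n × Fin n // p.1 < p.2}, (F p.1 + F (p.1.2, p.1.1)) := by
  classical
  have hsub : ∑ p : {p : Fin n × Fin n // p.1 < p.2}, (F p.1 + F (p.1.2, p.1.1))
      = ∑ p ∈ univ.filter (fun p : Fin n × Fin n => p.1 < p.2), (F p + F (p.2, p.1)) := by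
    exact (Finset.sum_subtype (p := fun p : Fin n × Fin n => p.1 < p.2)
      (univ.filter (fun p : Fin n × Fin n => p.1 < p.2))
      (fun x => by simp) (fun p => F p + F (p.2, p.1))).symm
  rw [hsub, Finset.sum_add_distrib]
  have hswap : ∑ p ∈ univ.filter (fun p : Fin n × Fin n => p.1 < p.2), F (p.2, p.1)
      = ∑ p ∈ univ.filter (fun p : Fin n × Fin n => p.2 < p.1), F p := by
    apply Finset.sum_nbij' (i := fun p => (p.2, p.1)) (j := fun p => (p.2, p.1)) <;> simp
  rw [hswap]
  have hdiag : (∑ a, F (a, a)) = ∑ p ∈ univ.filter (fun p : Fin n × Fin n => p.1 = p.2), F p := by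
    rw [Finset.sum_filter, Fintype.sum_prod_type]
    simp
  rw [hdiag]
  rw [← Finset.sum_filter_add_sum_filter_not univ (fun p : Fin n × Fin n => p.1 = p.2) F]
  congr 1
  rw [← Finset.sum_filter_add_sum_filter_not (univ.filter (fun p : Fin n × Fin n => ¬ p.1 = p.2))
    (fun p => p.1 < p.2) F, Finset.filter_filter, Finset.filter_filter]
  congr 1
  · apply Finset.sum_congr _ (fun _ _ => rfl)
    ext p; simp only [mem_filter, mem_univ, true_and]
    exact ⟨fun h => h.2, fun h => ⟨ne_of_lt h, h⟩⟩
  · apply Finset.sum_congr _ (fun _ _ => rfl)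
    ext p; simp only [mem_filter, mem_univ, true_and]
    constructor
    · rintro ⟨h1, h2⟩; exact lt_of_le_of_ne (not_lt.mp h2) (Ne.symm h1)
    · intro h; exact ⟨(ne_of_lt h).symm, not_lt.mpr h.le⟩

lemma expand0 (d : ℕ) (v q : Fin d → Quaternion ℝ) :
    normSq (∑ a, star (v a) * q a)
      = ∑ p : Fin d × Fin d, (star (v p.1) * q p.1 * (star (q p.2) * v p.2)).re := by
  rw [Quaternion.normSq_def, star_sum, Finset.sum_mul_sum, re_sum, Fintype.sum_prod_type]
  simp only [re_sum, star_mul, star_star]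

/-- Full expansion of a generator in terms of the family `B`. -/
lemma expand (d : ℕ) (v q : Fin d → Quaternion ℝ) :
    normSq (∑ a, star (v a) * q a)
      = (∑ a, normSq (v a) * normSq (q a)) +
        ∑ p : {p : Fin d × Fin d // p.1 < p.2}, ∑ c : Fin 4,
          2 * qcomp c (v p.1.2 * star (v p.1.1)) * (q p.1.1 * star (q p.1.2) * uq c).re := by
  rw [expand0, pair_split (fun p : Fin d × Fin d =>
    (star (v p.1) * q p.1 * (star (q p.2) * v p.2)).re)]
  congr 1
  · exact Finset.sum_congr rfl fun a _ => key1 (v a) (q a)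
  · exact Finset.sum_congr rfl fun p _ => key2 (v p.1.1) (v p.1.2) (q p.1.1) (q p.1.2)

lemma sum_single_mul {d : ℕ} (a : Fin d) (u : Quaternion ℝ) (q : Fin d → Quaternion ℝ) :
    ∑ x, star ((Pi.single a u : Fin d → Quaternion ℝ) x) * q x = star u * q a := by
  rw [Finset.sum_eq_single a (fun b _ hb => by
    rw [Pi.single_eq_of_ne hb, star_zero, zero_mul]) (by simp)]
  rw [Pi.single_eq_same]

section SpanEq

variable (d : ℕ)

/-- The generating set in the statement. -/
def S : Set ((Fin d → Quaternion ℝ) → ℝ) :=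
  {f | ∃ v : Fin d → Quaternion ℝ, f = fun q => normSq (∑ a, star (v a) * q a)}

lemma gen_mem_span_B (v : Fin d → Quaternion ℝ) :
    (fun q => normSq (∑ a, star (v a) * q a)) ∈ Submodule.span ℝ (Set.range (B d)) := by
  have hfun : (fun q => normSq (∑ a, star (v a) * q a))
      = (∑ a, normSq (v a) • B d (.inl a)) +
        ∑ pc : {p : Fin d × Fin d // p.1 < p.2} × Fin 4,
          (2 * qcomp pc.2 (v pc.1.1.2 * star (v pc.1.1.1))) • B d (.inr pc) := by
    funext q
    rw [expand]
    simp only [Pi.add_apply, Finset.sum_apply, Pi.smul_apply, B_inl, B_inr, smul_eq_mul,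
      Fintype.sum_prod_type]
  rw [hfun]
  apply Submodule.add_mem
  · exact Submodule.sum_mem _ fun a _ =>
      Submodule.smul_mem _ _ (Submodule.subset_span ⟨.inl a, rfl⟩)
  · exact Submodule.sum_mem _ fun pc _ =>
      Submodule.smul_mem _ _ (Submodule.subset_span ⟨.inr pc, rfl⟩)

lemma B_inl_mem_span_S (a : Fin d) : B d (.inl a) ∈ Submodule.span ℝ (S d) := by
  apply Submodule.subset_span
  refine ⟨Pi.single a 1, ?_⟩
  funext q
  rw [B_inl, sum_single_mul, star_one, one_mul]

lemma B_inr_mem_span_S (pc : {p : Fin d × Fin d // p.1 < p.2} × Fin 4) :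
    B d (.inr pc) ∈ Submodule.span ℝ (S d) := by
  obtain ⟨⟨⟨a, b⟩, hab⟩, c⟩ := pc
  have hne : a ≠ b := ne_of_lt hab
  set v : Fin d → Quaternion ℝ := Pi.single a 1 + Pi.single b (uq c) with hv
  have hsum : ∀ q : Fin d → Quaternion ℝ,
      ∑ x, star (v x) * q x = q a + star (uq c) * q b := by
    intro q
    have : ∀ x, star (v x) * q x
        = star ((Pi.single a 1 : Fin d → Quaternion ℝ) x) * q x
          + star ((Pi.single b (uq c) : Fin d → Quaternion ℝ) x) * q x := by
      intro x; rw [hv, Pi.add_apply, star_add, add_mul]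
    rw [Finset.sum_congr rfl fun x _ => this x, Finset.sum_add_distrib,
      sum_single_mul, sum_single_mul, star_one, one_mul]
  have hgen : (fun q : Fin d → Quaternion ℝ => normSq (∑ x, star (v x) * q x))
      ∈ Submodule.span ℝ (S d) := Submodule.subset_span ⟨v, rfl⟩
  have hkey : B d (.inr (⟨(a, b), hab⟩, c))
      = (1/2 : ℝ) • ((fun q : Fin d → Quaternion ℝ => normSq (∑ x, star (v x) * q x))
          - B d (.inl a) - B d (.inl b)) := by
    funext q
    simp only [B_inr, B_inl, Pi.smul_apply, Pi.sub_apply, smul_eq_mul]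
    rw [hsum q, key3, normSq_uq]
    ring
  rw [hkey]
  exact Submodule.smul_mem _ _ (Submodule.sub_mem _ (Submodule.sub_mem _ hgen
    (B_inl_mem_span_S d a)) (B_inl_mem_span_S d b))

lemma span_eq : Submodule.span ℝ (S d) = Submodule.span ℝ (Set.range (B d)) := by
  apply le_antisymm
  · rw [Submodule.span_le]
    rintro f ⟨v, rfl⟩
    exact gen_mem_span_B d v
  · rw [Submodule.span_le]
    rintro f ⟨i, rfl⟩
    cases i with
    | inl a => exact B_inl_mem_span_S d a
    | inr pc => exact B_inr_mem_span_S d pc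

end SpanEq

lemma B_indep (d : ℕ) : LinearIndependent ℝ (B d) := by
  rw [Fintype.linearIndependent_iff]
  intro g hg
  have hev : ∀ q : Fin d → Quaternion ℝ, ∑ i, g i * B d i q = 0 := by
    intro q
    have := congrFun hg q
    simpa [Finset.sum_apply] using this
  -- step 1: diagonal coefficients vanish
  have hα : ∀ a : Fin d, g (.inl a) = 0 := by
    intro a
    have h := hev (Pi.single a 1)
    rw [Fintype.sum_sum_type] at h
    have e2 : ∀ x : {p : Fin d × Fin d // p.1 < p.2} × Fin 4,
        g (.inr x) * B d (.inr x) (Pi.single a 1) = 0 := by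
      rintro ⟨⟨⟨x, y⟩, hxy⟩, c⟩
      simp only [B_inr]
      rcases eq_or_ne x a with rfl | hx
      · rw [Pi.single_eq_of_ne (ne_of_gt hxy)]
        simp
      · rw [Pi.single_eq_of_ne hx]
        simp
    rw [Finset.sum_congr rfl fun x _ => e2 x, Finset.sum_const_zero, add_zero] at h
    have e1 : ∀ a' : Fin d, g (.inl a') * B d (.inl a') (Pi.single a 1)
        = if a' = a then g (.inl a') else 0 := by
      intro a'
      simp only [B_inl, Pi.single_apply, apply_ite normSq, map_one, map_zero]
      split <;> simp
    rw [Finset.sum_congr rfl fun a' _ => e1 a', Finset.sum_ite_eq' univ a] at h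
    simpa using h
  -- step 2: cross coefficients vanish
  have hβ : ∀ (p : {p : Fin d × Fin d // p.1 < p.2}) (c : Fin 4), g (.inr (p, c)) = 0 := by
    rintro ⟨⟨x, y⟩, hxy⟩ c
    have hne : x ≠ y := ne_of_lt hxy
    set q : Fin d → Quaternion ℝ := Pi.single x 1 + Pi.single y (star (uq c)) with hq
    have hq0 : ∀ t, t ≠ x → t ≠ y → q t = 0 := by
      intro t h1 h2
      rw [hq, Pi.add_apply, Pi.single_eq_of_ne h1, Pi.single_eq_of_ne h2, add_zero]
    have hqx : q x = 1 := by
      rw [hq, Pi.add_apply, Pi.single_eq_same, Pi.single_eq_of_ne hne, add_zero]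
    have hqy : q y = star (uq c) := by
      rw [hq, Pi.add_apply, Pi.single_eq_of_ne (Ne.symm hne), Pi.single_eq_same, zero_add]
    have h := hev q
    rw [Fintype.sum_sum_type, Fintype.sum_prod_type] at h
    simp only [hα, zero_mul, Finset.sum_const_zero, zero_add] at h
    rw [Finset.sum_eq_single (⟨(x, y), hxy⟩ : {p : Fin d × Fin d // p.1 < p.2})] at h
    · simp only [B_inr, hqx, hqy, star_star, one_mul] at h
      rw [Fin.sum_univ_four] at h
      fin_cases c <;> (norm_num [uq0, uq1, uq2, uq3, uq2', uq3', Quaternion.re_mul] at h; exact h)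
    · rintro ⟨⟨x', y'⟩, hxy'⟩ - hnep
      have hzero : q x' = 0 ∨ q y' = 0 := by
        rcases eq_or_ne x' x with rfl | hx'
        · have hy' : y' ≠ y := by
            intro hc
            exact hnep (by simp [hc])
          exact Or.inr (hq0 y' (ne_of_gt hxy') hy')
        · rcases eq_or_ne x' y with rfl | hx''
          · exact Or.inr (hq0 y' (ne_of_gt (lt_trans hxy hxy')) (ne_of_gt hxy'))
          · exact Or.inl (hq0 x' hx' hx'')
      rcases hzero with hz | hz <;>
      · simp only [B_inr]
        rw [hz]
        simp
    · intro hmem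
      exact absurd (Finset.mem_univ _) hmem
  rintro (a | ⟨p, c⟩)
  · exact hα a
  · exact hβ p c

/-- Counting the index set. -/
def pairsEquiv (d : ℕ) : {p : Fin d × Fin d // p.1 < p.2} ≃ Σ b : Fin d, Fin b.1 where
  toFun p := ⟨p.1.2, ⟨p.1.1.1, p.2⟩⟩
  invFun x := ⟨(⟨x.2.1, lt_trans x.2.2 x.1.2⟩, x.1), x.2.2⟩
  left_inv := by rintro ⟨⟨a, b⟩, h⟩; rfl
  right_inv := by rintro ⟨b, a⟩; rfl

lemma card_pairs (d : ℕ) :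
    Fintype.card {p : Fin d × Fin d // p.1 < p.2} * 2 = d * (d - 1) := by
  rw [Fintype.card_congr (pairsEquiv d), Fintype.card_sigma]
  simp only [Fintype.card_fin]
  rw [Fin.sum_univ_eq_sum_range (fun i => i) d]
  exact Finset.sum_range_id_mul_two d

end Statement15Aux

open Statement15Aux in
/-- The space `Hom_{ℍ^d}(1,1) = span_ℝ { |⟨v,·⟩|² : v ∈ ℍ^d }` of real-valued functions on
`ℍ^d` is finite-dimensional of dimension `d(2d-1)`. -/
theorem statement15 (d : ℕ) (hd : 1 ≤ d) :
    FiniteDimensional ℝ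
      ↥(Submodule.span ℝ
        {f : (Fin d → Quaternion ℝ) → ℝ |
          ∃ v : Fin d → Quaternion ℝ, f = fun q => normSq (∑ a, star (v a) * q a)})
    ∧ Module.finrank ℝ
      ↥(Submodule.span ℝ
        {f : (Fin d → Quaternion ℝ) → ℝ |
          ∃ v : Fin d → Quaternion ℝ, f = fun q => normSq (∑ a, star (v a) * q a)})
      = d * (2 * d - 1) := by
  have hS : {f : (Fin d → Quaternion ℝ) → ℝ |
      ∃ v : Fin d → Quaternion ℝ, f = fun q => normSq (∑ a, star (v a) * q a)} = S d := rfl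
  rw [hS, span_eq d]
  constructor
  · exact FiniteDimensional.span_of_finite ℝ (Set.finite_range (B d))
  · rw [finrank_span_eq_card (B_indep d)]
    rw [Fintype.card_sum, Fintype.card_prod, Fintype.card_fin, Fintype.card_fin]
    have h2 := card_pairs d
    obtain ⟨e, rfl⟩ : ∃ e, d = e + 1 := ⟨d - 1, (Nat.succ_pred_eq_of_pos hd).symm⟩
    simp only [Nat.add_sub_cancel] at h2
    have h3 : 2 * (e + 1) - 1 = 2 * e + 1 := by omega
    have h4 : (e + 1) * (2 * e + 1)
        = (e + 1) + 2 * (Fintype.card {p : Fin (e+1) × Fin (e+1) // p.1 < p.2} * 2) := by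
      rw [h2]; ring
    rw [h3, h4]
    omega
end

section
/- Let d ≥ 1, t ≥ 1 and v : Fin d → ℍ. Define f : (Fin d → ℍ) → ℝ by f(x) := ( normSq( ∑_a star(v a) * (x a) ) )^t, and define the Laplacian of f at x as Δf(x) := ∑_{a} ∑_{r=1}^{4} fderiv ℝ (fun y => fderiv ℝ f y (Pi.single a i_r)) x (Pi.single a i_r), where (i_1,i_2,i_3,i_4) = (1,i,j,k). Then for all x: Δf(x) = 2t(2t+2) · ( ∑_a normSq(v a) ) · ( normSq( ∑_a star(v a) * (x a) ) )^{t−1}. -/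
open Quaternion RealInnerProductSpace

noncomputable def Lmap (d : ℕ) (v : Fin d → Quaternion ℝ) :
    (Fin d → Quaternion ℝ) →L[ℝ] Quaternion ℝ :=
  LinearMap.toContinuousLinearMap
    { toFun := fun x => ∑ a, star (v a) * x a
      map_add' := by intro x y; simp [mul_add, Finset.sum_add_distrib]
      map_smul' := by intro c x; simp [Finset.smul_sum, mul_smul_comm] }

def qI : Quaternion ℝ := ⟨0,1,0,0⟩
def qJ : Quaternion ℝ := ⟨0,0,1,0⟩
def qK : Quaternion ℝ := ⟨0,0,0,1⟩
@[simp] lemma qI_re : qI.re = 0 := rfl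
@[simp] lemma qI_imI : qI.imI = 1 := rfl
@[simp] lemma qI_imJ : qI.imJ = 0 := rfl
@[simp] lemma qI_imK : qI.imK = 0 := rfl
@[simp] lemma qJ_re : qJ.re = 0 := rfl
@[simp] lemma qJ_imI : qJ.imI = 0 := rfl
@[simp] lemma qJ_imJ : qJ.imJ = 1 := rfl
@[simp] lemma qJ_imK : qJ.imK = 0 := rfl
@[simp] lemma qK_re : qK.re = 0 := rfl
@[simp] lemma qK_imI : qK.imI = 0 := rfl
@[simp] lemma qK_imJ : qK.imJ = 0 := rfl
@[simp] lemma qK_imK : qK.imK = 1 := rfl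

lemma Lmap_apply {d : ℕ} (v x : Fin d → Quaternion ℝ) :
    Lmap d v x = ∑ a, star (v a) * x a := rfl

lemma Lmap_single {d : ℕ} (v : Fin d → Quaternion ℝ) (a : Fin d) (q : Quaternion ℝ) :
    Lmap d v (Pi.single a q) = star (v a) * q := by
  simp [Lmap_apply, Pi.single_apply, mul_ite, Finset.sum_ite_eq']

set_option maxHeartbeats 1000000 in
lemma quatQ1 (q w : Quaternion ℝ) :
    (⟪q, star w * (1:Quaternion ℝ)⟫)^2 + (⟪q, star w * qI⟫)^2
      + (⟪q, star w * qJ⟫)^2 + (⟪q, star w * qK⟫)^2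
      = normSq w * normSq q := by
  simp only [Quaternion.inner_def, Quaternion.normSq_def', star_mul, star_star,
    Quaternion.re_mul, Quaternion.imI_mul, Quaternion.imJ_mul, Quaternion.imK_mul,
    Quaternion.re_star, Quaternion.imI_star, Quaternion.imJ_star, Quaternion.imK_star,
    Quaternion.re_one, Quaternion.imI_one, Quaternion.imJ_one, Quaternion.imK_one,
    qI_re, qI_imI, qI_imJ, qI_imK, qJ_re, qJ_imI, qJ_imJ, qJ_imK, qK_re, qK_imI, qK_imJ, qK_imK]
  ring

lemma nsqI : normSq qI = 1 := by
  simp [Quaternion.normSq_def']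
lemma nsqJ : normSq qJ = 1 := by
  simp [Quaternion.normSq_def']
lemma nsqK : normSq qK = 1 := by
  simp [Quaternion.normSq_def']

lemma step1 {d : ℕ} (t : ℕ) (v : Fin d → Quaternion ℝ) (y : Fin d → Quaternion ℝ) :
    HasFDerivAt (fun y => (normSq (Lmap d v y)) ^ t)
      (((t : ℝ) * normSq (Lmap d v y) ^ (t-1) * 2) •
        ((innerSL ℝ (Lmap d v y)).comp (Lmap d v))) y := by
  have h1 : HasFDerivAt (Lmap d v) (Lmap d v) y := (Lmap d v).hasFDerivAt
  have h2 := (hasDerivAt_pow t _).comp_hasFDerivAt y (h1.inner ℝ h1)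
  simp only [Quaternion.inner_self] at h2
  refine HasFDerivAt.congr_fderiv h2 ?_
  refine ContinuousLinearMap.ext fun w => ?_
  simp only [ContinuousLinearMap.smul_apply, ContinuousLinearMap.comp_apply,
    ContinuousLinearMap.prod_apply, fderivInnerCLM_apply, innerSL_apply_apply,
    smul_eq_mul, ← Quaternion.inner_self]
  rw [real_inner_comm (Lmap d v w)]
  ring

lemma step2 {d : ℕ} (t : ℕ) (v : Fin d → Quaternion ℝ) (x w : Fin d → Quaternion ℝ)
    (c : Quaternion ℝ) (hc : Lmap d v w = c) :
    fderiv ℝ (fun y => (t : ℝ) * normSq (Lmap d v y) ^ (t-1) * 2 * ⟪Lmap d v y, c⟫) x w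
      = 2*(t:ℝ) * normSq (Lmap d v x) ^ (t-1) * ⟪c, c⟫
        + 4*(t:ℝ)*((t-1 : ℕ):ℝ) * normSq (Lmap d v x) ^ (t-1-1) * ⟪Lmap d v x, c⟫^2 := by
  have h1 : HasFDerivAt (Lmap d v) (Lmap d v) x := (Lmap d v).hasFDerivAt
  have h3 : HasFDerivAt (fun y => ⟪Lmap d v y, c⟫)
      ((fderivInnerCLM ℝ (Lmap d v x, c)).comp ((Lmap d v).prod 0)) x :=
    h1.inner ℝ (hasFDerivAt_const c x)
  have hp := ((step1 (t-1) v x).const_mul (t:ℝ)).mul_const (2:ℝ)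
  have hmul := hp.fun_mul h3
  rw [hmul.fderiv]
  simp only [ContinuousLinearMap.add_apply, ContinuousLinearMap.smul_apply,
    ContinuousLinearMap.comp_apply, ContinuousLinearMap.prod_apply,
    ContinuousLinearMap.zero_apply, fderivInnerCLM_apply, innerSL_apply_apply,
    smul_eq_mul, hc, inner_zero_right, add_zero]
  ring

lemma pow_fix (n : ℕ) (g : ℝ) : (n:ℝ) * g^(n-1) * g = (n:ℝ) * g^n := by
  cases n with
  | zero => simp
  | succ m => simp [pow_succ]; ring

set_option maxHeartbeats 4000000 in
/-- The Laplacian of the plane wave `x ↦ |⟨v,x⟩|^{2t}` on `ℍ^d` equals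
`2t(2t+2) ‖v‖² |⟨v,x⟩|^{2(t-1)}`. -/
theorem statement17 (d t : ℕ) (hd : 1 ≤ d) (ht : 1 ≤ t) (v : Fin d → Quaternion ℝ)
    (u : Fin 4 → Quaternion ℝ)
    (hu : u = ![1, ⟨0, 1, 0, 0⟩, ⟨0, 0, 1, 0⟩, ⟨0, 0, 0, 1⟩])
    (f : (Fin d → Quaternion ℝ) → ℝ)
    (hf : f = fun x => (normSq (∑ a, star (v a) * x a)) ^ t) :
    ∀ x : Fin d → Quaternion ℝ,
      ∑ a, ∑ r : Fin 4,
          fderiv ℝ (fun y : Fin d → Quaternion ℝ => fderiv ℝ f y (Pi.single a (u r))) x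
            (Pi.single a (u r))
        = (2 * t * (2 * t + 2) : ℝ) * (∑ a, normSq (v a))
            * (normSq (∑ a, star (v a) * x a)) ^ (t - 1) := by
  subst hu hf
  intro x
  have hfd : (fderiv ℝ (fun x : Fin d → Quaternion ℝ => (normSq (∑ a, star (v a) * x a)) ^ t))
      = fun y => (((t : ℝ) * normSq (Lmap d v y) ^ (t-1) * 2) •
        ((innerSL ℝ (Lmap d v y)).comp (Lmap d v))) :=
    funext fun y => (step1 t v y).fderiv
  have key : ∀ a : Fin d,
      (∑ r : Fin 4,
        fderiv ℝ (fun y : Fin d → Quaternion ℝ =>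
            fderiv ℝ (fun x : Fin d → Quaternion ℝ => (normSq (∑ a, star (v a) * x a)) ^ t) y
              (Pi.single a (![1, ⟨0,1,0,0⟩, ⟨0,0,1,0⟩, ⟨0,0,0,1⟩] r))) x
          (Pi.single a (![1, ⟨0,1,0,0⟩, ⟨0,0,1,0⟩, ⟨0,0,0,1⟩] r)))
      = (2 * t * (2 * t + 2) : ℝ) * normSq (v a) * (normSq (Lmap d v x)) ^ (t - 1) := by
    intro a
    rw [show (![1, ⟨0,1,0,0⟩, ⟨0,0,1,0⟩, ⟨0,0,0,1⟩] : Fin 4 → Quaternion ℝ) = ![1, qI, qJ, qK] from rfl]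
    rw [Fin.sum_univ_four]
    simp only [hfd, Matrix.cons_val_zero, Matrix.cons_val_one, Matrix.head_cons,
      Matrix.cons_val_two, Matrix.tail_cons, Matrix.cons_val_three,
      ContinuousLinearMap.smul_apply, ContinuousLinearMap.comp_apply, innerSL_apply_apply,
      smul_eq_mul, Lmap_single]
    rw [step2 t v x _ _ (Lmap_single v a 1),
      step2 t v x _ _ (Lmap_single v a qI),
      step2 t v x _ _ (Lmap_single v a qJ),
      step2 t v x _ _ (Lmap_single v a qK)]
    have hQ1 := quatQ1 (Lmap d v x) (v a)
    simp only [Quaternion.inner_self, map_mul, Quaternion.normSq_star, map_one,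
      nsqI, nsqJ, nsqK, mul_one] at hQ1 ⊢
    obtain ⟨s, rfl⟩ : ∃ s, t = s + 1 := ⟨t - 1, (Nat.succ_pred_eq_of_pos ht).symm⟩
    cases s with
    | zero => push_cast; simp; linarith [hQ1]
    | succ m =>
      simp only [Nat.add_sub_cancel]
      push_cast
      linear_combination (4*((m:ℝ)+2)*((m:ℝ)+1) * normSq (Lmap d v x)^m) * hQ1
  rw [Finset.sum_congr rfl (fun a _ => key a), ← Finset.sum_mul, ← Finset.mul_sum,
    ← Lmap_apply]
end

section
/- Let d ≥ 1 and t ≥ 1, and let H be the real span, inside the real vector space of functions (Fin d → ℍ) → ℝ, of the set { (fun z => (normSq ∑_a star(v a) * (z a))^t) : v ∈ Fin d → ℍ }. For w : Fin d → ℍ let K_w ∈ H be the function z ↦ ( normSq( ∑_a star(z a) * (w a) ) )^t. Then there exists exactly one symmetric positive-definite bilinear form B : H → H → ℝ such that for every w : Fin d → ℍ and every f ∈ H, B (K_w) f = f(w). -/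
open Quaternion

namespace Statement18Aux

noncomputable section

def kk (d t : ℕ) (v : Fin d → Quaternion ℝ) : (Fin d → Quaternion ℝ) → ℝ :=
  fun z => (normSq (∑ a, star (v a) * z a)) ^ t

lemma kswap {d : ℕ} (v z : Fin d → Quaternion ℝ) :
    normSq (∑ a, star (v a) * z a) = normSq (∑ a, star (z a) * v a) := by
  have h : (∑ a, star (z a) * v a) = star (∑ a, star (v a) * z a) := by
    rw [star_sum]
    exact Finset.sum_congr rfl fun a _ => by rw [star_mul, star_star]
  rw [h, normSq_star]

lemma kk_symm {d : ℕ} (t : ℕ) (u v : Fin d → Quaternion ℝ) : kk d t u v = kk d t v u := by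
  unfold kk
  rw [kswap]

def comp4 : Fin 4 → Quaternion ℝ → ℝ
  | 0, q => q.re
  | 1, q => q.imI
  | 2, q => q.imJ
  | 3, q => q.imK

@[simp] lemma comp4_0 (q : Quaternion ℝ) : comp4 0 q = q.re := rfl
@[simp] lemma comp4_1 (q : Quaternion ℝ) : comp4 1 q = q.imI := rfl
@[simp] lemma comp4_2 (q : Quaternion ℝ) : comp4 2 q = q.imJ := rfl
@[simp] lemma comp4_3 (q : Quaternion ℝ) : comp4 3 q = q.imK := rfl

lemma pt (A B C D : Quaternion ℝ) :
    ((star A * C) * (star D * B)).re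
      = ∑ i : Fin 4, comp4 i (A * star B) * comp4 i (C * star D) := by
  rw [Fin.sum_univ_four]
  simp only [comp4_0, comp4_1, comp4_2, comp4_3, Quaternion.re_mul, Quaternion.imI_mul,
    Quaternion.imJ_mul, Quaternion.imK_mul, Quaternion.re_star, Quaternion.imI_star,
    Quaternion.imJ_star, Quaternion.imK_star]
  ring

lemma re_sum {α : Type*} (s : Finset α) (f : α → Quaternion ℝ) :
    (∑ x ∈ s, f x).re = ∑ x ∈ s, (f x).re :=
  map_sum (⟨⟨QuaternionAlgebra.re, rfl⟩, fun _ _ => rfl⟩ : Quaternion ℝ →+ ℝ) f s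

def Ff (d : ℕ) (u : Fin d → Quaternion ℝ) : Fin d × Fin d × Fin 4 → ℝ :=
  fun p => comp4 p.2.2 (u p.1 * star (u p.2.1))

lemma step1 {d : ℕ} (u v : Fin d → Quaternion ℝ) :
    normSq (∑ a, star (u a) * v a) = ∑ p : Fin d × Fin d × Fin 4, Ff d u p * Ff d v p := by
  rw [normSq_def]
  have hstar : star (∑ a, star (u a) * v a) = ∑ b, star (v b) * u b := by
    rw [star_sum]
    exact Finset.sum_congr rfl fun b _ => by rw [star_mul, star_star]
  rw [hstar, Finset.sum_mul_sum, re_sum, Fintype.sum_prod_type]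
  refine Finset.sum_congr rfl fun a _ => ?_
  rw [re_sum, Fintype.sum_prod_type]
  exact Finset.sum_congr rfl fun b _ => pt (u a) (u b) (v a) (v b)

def Gf (d t : ℕ) (u : Fin d → Quaternion ℝ) : (Fin t → Fin d × Fin d × Fin 4) → ℝ :=
  fun g => ∏ s, Ff d u (g s)

lemma step2 {d : ℕ} (t : ℕ) (u v : Fin d → Quaternion ℝ) :
    kk d t u v = ∑ g : Fin t → Fin d × Fin d × Fin 4, Gf d t u g * Gf d t v g := by
  unfold kk Gf
  rw [step1, Fintype.sum_pow]
  exact Finset.sum_congr rfl fun g _ => Finset.prod_mul_distrib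

lemma swap_fin {d : ℕ} (t : ℕ) (s s' : Finset (Fin d → Quaternion ℝ))
    (cf cf' : (Fin d → Quaternion ℝ) → ℝ) :
    (∑ v ∈ s, cf v * ∑ u ∈ s', cf' u * kk d t u v)
      = ∑ v ∈ s', cf' v * ∑ u ∈ s, cf u * kk d t u v := by
  simp only [Finset.mul_sum]
  rw [Finset.sum_comm]
  exact Finset.sum_congr rfl fun u _ => Finset.sum_congr rfl fun v _ => by
    rw [kk_symm]; ring

lemma psd_fin {d : ℕ} (t : ℕ) (s : Finset (Fin d → Quaternion ℝ))
    (cf : (Fin d → Quaternion ℝ) → ℝ) :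
    0 ≤ ∑ w ∈ s, cf w * ∑ u ∈ s, cf u * kk d t u w := by
  have key : (∑ w ∈ s, cf w * ∑ u ∈ s, cf u * kk d t u w)
      = ∑ g : Fin t → Fin d × Fin d × Fin 4, (∑ u ∈ s, cf u * Gf d t u g) ^ 2 := by
    calc (∑ w ∈ s, cf w * ∑ u ∈ s, cf u * kk d t u w)
        = ∑ w ∈ s, ∑ u ∈ s, ∑ g : Fin t → Fin d × Fin d × Fin 4,
            (cf u * Gf d t u g) * (cf w * Gf d t w g) := by
          refine Finset.sum_congr rfl fun w _ => ?_
          rw [Finset.mul_sum]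
          refine Finset.sum_congr rfl fun u _ => ?_
          rw [step2, Finset.mul_sum, Finset.mul_sum]
          exact Finset.sum_congr rfl fun g _ => by ring
      _ = ∑ g : Fin t → Fin d × Fin d × Fin 4,
            ∑ w ∈ s, ∑ u ∈ s, (cf u * Gf d t u g) * (cf w * Gf d t w g) := by
          rw [show (∑ w ∈ s, ∑ u ∈ s, ∑ g : Fin t → Fin d × Fin d × Fin 4,
              (cf u * Gf d t u g) * (cf w * Gf d t w g))
              = ∑ w ∈ s, ∑ g : Fin t → Fin d × Fin d × Fin 4,
              ∑ u ∈ s, (cf u * Gf d t u g) * (cf w * Gf d t w g) from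
            Finset.sum_congr rfl fun w _ => Finset.sum_comm]
          exact Finset.sum_comm
      _ = ∑ g : Fin t → Fin d × Fin d × Fin 4, (∑ u ∈ s, cf u * Gf d t u g) ^ 2 := by
          refine Finset.sum_congr rfl fun g _ => ?_
          rw [sq, Finset.sum_mul_sum]
          exact Finset.sum_comm
  rw [key]
  exact Finset.sum_nonneg fun g _ => sq_nonneg _

lemma eval_c {d : ℕ} (t : ℕ) (c : (Fin d → Quaternion ℝ) →₀ ℝ) (w : Fin d → Quaternion ℝ) :
    (c.sum fun u a => a • kk d t u) w = ∑ u ∈ c.support, c u * kk d t u w := by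
  rw [Finsupp.sum, Finset.sum_apply]
  exact Finset.sum_congr rfl fun u _ => rfl

end

end Statement18Aux

open Statement18Aux in
theorem statement18' (d t : ℕ) :
    ∃! B : ↥(Submodule.span ℝ
          {f : (Fin d → Quaternion ℝ) → ℝ |
            ∃ v : Fin d → Quaternion ℝ, f = fun z => (normSq (∑ a, star (v a) * z a)) ^ t}) →
        ↥(Submodule.span ℝ
          {f : (Fin d → Quaternion ℝ) → ℝ |
            ∃ v : Fin d → Quaternion ℝ, f = fun z => (normSq (∑ a, star (v a) * z a)) ^ t}) → ℝ,
      (∀ f g, B f g = B g f)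
      ∧ (∀ f g h, B (f + g) h = B f h + B g h)
      ∧ (∀ (c : ℝ) f g, B (c • f) g = c * B f g)
      ∧ (∀ f, f ≠ 0 → 0 < B f f)
      ∧ (∀ (w : Fin d → Quaternion ℝ)
          (hw : (fun z : Fin d → Quaternion ℝ => (normSq (∑ a, star (z a) * w a)) ^ t) ∈
            Submodule.span ℝ
              {f : (Fin d → Quaternion ℝ) → ℝ |
                ∃ v : Fin d → Quaternion ℝ, f = fun z => (normSq (∑ a, star (v a) * z a)) ^ t})
          (f : ↥(Submodule.span ℝ
            {f : (Fin d → Quaternion ℝ) → ℝ |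
              ∃ v : Fin d → Quaternion ℝ, f = fun z => (normSq (∑ a, star (v a) * z a)) ^ t})),
          B ⟨_, hw⟩ f = (f : (Fin d → Quaternion ℝ) → ℝ) w) := by
  classical
  set S : Set ((Fin d → Quaternion ℝ) → ℝ) :=
    {f | ∃ v : Fin d → Quaternion ℝ, f = fun z => (normSq (∑ a, star (v a) * z a)) ^ t} with hS
  have hrange : S = Set.range (kk d t) := by
    ext f
    constructor
    · rintro ⟨v, rfl⟩; exact ⟨v, rfl⟩
    · rintro ⟨v, rfl⟩; exact ⟨v, rfl⟩
  have hmem : ∀ v : Fin d → Quaternion ℝ, kk d t v ∈ Submodule.span ℝ S :=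
    fun v => Submodule.subset_span (hrange ▸ Set.mem_range_self v)
  have hex : ∀ g : ↥(Submodule.span ℝ S), ∃ c : (Fin d → Quaternion ℝ) →₀ ℝ,
      (c.sum fun v a => a • kk d t v) = (g : (Fin d → Quaternion ℝ) → ℝ) := by
    intro g
    have hg : (g : (Fin d → Quaternion ℝ) → ℝ) ∈ Submodule.span ℝ (Set.range (kk d t)) := by
      rw [← hrange]; exact g.2
    rw [Finsupp.mem_span_range_iff_exists_finsupp] at hg
    exact hg
  choose pre hpre using hex
  set B : ↥(Submodule.span ℝ S) → ↥(Submodule.span ℝ S) → ℝ :=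
    fun f g => ∑ v ∈ (pre g).support, pre g v * (f : (Fin d → Quaternion ℝ) → ℝ) v with hBdef
  have hBval : ∀ f g, B f g = ∑ v ∈ (pre g).support, pre g v *
      ∑ u ∈ (pre f).support, pre f u * kk d t u v := by
    intro f g
    rw [hBdef]
    refine Finset.sum_congr rfl fun v _ => ?_
    rw [← hpre f, eval_c]
  have hsymm : ∀ f g, B f g = B g f := by
    intro f g
    rw [hBval f g, hBval g f, swap_fin]
  have hadd : ∀ f g h, B (f + g) h = B f h + B g h := by
    intro f g h
    simp only [hBdef, Submodule.coe_add, Pi.add_apply, mul_add]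
    exact Finset.sum_add_distrib
  have hsmul : ∀ (a : ℝ) f g, B (a • f) g = a * B f g := by
    intro a f g
    simp only [hBdef, SetLike.val_smul, Pi.smul_apply, smul_eq_mul, Finset.mul_sum]
    exact Finset.sum_congr rfl fun v _ => by ring
  have hrepro : ∀ (w : Fin d → Quaternion ℝ)
      (hw : (fun z : Fin d → Quaternion ℝ => (normSq (∑ a, star (z a) * w a)) ^ t) ∈
        Submodule.span ℝ S) (f : ↥(Submodule.span ℝ S)),
      B ⟨_, hw⟩ f = (f : (Fin d → Quaternion ℝ) → ℝ) w := by
    intro w hw f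
    conv_rhs => rw [← hpre f]
    rw [eval_c, hBdef]
    rfl
  have hnn : ∀ f, 0 ≤ B f f := by
    intro f
    rw [hBval f f]
    exact psd_fin t _ _
  have hB0 : ∀ g, B 0 g = 0 := by
    intro g
    simp [hBdef]
  have hzero : ∀ f, B f f = 0 → f = 0 := by
    intro f hf0
    have hw0 : ∀ w : Fin d → Quaternion ℝ, (f : (Fin d → Quaternion ℝ) → ℝ) w = 0 := by
      intro w
      have hfun : (fun z : Fin d → Quaternion ℝ => (normSq (∑ a, star (z a) * w a)) ^ t)
          = kk d t w := by
        funext z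
        unfold kk
        rw [kswap]
      have hwmem : (fun z : Fin d → Quaternion ℝ => (normSq (∑ a, star (z a) * w a)) ^ t) ∈
          Submodule.span ℝ S := by
        rw [hfun]; exact hmem w
      set Kw : ↥(Submodule.span ℝ S) := ⟨_, hwmem⟩ with hKw
      have h1 : B Kw f = (f : (Fin d → Quaternion ℝ) → ℝ) w := hrepro w hwmem f
      have h1' : B f Kw = (f : (Fin d → Quaternion ℝ) → ℝ) w := by rw [hsymm]; exact h1
      set C : ℝ := B Kw Kw with hC
      have hCnn : 0 ≤ C := hnn Kw
      set F : ℝ := (f : (Fin d → Quaternion ℝ) → ℝ) w with hF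
      set y : ℝ := F / (C + 1) with hy
      have hC1 : (0:ℝ) < C + 1 := by linarith
      have hFy : F = y * (C + 1) := by
        rw [hy]; field_simp
      set x : ℝ := -y with hx
      have hexp : B (f + x • Kw) (f + x • Kw) = B f f + x * F + x * (F + x * C) := by
        rw [hadd f (x • Kw) (f + x • Kw), hsmul x Kw (f + x • Kw),
          hsymm f (f + x • Kw), hadd f (x • Kw) f, hsmul x Kw f,
          hsymm Kw (f + x • Kw), hadd f (x • Kw) Kw, hsmul x Kw Kw,
          h1, h1', ← hC]
      have hkey : 0 ≤ 2 * x * F + x * (x * C) := by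
        have h := hnn (f + x • Kw)
        rw [hexp, hf0] at h
        linarith
      have hy2 : y ^ 2 ≤ 0 := by
        rw [hx, hFy] at hkey
        nlinarith [mul_nonneg (sq_nonneg y) hCnn]
      have hy0 : y = 0 := by
        have := le_antisymm hy2 (sq_nonneg y)
        exact pow_eq_zero_iff (two_ne_zero) |>.mp this
      rw [hFy, hy0, zero_mul]
    have : (f : (Fin d → Quaternion ℝ) → ℝ) = 0 := funext hw0
    exact Subtype.ext this
  have hpos : ∀ f, f ≠ 0 → 0 < B f f := by
    intro f hf
    rcases lt_or_eq_of_le (hnn f) with h | h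
    · exact h
    · exact absurd (hzero f h.symm) hf
  refine ⟨B, ⟨hsymm, hadd, hsmul, hpos, hrepro⟩, ?_⟩
  rintro B' ⟨hs', ha', hm', hp', hr'⟩
  have hz' : ∀ g, B' 0 g = 0 := by
    intro g
    have := ha' 0 0 g
    rw [add_zero] at this
    linarith
  funext f g
  rcases f with ⟨x, hx⟩
  induction hx using Submodule.span_induction with
  | mem x h =>
    obtain ⟨v, rfl⟩ := h
    have hfun : (fun z : Fin d → Quaternion ℝ => (normSq (∑ a, star (v a) * z a)) ^ t)
        = (fun z : Fin d → Quaternion ℝ => (normSq (∑ a, star (z a) * v a)) ^ t) := by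
      funext z
      rw [kswap]
    have hvmem : (fun z : Fin d → Quaternion ℝ => (normSq (∑ a, star (z a) * v a)) ^ t) ∈
        Submodule.span ℝ S := by
      rw [← hfun]
      exact Submodule.subset_span ⟨v, rfl⟩
    have heq : (⟨(fun z : Fin d → Quaternion ℝ => (normSq (∑ a, star (v a) * z a)) ^ t),
        Submodule.subset_span ⟨v, rfl⟩⟩ : ↥(Submodule.span ℝ S))
        = ⟨_, hvmem⟩ := Subtype.ext hfun
    rw [heq, hr' v hvmem g, hrepro v hvmem g]
  | zero =>
    have h0 : (⟨(0 : (Fin d → Quaternion ℝ) → ℝ), Submodule.zero_mem _⟩ :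
        ↥(Submodule.span ℝ S)) = 0 := rfl
    rw [h0, hz' g, hB0 g]
  | add x y hxm hym ihx ihy =>
    have h0 : (⟨x + y, Submodule.add_mem _ hxm hym⟩ : ↥(Submodule.span ℝ S))
        = ⟨x, hxm⟩ + ⟨y, hym⟩ := rfl
    rw [h0, ha', hadd, ihx, ihy]
  | smul a x hxm ihx =>
    have h0 : (⟨a • x, Submodule.smul_mem _ a hxm⟩ : ↥(Submodule.span ℝ S))
        = a • ⟨x, hxm⟩ := rfl
    rw [h0, hm', hsmul, ihx]

/-- On `Hom_{ℍ^d}(t,t) = span_ℝ { |⟨v,·⟩|^{2t} : v ∈ ℍ^d }` there is a unique symmetric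
positive-definite bilinear form for which `K_w(z) = |⟨z,w⟩|^{2t}` is the reproducing kernel
(the apolar inner product). -/
theorem statement18 (d t : ℕ) (hd : 1 ≤ d) (ht : 1 ≤ t) :
    ∃! B : ↥(Submodule.span ℝ
          {f : (Fin d → Quaternion ℝ) → ℝ |
            ∃ v : Fin d → Quaternion ℝ, f = fun z => (normSq (∑ a, star (v a) * z a)) ^ t}) →
        ↥(Submodule.span ℝ
          {f : (Fin d → Quaternion ℝ) → ℝ |
            ∃ v : Fin d → Quaternion ℝ, f = fun z => (normSq (∑ a, star (v a) * z a)) ^ t}) → ℝ,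
      (∀ f g, B f g = B g f)
      ∧ (∀ f g h, B (f + g) h = B f h + B g h)
      ∧ (∀ (c : ℝ) f g, B (c • f) g = c * B f g)
      ∧ (∀ f, f ≠ 0 → 0 < B f f)
      ∧ (∀ (w : Fin d → Quaternion ℝ)
          (hw : (fun z : Fin d → Quaternion ℝ => (normSq (∑ a, star (z a) * w a)) ^ t) ∈
            Submodule.span ℝ
              {f : (Fin d → Quaternion ℝ) → ℝ |
                ∃ v : Fin d → Quaternion ℝ, f = fun z => (normSq (∑ a, star (v a) * z a)) ^ t})
          (f : ↥(Submodule.span ℝ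
            {f : (Fin d → Quaternion ℝ) → ℝ |
              ∃ v : Fin d → Quaternion ℝ, f = fun z => (normSq (∑ a, star (v a) * z a)) ^ t})),
          B ⟨_, hw⟩ f = (f : (Fin d → Quaternion ℝ) → ℝ) w) :=
  statement18' d t
end

section
/- Let m ∈ {1, 2, 4} and t ≥ 1 be integers. Then summing over all multi-indices α : Fin m → ℕ with ∑_r α_r = t: ∑_{α} ( ∏_{r} (2·α_r)! ) · ( t! / ∏_{r} (α_r)! )² = ∏_{j=1}^{t} 2j·(2j+m−2). (The squared factor is the multinomial coefficient (t choose α)².) -/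
open Finset Finset.Nat Nat

local notation "c" => Nat.centralBinom

lemma swap_sum (n : ℕ) (f : ℕ → ℕ → ℕ) :
    ∑ p ∈ antidiagonal n, f p.1 p.2 = ∑ p ∈ antidiagonal n, f p.2 p.1 := by
  conv_lhs => rw [← Finset.HasAntidiagonal.map_swap_antidiagonal (n := n)]
  rw [Finset.sum_map]
  rfl

lemma const_sum (n : ℕ) (g : ℕ × ℕ → ℕ) :
    ∑ p ∈ antidiagonal n, (p.1 + p.2) * g p = n * ∑ p ∈ antidiagonal n, g p := by
  rw [Finset.mul_sum]
  exact Finset.sum_congr rfl fun p hp => by rw [Finset.HasAntidiagonal.mem_antidiagonal.mp hp]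

lemma convA (n : ℕ) : ∑ p ∈ antidiagonal n, c p.1 * c p.2 = 4 ^ n := by
  induction n with
  | zero => simp [Nat.centralBinom]
  | succ n ih =>
    have h1 : 2 * ∑ p ∈ antidiagonal (n + 1), p.1 * (c p.1 * c p.2)
        = (n + 1) * ∑ p ∈ antidiagonal (n + 1), c p.1 * c p.2 := by
      have hswap := swap_sum (n + 1) (fun a b => a * (c a * c b))
      calc 2 * ∑ p ∈ antidiagonal (n + 1), p.1 * (c p.1 * c p.2)
          = (∑ p ∈ antidiagonal (n + 1), p.1 * (c p.1 * c p.2))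
            + ∑ p ∈ antidiagonal (n + 1), p.2 * (c p.2 * c p.1) := by rw [← hswap]; ring
        _ = ∑ p ∈ antidiagonal (n + 1), (p.1 + p.2) * (c p.1 * c p.2) := by
            rw [← Finset.sum_add_distrib]
            exact Finset.sum_congr rfl fun p _ => by ring
        _ = (n + 1) * ∑ p ∈ antidiagonal (n + 1), c p.1 * c p.2 := const_sum _ _
    have hV : 2 * (∑ p ∈ antidiagonal n, p.1 * (c p.1 * c p.2))
        = n * ∑ p ∈ antidiagonal n, c p.1 * c p.2 := by
      have hswap := swap_sum n (fun a b => a * (c a * c b))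
      calc 2 * ∑ p ∈ antidiagonal n, p.1 * (c p.1 * c p.2)
          = (∑ p ∈ antidiagonal n, p.1 * (c p.1 * c p.2))
            + ∑ p ∈ antidiagonal n, p.2 * (c p.2 * c p.1) := by rw [← hswap]; ring
        _ = ∑ p ∈ antidiagonal n, (p.1 + p.2) * (c p.1 * c p.2) := by
            rw [← Finset.sum_add_distrib]
            exact Finset.sum_congr rfl fun p _ => by ring
        _ = n * ∑ p ∈ antidiagonal n, c p.1 * c p.2 := const_sum _ _
    have h2 : ∑ p ∈ antidiagonal (n + 1), p.1 * (c p.1 * c p.2)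
        = ∑ p ∈ antidiagonal n, (p.1 + 1) * (c (p.1 + 1) * c p.2) := by
      rw [Finset.Nat.antidiagonal_succ, Finset.sum_cons, Finset.sum_map]
      simp
    have h3 : ∀ a b : ℕ, (a + 1) * (c (a + 1) * c b) = 2 * ((2 * a + 1) * (c a * c b)) := by
      intro a b
      have h := Nat.succ_mul_centralBinom_succ a
      calc (a + 1) * (c (a + 1) * c b) = ((a + 1) * c (a + 1)) * c b := by ring
        _ = (2 * (2 * a + 1) * c a) * c b := by rw [h]
        _ = 2 * ((2 * a + 1) * (c a * c b)) := by ring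
    have h4 : 2 * ∑ p ∈ antidiagonal (n + 1), p.1 * (c p.1 * c p.2)
        = 4 * (n + 1) * ∑ p ∈ antidiagonal n, c p.1 * c p.2 := by
      have hU2 : ∑ p ∈ antidiagonal (n + 1), p.1 * (c p.1 * c p.2)
          = 4 * (∑ p ∈ antidiagonal n, p.1 * (c p.1 * c p.2))
            + 2 * ∑ p ∈ antidiagonal n, c p.1 * c p.2 := by
        rw [h2, Finset.mul_sum, Finset.mul_sum, ← Finset.sum_add_distrib]
        refine Finset.sum_congr rfl fun p _ => ?_
        rw [h3 p.1 p.2]; ring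
      calc 2 * ∑ p ∈ antidiagonal (n + 1), p.1 * (c p.1 * c p.2)
          = 4 * (2 * (∑ p ∈ antidiagonal n, p.1 * (c p.1 * c p.2)))
            + 4 * ∑ p ∈ antidiagonal n, c p.1 * c p.2 := by rw [hU2]; ring
        _ = 4 * (n * ∑ p ∈ antidiagonal n, c p.1 * c p.2)
            + 4 * ∑ p ∈ antidiagonal n, c p.1 * c p.2 := by rw [hV]
        _ = 4 * (n + 1) * ∑ p ∈ antidiagonal n, c p.1 * c p.2 := by ring
    have key : (n + 1) * ∑ p ∈ antidiagonal (n + 1), c p.1 * c p.2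
        = (n + 1) * 4 ^ (n + 1) := by
      rw [← h1, h4, ih]; ring
    exact Nat.eq_of_mul_eq_mul_left (Nat.succ_pos n) key

lemma convB (n : ℕ) : ∑ p ∈ antidiagonal n, c p.1 * 4 ^ p.2 = (2 * n + 1) * c n := by
  induction n with
  | zero => simp [Nat.centralBinom]
  | succ n ih =>
    rw [Finset.Nat.antidiagonal_succ', Finset.sum_cons, Finset.sum_map]
    have step : (∑ x ∈ antidiagonal n,
        c (((Function.Embedding.refl ℕ).prodMap
          ⟨Nat.succ, Nat.succ_injective⟩) x).1 *
        4 ^ (((Function.Embedding.refl ℕ).prodMap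
          ⟨Nat.succ, Nat.succ_injective⟩) x).2)
        = 4 * ((2 * n + 1) * c n) := by
      rw [← ih, Finset.mul_sum]
      refine Finset.sum_congr rfl fun p _ => ?_
      show c p.1 * 4 ^ (p.2 + 1) = 4 * (c p.1 * 4 ^ p.2)
      ring
    rw [step]
    norm_num
    have h := Nat.succ_mul_centralBinom_succ n
    have key : 2 * ((2 * (n + 1) + 1) * c (n + 1))
        = 2 * (c (n + 1) * 4 ^ 0 + 4 * ((2 * n + 1) * c n)) := by
      calc 2 * ((2 * (n + 1) + 1) * c (n + 1))
          = 2 * c (n + 1) + 4 * ((n + 1) * c (n + 1)) := by ring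
        _ = 2 * c (n + 1) + 4 * (2 * (2 * n + 1) * c n) := by rw [h]
        _ = 2 * (c (n + 1) * 4 ^ 0 + 4 * ((2 * n + 1) * c n)) := by ring
    omega

lemma convC (n : ℕ) :
    ∑ p ∈ antidiagonal n, c p.1 * ((2 * p.2 + 1) * c p.2) = (n + 1) * 4 ^ n := by
  have hswap := swap_sum n (fun a b => c a * ((2 * b + 1) * c b))
  have h2 : 2 * ∑ p ∈ antidiagonal n, c p.1 * ((2 * p.2 + 1) * c p.2)
      = 2 * ((n + 1) * 4 ^ n) := by
    calc 2 * ∑ p ∈ antidiagonal n, c p.1 * ((2 * p.2 + 1) * c p.2)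
        = (∑ p ∈ antidiagonal n, c p.1 * ((2 * p.2 + 1) * c p.2))
          + ∑ p ∈ antidiagonal n, c p.2 * ((2 * p.1 + 1) * c p.1) := by rw [← hswap]; ring
      _ = (∑ p ∈ antidiagonal n, (p.1 + p.2) * (2 * (c p.1 * c p.2)))
          + ∑ p ∈ antidiagonal n, 2 * (c p.1 * c p.2) := by
          rw [← Finset.sum_add_distrib, ← Finset.sum_add_distrib]
          exact Finset.sum_congr rfl fun p _ => by ring
      _ = n * ∑ p ∈ antidiagonal n, 2 * (c p.1 * c p.2)
          + ∑ p ∈ antidiagonal n, 2 * (c p.1 * c p.2) := by rw [const_sum]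
      _ = (n + 1) * (2 * ∑ p ∈ antidiagonal n, c p.1 * c p.2) := by
          rw [← Finset.mul_sum]; ring
      _ = 2 * ((n + 1) * 4 ^ n) := by rw [convA]; ring
  omega

lemma tuple_succ_sum (k n : ℕ) (g : (Fin (k + 1) → ℕ) → ℕ) :
    ∑ x ∈ antidiagonalTuple (k + 1) n, g x
      = ∑ p ∈ antidiagonal n, ∑ y ∈ antidiagonalTuple k p.2, g (Fin.cons p.1 y) := by
  rw [← Finset.sum_sigma (antidiagonal n) (fun p => antidiagonalTuple k p.2)
    (fun q => g (Fin.cons q.1.1 q.2))]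
  refine (Finset.sum_bij'
      (fun x _ => (⟨(x 0, ∑ i, Fin.tail x i), Fin.tail x⟩ : Σ _ : ℕ × ℕ, Fin k → ℕ))
      (fun q _ => Fin.cons q.1.1 q.2)
      ?_ ?_ ?_ ?_ ?_)
  · intro x hx
    rw [Finset.mem_sigma]
    refine ⟨Finset.HasAntidiagonal.mem_antidiagonal.mpr ?_, Finset.Nat.mem_antidiagonalTuple.mpr rfl⟩
    have := Finset.Nat.mem_antidiagonalTuple.mp hx
    rw [Fin.sum_univ_succ] at this
    exact this
  · intro q hq
    rw [Finset.mem_sigma] at hq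
    refine Finset.Nat.mem_antidiagonalTuple.mpr ?_
    rw [Fin.sum_univ_succ]
    simp only [Fin.cons_zero, Fin.cons_succ]
    rw [show (∑ i : Fin k, q.2 i) = q.1.2 from Finset.Nat.mem_antidiagonalTuple.mp hq.2]
    exact Finset.HasAntidiagonal.mem_antidiagonal.mp hq.1
  · intro x hx
    exact Fin.cons_self_tail x
  · intro q hq
    rw [Finset.mem_sigma] at hq
    have h2 := Finset.Nat.mem_antidiagonalTuple.mp hq.2
    refine Sigma.ext ?_ ?_
    · simp [Fin.tail_cons, h2]
    · simp [Fin.tail_cons]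
  · intro x hx
    exact (congrArg g (Fin.cons_self_tail x)).symm

def H (m n : ℕ) : ℕ := ∑ x ∈ antidiagonalTuple m n, ∏ r, c (x r)

lemma H_succ (k n : ℕ) : H (k + 1) n = ∑ p ∈ antidiagonal n, c p.1 * H k p.2 := by
  rw [H, tuple_succ_sum k n (fun x => ∏ r, c (x r))]
  refine Finset.sum_congr rfl fun p _ => ?_
  rw [H, Finset.mul_sum]
  refine Finset.sum_congr rfl fun y _ => ?_
  rw [Fin.prod_univ_succ]
  simp [Fin.cons_zero, Fin.cons_succ]

lemma H_one (n : ℕ) : H 1 n = c n := by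
  rw [H, antidiagonalTuple_one, Finset.sum_singleton, Fin.prod_univ_one]
  rfl

lemma H_two (n : ℕ) : H 2 n = 4 ^ n := by
  rw [show (2 : ℕ) = 1 + 1 from rfl, H_succ, ← convA]
  exact Finset.sum_congr rfl fun p _ => by rw [H_one]

lemma H_three (n : ℕ) : H 3 n = (2 * n + 1) * c n := by
  rw [show (3 : ℕ) = 2 + 1 from rfl, H_succ, ← convB]
  exact Finset.sum_congr rfl fun p _ => by rw [H_two]

lemma H_four (n : ℕ) : H 4 n = (n + 1) * 4 ^ n := by
  rw [show (4 : ℕ) = 3 + 1 from rfl, H_succ, ← convC]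
  exact Finset.sum_congr rfl fun p _ => by rw [H_three]

lemma R1 (t : ℕ) : ∏ j ∈ Finset.range t, 2 * (j + 1) * (2 * j + 1) = (2 * t)! := by
  induction t with
  | zero => rfl
  | succ t ih =>
    rw [Finset.prod_range_succ, ih, show 2 * (t + 1) = 2 * t + 1 + 1 by ring,
      Nat.factorial_succ, Nat.factorial_succ]
    ring

lemma R2 (t : ℕ) : ∏ j ∈ Finset.range t, 2 * (j + 1) * (2 * j + 2) = 4 ^ t * ((t)! * (t)!) := by
  induction t with
  | zero => rfl
  | succ t ih =>
    rw [Finset.prod_range_succ, ih, Nat.factorial_succ]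
    ring

lemma R4 (t : ℕ) :
    ∏ j ∈ Finset.range t, 2 * (j + 1) * (2 * j + 4) = (t + 1) * 4 ^ t * ((t)! * (t)!) := by
  induction t with
  | zero => rfl
  | succ t ih =>
    rw [Finset.prod_range_succ, ih, Nat.factorial_succ]
    ring

lemma cb_fact (a : ℕ) : (2 * a)! = c a * ((a)! * (a)!) := by
  have h := Nat.choose_mul_factorial_mul_factorial
    (Nat.le_mul_of_pos_left a (by norm_num) : a ≤ 2 * a)
  rw [show 2 * a - a = a by omega] at h
  rw [Nat.centralBinom, ← h]
  ring

lemma term_eq (t : ℕ) (k : ℕ) (α : Fin k → ℕ) (hα : ∑ i, α i = t) :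
    (∏ r, (2 * α r)!) * ((t)! / ∏ r, (α r)!) ^ 2 = (∏ r, c (α r)) * ((t)! * (t)!) := by
  have hdvd : (∏ r, (α r)!) ∣ (t)! := by
    rw [← hα]; exact Nat.prod_factorial_dvd_factorial_sum _ _
  calc (∏ r, (2 * α r)!) * ((t)! / ∏ r, (α r)!) ^ 2
      = ((∏ r, c (α r)) * ((∏ r, (α r)!) * (∏ r, (α r)!))) * ((t)! / ∏ r, (α r)!) ^ 2 := by
        rw [← Finset.prod_mul_distrib, ← Finset.prod_mul_distrib]
        exact congrArg (· * ((t)! / ∏ r, (α r)!) ^ 2)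
          (Finset.prod_congr rfl fun r _ => cb_fact (α r))
    _ = (∏ r, c (α r)) * (((∏ r, (α r)!) * ((t)! / ∏ r, (α r)!)) *
          ((∏ r, (α r)!) * ((t)! / ∏ r, (α r)!))) := by ring
    _ = (∏ r, c (α r)) * ((t)! * (t)!) := by rw [Nat.mul_div_cancel' hdvd]

/-- The combinatorial identity `∑_{|α|=t} (∏_r (2α_r)!) (t!/∏_r α_r!)² = ∏_{j=1}^t 2j(2j+m-2)`
for `m ∈ {1,2,4}`, expressing that `|x_1|^{2t}` has unit apolar norm. -/
theorem statement19 (m t : ℕ) (hm : m = 1 ∨ m = 2 ∨ m = 4) (ht : 1 ≤ t) :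
    ∑ α ∈ Finset.Nat.antidiagonalTuple m t,
        (∏ r, Nat.factorial (2 * α r)) * (Nat.factorial t / ∏ r, Nat.factorial (α r)) ^ 2
      = ∏ j ∈ Finset.range t, 2 * (j + 1) * (2 * j + m) := by
  have lhs_eq : ∑ α ∈ Finset.Nat.antidiagonalTuple m t,
      (∏ r, Nat.factorial (2 * α r)) * (Nat.factorial t / ∏ r, Nat.factorial (α r)) ^ 2
      = H m t * ((t)! * (t)!) := by
    rw [H, Finset.sum_mul]
    exact Finset.sum_congr rfl fun α hα =>
      term_eq t m α (Finset.Nat.mem_antidiagonalTuple.mp hα)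
  rw [lhs_eq]
  rcases hm with h | h | h <;> subst h
  · rw [H_one, R1, cb_fact]
  · rw [H_two, R2]
  · rw [H_four, R4]
end
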